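/- arXiv:1408.3935 — 3 statements merged into one kernel-verified Lean document; each statement's English description precedes it below -/
import Mathlib

section
/- Every edge-maximal K_4-minor-free graph is 2-clique-colorable. -/
open SimpleGraph

/-- `H` is a minor of `G`: there is a family of pairwise disjoint nonempty connected
branch sets in `G`, one for each vertex of `H`, with an edge of `G` between the branch
sets of any two adjacent vertices of `H`. -/
def SimpleGraph.HasMinor {V W : Type*} (G : SimpleGraph V) (H : SimpleGraph W) : Prop :=
  ∃ f : W → Set V,
    (∀ w, (f w).Nonempty) ∧
    (∀ w, (G.induce (f w)).Connected) ∧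
    (∀ w₁ w₂, w₁ ≠ w₂ → Disjoint (f w₁) (f w₂)) ∧
    (∀ w₁ w₂, H.Adj w₁ w₂ → ∃ v₁ ∈ f w₁, ∃ v₂ ∈ f w₂, G.Adj v₁ v₂)

/-- `G` contains no induced subgraph isomorphic to the claw `K_{1,3}`. -/
def SimpleGraph.ClawFree {V : Type*} (G : SimpleGraph V) : Prop :=
  IsEmpty (completeBipartiteGraph (Fin 1) (Fin 3) ↪g G)

/-- `s` is a maximal clique of `G`. -/
def SimpleGraph.IsMaxClique {V : Type*} (G : SimpleGraph V) (s : Set V) : Prop :=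
  G.IsClique s ∧ ∀ t : Set V, G.IsClique t → s ⊆ t → s = t

/-- `c` is a clique-coloring of `G`: no maximal clique with at least two vertices
is monochromatic. -/
def SimpleGraph.IsCliqueColoring {V : Type*} (G : SimpleGraph V) {k : ℕ} (c : V → Fin k) : Prop :=
  ∀ s : Set V, G.IsMaxClique s → s.Nontrivial → ∃ u ∈ s, ∃ v ∈ s, c u ≠ c v

/-- `G` is `k`-clique-colorable. -/
def SimpleGraph.CliqueColorable {V : Type*} (G : SimpleGraph V) (k : ℕ) : Prop :=
  ∃ c : V → Fin k, G.IsCliqueColoring c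

/-- `G` is an odd cycle, i.e. isomorphic to `C_n` for some odd `n ≥ 3`. -/
def SimpleGraph.IsOddCycle {V : Type*} (G : SimpleGraph V) : Prop :=
  ∃ n : ℕ, 3 ≤ n ∧ Odd n ∧ Nonempty (G ≃g cycleGraph n)

/-- `D` meets every (nonempty) maximal clique of `G`. -/
def SimpleGraph.IsCliqueTransversal {V : Type*} (G : SimpleGraph V) (D : Set V) : Prop :=
  ∀ s : Set V, G.IsMaxClique s → s.Nonempty → (D ∩ s).Nonempty

/-- `G` is `H`-minor-free, but adding any edge between two distinct nonadjacent
vertices creates an `H` minor. -/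
def SimpleGraph.EdgeMaximalMinorFree {V W : Type*} (G : SimpleGraph V) (H : SimpleGraph W) : Prop :=
  ¬ G.HasMinor H ∧ ∀ u v : V, u ≠ v → ¬ G.Adj u v →
    (G ⊔ fromEdgeSet {s(u, v)}).HasMinor H


set_option linter.unusedSectionVars false
set_option linter.unusedVariables false

namespace K4Work

variable {V : Type*}

/-- adjacency step inside a vertex set -/
def Rel (G : SimpleGraph V) (s : Set V) (a b : V) : Prop := G.Adj a b ∧ a ∈ s ∧ b ∈ s

/-- reachability inside a vertex set -/
def Rch (G : SimpleGraph V) (s : Set V) (a b : V) : Prop := Relation.ReflTransGen (Rel G s) a b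

/-- connectedness of a (nonempty) vertex set -/
def Conn (G : SimpleGraph V) (s : Set V) : Prop :=
  s.Nonempty ∧ ∀ a ∈ s, ∀ b ∈ s, Rch G s a b

/-- K4-minor supported inside a vertex set -/
def MOn (G : SimpleGraph V) (s : Set V) : Prop :=
  ∃ f : Fin 4 → Set V, (∀ i, f i ⊆ s) ∧ (∀ i, Conn G (f i)) ∧
    (∀ i j, i ≠ j → Disjoint (f i) (f j)) ∧
    (∀ i j, i ≠ j → ∃ a ∈ f i, ∃ b ∈ f j, G.Adj a b)

lemma Rel.symm' {G : SimpleGraph V} {s : Set V} {a b : V} (h : Rel G s a b) : Rel G s b a :=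
  ⟨h.1.symm, h.2.2, h.2.1⟩

lemma rel_symm (G : SimpleGraph V) (s : Set V) : Symmetric (Rel G s) := fun _ _ h => h.symm'

lemma Rch.symm {G : SimpleGraph V} {s : Set V} {a b : V} (h : Rch G s a b) : Rch G s b a :=
  have : Std.Symm (Rel G s) := ⟨fun a b h => rel_symm G s h⟩
  Relation.ReflTransGen.symmetric.symm _ _ h

lemma Rch.trans' {G : SimpleGraph V} {s : Set V} {a b c : V} (h : Rch G s a b)
    (h' : Rch G s b c) : Rch G s a c := Relation.ReflTransGen.trans h h'

lemma rch_mono_set {G : SimpleGraph V} {s t : Set V} (hst : s ⊆ t) {a b : V}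
    (h : Rch G s a b) : Rch G t a b := by
  induction h with
  | refl => exact Relation.ReflTransGen.refl
  | tail _ hstep ih => exact ih.tail ⟨hstep.1, hst hstep.2.1, hst hstep.2.2⟩

lemma rch_mono_graph {G G' : SimpleGraph V} (hG : G ≤ G') {s : Set V} {a b : V}
    (h : Rch G s a b) : Rch G' s a b := by
  induction h with
  | refl => exact Relation.ReflTransGen.refl
  | tail _ hstep ih => exact ih.tail ⟨hG hstep.1, hstep.2.1, hstep.2.2⟩

lemma rch_single {G : SimpleGraph V} {s : Set V} {a b : V} (hab : G.Adj a b)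
    (ha : a ∈ s) (hb : b ∈ s) : Rch G s a b :=
  Relation.ReflTransGen.single ⟨hab, ha, hb⟩

lemma conn_mono_graph {G G' : SimpleGraph V} (hG : G ≤ G') {s : Set V} (h : Conn G s) :
    Conn G' s := ⟨h.1, fun a ha b hb => rch_mono_graph hG (h.2 a ha b hb)⟩

lemma conn_singleton (G : SimpleGraph V) (a : V) : Conn G {a} := by
  refine ⟨⟨a, rfl⟩, ?_⟩
  rintro x rfl y rfl
  exact Relation.ReflTransGen.refl

/-- union of two connected sets linked by an edge is connected -/
lemma conn_union {G : SimpleGraph V} {A B : Set V} (hA : Conn G A) (hB : Conn G B)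
    {x y : V} (hx : x ∈ A) (hy : y ∈ B) (hxy : G.Adj x y) : Conn G (A ∪ B) := by
  refine ⟨⟨x, Or.inl hx⟩, ?_⟩
  have hAu : ∀ a ∈ A, Rch G (A ∪ B) a x := fun a ha =>
    rch_mono_set Set.subset_union_left (hA.2 a ha x hx)
  have hBu : ∀ b ∈ B, Rch G (A ∪ B) y b := fun b hb =>
    rch_mono_set Set.subset_union_right (hB.2 y hy b hb)
  have hcross : Rch G (A ∪ B) x y := rch_single hxy (Or.inl hx) (Or.inr hy)
  rintro a (ha | ha) b (hb | hb)
  · exact rch_mono_set Set.subset_union_left (hA.2 a ha b hb)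
  · exact ((hAu a ha).trans' hcross).trans' (hBu b hb)
  · exact (((hAu b hb).trans' hcross).trans' (hBu a ha)).symm
  · exact rch_mono_set Set.subset_union_right (hB.2 a ha b hb)

/-- If a chain leaves a set, there is an exit step. -/
lemma exit_step {G : SimpleGraph V} {s A : Set V} {a b : V} (h : Rch G s a b)
    (ha : a ∈ A) (hb : b ∉ A) : ∃ p q, p ∈ A ∧ q ∉ A ∧ Rel G s p q := by
  induction h with
  | refl => exact absurd ha hb
  | @tail c d hac hstep ih =>
    by_cases hc : c ∈ A
    · exact ⟨c, d, hc, hb, hstep⟩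
    · exact ih hc

/-- chains starting in a (Rel-closed) set stay there, and restrict. -/
lemma rch_closed {G : SimpleGraph V} {s C : Set V}
    (hcl : ∀ p q, Rel G s p q → p ∈ C → q ∈ C) {a b : V} (h : Rch G s a b) (ha : a ∈ C) :
    b ∈ C ∧ Rch G (s ∩ C) a b := by
  induction h with
  | refl => exact ⟨ha, Relation.ReflTransGen.refl⟩
  | @tail c d hac hstep ih =>
    have hc := ih
    exact ⟨hcl _ _ hstep hc.1, hc.2.tail ⟨hstep.1, ⟨hstep.2.1, hc.1⟩, ⟨hstep.2.2, hcl _ _ hstep hc.1⟩⟩⟩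

/-- the component of `a` inside `s` -/
def comp (G : SimpleGraph V) (s : Set V) (a : V) : Set V := {b ∈ s | Rch G s a b}

lemma comp_subset {G : SimpleGraph V} {s : Set V} {a : V} : comp G s a ⊆ s := fun _ h => h.1

lemma mem_comp_self {G : SimpleGraph V} {s : Set V} {a : V} (ha : a ∈ s) : a ∈ comp G s a :=
  ⟨ha, Relation.ReflTransGen.refl⟩

lemma comp_closed {G : SimpleGraph V} {s : Set V} {a : V} :
    ∀ p q, Rel G s p q → p ∈ comp G s a → q ∈ comp G s a := by
  intro p q hpq hp
  exact ⟨hpq.2.2, hp.2.tail hpq⟩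

lemma comp_conn {G : SimpleGraph V} {s : Set V} {a : V} (ha : a ∈ s) :
    Conn G (comp G s a) := by
  refine ⟨⟨a, mem_comp_self ha⟩, ?_⟩
  intro b hb c hc
  have h1 : Rch G s b c := (hb.2.symm).trans' hc.2
  have := rch_closed (comp_closed (a := a)) h1 hb
  exact rch_mono_set Set.inter_subset_right this.2

lemma comp_no_edge_out {G : SimpleGraph V} {s : Set V} {a : V} {p q : V}
    (hp : p ∈ comp G s a) (hq : q ∈ s) (hq' : q ∉ comp G s a) : ¬ G.Adj p q := by
  intro hadj
  exact hq' (comp_closed p q ⟨hadj, hp.1, hq⟩ hp)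

/-- a nontrivial split of a set with no edges across destroys connectivity -/
lemma split_not_conn {G : SimpleGraph V} {s A : Set V} (hA : A ⊆ s)
    (hne : A.Nonempty) (hne' : (s \ A).Nonempty)
    (hcl : ∀ p q, Rel G s p q → p ∈ A → q ∈ A) : ¬ Conn G s := by
  rintro ⟨-, hconn⟩
  obtain ⟨x, hx⟩ := hne
  obtain ⟨y, hy⟩ := hne'
  have := (rch_closed hcl (hconn x (hA hx) y hy.1) hx).1
  exact hy.2 this

lemma not_conn_split {G : SimpleGraph V} {s : Set V} (hne : s.Nonempty) (h : ¬ Conn G s) :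
    ∃ a ∈ s, ∃ b ∈ s, b ∉ comp G s a := by
  by_contra hc
  push_neg at hc
  apply h
  refine ⟨hne, fun a ha b hb => ?_⟩
  exact ((hc a ha a ha).2.symm).trans' (hc a ha b hb).2


/-- the one-edge extension -/
def pl (G : SimpleGraph V) (u v : V) : SimpleGraph V := G ⊔ fromEdgeSet {s(u, v)}

lemma pl_adj {G : SimpleGraph V} {u v a b : V} (huv : u ≠ v) :
    (pl G u v).Adj a b ↔ G.Adj a b ∨ ((a = u ∧ b = v) ∨ (a = v ∧ b = u)) := by
  unfold pl
  rw [sup_adj, fromEdgeSet_adj]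
  constructor
  · rintro (h | ⟨h, hne⟩)
    · exact Or.inl h
    · rw [Set.mem_singleton_iff, Sym2.eq_iff] at h
      exact Or.inr h
  · rintro (h | (⟨rfl, rfl⟩ | ⟨rfl, rfl⟩))
    · exact Or.inl h
    · exact Or.inr ⟨by rw [Set.mem_singleton_iff], huv⟩
    · exact Or.inr ⟨by rw [Set.mem_singleton_iff, Sym2.eq_iff]; right; exact ⟨rfl, rfl⟩, huv.symm⟩

lemma le_pl {G : SimpleGraph V} {u v : V} : G ≤ pl G u v := le_sup_left

lemma mon_mono_set {G : SimpleGraph V} {s t : Set V} (hst : s ⊆ t) (h : MOn G s) : MOn G t := by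
  obtain ⟨f, h1, h2, h3, h4⟩ := h
  exact ⟨f, fun i => (h1 i).trans hst, h2, h3, h4⟩

lemma mon_mono_graph {G G' : SimpleGraph V} (hG : G ≤ G') {s : Set V} (h : MOn G s) : MOn G' s := by
  obtain ⟨f, h1, h2, h3, h4⟩ := h
  exact ⟨f, h1, fun i => conn_mono_graph hG (h2 i), h3,
    fun i j hij => by obtain ⟨a, ha, b, hb, hab⟩ := h4 i j hij; exact ⟨a, ha, b, hb, hG hab⟩⟩

/-- removing an unusable extra edge -/
lemma rch_pl_unused {G : SimpleGraph V} {u v : V} {F : Set V} (h : u ∉ F ∨ v ∉ F)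
    (huv : u ≠ v) {a b : V} (hr : Rch (pl G u v) F a b) : Rch G F a b := by
  induction hr with
  | refl => exact Relation.ReflTransGen.refl
  | @tail c d hac hstep ih =>
    refine ih.tail ⟨?_, hstep.2.1, hstep.2.2⟩
    rcases (pl_adj huv).1 hstep.1 with hG | (⟨rfl, rfl⟩ | ⟨rfl, rfl⟩)
    · exact hG
    · rcases h with h | h
      · exact absurd hstep.2.1 h
      · exact absurd hstep.2.2 h
    · rcases h with h | h
      · exact absurd hstep.2.2 h
      · exact absurd hstep.2.1 h

lemma conn_pl_unused {G : SimpleGraph V} {u v : V} {F : Set V} (h : u ∉ F ∨ v ∉ F)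
    (huv : u ≠ v) (hc : Conn (pl G u v) F) : Conn G F :=
  ⟨hc.1, fun a ha b hb => rch_pl_unused h huv (hc.2 a ha b hb)⟩

lemma mon_pl_unused {G : SimpleGraph V} {u v : V} {s : Set V} (huv : u ≠ v)
    (h : u ∉ s ∨ v ∉ s) (hm : MOn (pl G u v) s) : MOn G s := by
  obtain ⟨f, h1, h2, h3, h4⟩ := hm
  refine ⟨f, h1, fun i => conn_pl_unused ?_ huv (h2 i), h3, fun i j hij => ?_⟩
  · rcases h with h | h
    · exact Or.inl (fun hu => h (h1 i hu))
    · exact Or.inr (fun hv => h (h1 i hv))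
  · obtain ⟨a, ha, b, hb, hab⟩ := h4 i j hij
    rcases (pl_adj huv).1 hab with hG | (⟨rfl, rfl⟩ | ⟨rfl, rfl⟩)
    · exact ⟨a, ha, b, hb, hG⟩
    · rcases h with h | h
      · exact absurd (h1 i ha) h
      · exact absurd (h1 j hb) h
    · rcases h with h | h
      · exact absurd (h1 j hb) h
      · exact absurd (h1 i ha) h

/-- replace uses of the extra edge by a given G-chain from u to v -/
lemma rch_pl_replace {G : SimpleGraph V} {u v : V} (huv : u ≠ v) {F R : Set V}
    (hR : Rch G R u v) {a b : V} (h : Rch (pl G u v) F a b) : Rch G (F ∪ R) a b := by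
  induction h with
  | refl => exact Relation.ReflTransGen.refl
  | @tail c d hac hstep ih =>
    rcases (pl_adj huv).1 hstep.1 with hG | (⟨rfl, rfl⟩ | ⟨rfl, rfl⟩)
    · exact ih.tail ⟨hG, Or.inl hstep.2.1, Or.inl hstep.2.2⟩
    · exact Relation.ReflTransGen.trans ih (rch_mono_set Set.subset_union_right hR)
    · exact Relation.ReflTransGen.trans ih (rch_mono_set Set.subset_union_right
        (by have : Std.Symm (Rel G R) := ⟨fun x y (h : Rel G R x y) => ⟨h.1.symm, h.2.2, h.2.1⟩⟩; exact Relation.ReflTransGen.symmetric.symm _ _ hR))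

/-- projection of chains onto a territory `T'`, re-entry only at hubs h1 h2 -/
lemma rch_project {H : SimpleGraph V} {F T' : Set V} {h1 h2 : V}
    (hT1 : h1 ∈ T') (hT2 : h2 ∈ T')
    (hadj : h1 ≠ h2 → H.Adj h1 h2)
    (hcut : ∀ p q, Rel H F p q → p ∈ T' → q ∉ T' → p = h1 ∨ p = h2)
    {a b : V} (h : Rch H F a b) (ha : a ∈ T') (hb : b ∈ T') : Rch H (F ∩ T') a b := by
  suffices key : ∀ b', Rch H F a b' →
      (b' ∈ T' → Rch H (F ∩ T') a b') ∧
      (b' ∉ T' → ∃ e, (e = h1 ∨ e = h2) ∧ e ∈ F ∧ Rch H (F ∩ T') a e) by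
    exact (key b h).1 hb
  intro b' hb'
  induction hb' with
  | refl =>
    exact ⟨fun _ => Relation.ReflTransGen.refl, fun hna => absurd ha hna⟩
  | @tail c d hac hstep ih =>
    constructor
    · intro hd
      by_cases hc : c ∈ T'
      · exact (ih.1 hc).tail ⟨hstep.1, ⟨hstep.2.1, hc⟩, ⟨hstep.2.2, hd⟩⟩
      · obtain ⟨e, he12, heF, her⟩ := ih.2 hc
        -- step d←c is a re-entry; d must be a hub
        have hdh : d = h1 ∨ d = h2 :=
          hcut d c ⟨hstep.1.symm, hstep.2.2, hstep.2.1⟩ hd hc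
        by_cases hed : e = d
        · exact hed ▸ her
        · have hne : h1 ≠ h2 := by
            rintro rfl
            rcases he12 with rfl | rfl <;> rcases hdh with rfl | rfl <;> exact hed rfl
          have hadj' : H.Adj e d := by
            rcases he12 with rfl | rfl <;> rcases hdh with rfl | rfl
            · exact absurd rfl hed
            · exact hadj hne
            · exact (hadj hne).symm
            · exact absurd rfl hed
          have heT : e ∈ T' := by rcases he12 with rfl | rfl; exacts [hT1, hT2]
          exact her.tail ⟨hadj', ⟨heF, heT⟩, ⟨hstep.2.2, hd⟩⟩
    · intro hd
      by_cases hc : c ∈ T'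
      · have := hcut c d hstep hc hd
        exact ⟨c, this, hstep.2.1, ih.1 hc⟩
      · exact ih.2 hc

lemma rch_exists_step {G : SimpleGraph V} {s : Set V} {a b : V} (h : Rch G s a b)
    (hab : a ≠ b) : ∃ p q, Rel G s p q := by
  induction h with
  | refl => exact absurd rfl hab
  | @tail c d h1 h2 ih => exact ⟨c, d, h2⟩

/-- a nonconstant chain inside a 2-element set forces an edge -/
lemma rch_pair_adj {G : SimpleGraph V} {u t : V} (hut : u ≠ t)
    (h : Rch G {u, t} u t) : G.Adj u t := by
  obtain ⟨p, q, hpq⟩ := rch_exists_step h hut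
  have hne : p ≠ q := hpq.1.ne
  rcases hpq.2.1 with rfl | rfl <;> rcases hpq.2.2 with rfl | rfl
  · exact absurd rfl hne
  · exact hpq.1
  · exact hpq.1.symm
  · exact absurd rfl hne


/-- contraction of edge xy into x (y becomes irrelevant) -/
def Ctr (G : SimpleGraph V) (x y : V) : SimpleGraph V where
  Adj a b := a ≠ b ∧ (G.Adj a b ∨ (a = x ∧ G.Adj y b) ∨ (b = x ∧ G.Adj a y))
  symm := by
    constructor
    rintro a b ⟨hne, h⟩
    refine ⟨hne.symm, ?_⟩
    rcases h with h | ⟨rfl, h⟩ | ⟨rfl, h⟩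
    · exact Or.inl h.symm
    · exact Or.inr (Or.inr ⟨rfl, h.symm⟩)
    · exact Or.inr (Or.inl ⟨rfl, h.symm⟩)
  loopless := ⟨fun a h => h.1 rfl⟩

lemma ctr_adj_of_ne {G : SimpleGraph V} {x y a b : V} (ha : a ≠ x) (hb : b ≠ x)
    (h : (Ctr G x y).Adj a b) : G.Adj a b := by
  rcases h.2 with h | ⟨rfl, _⟩ | ⟨rfl, _⟩
  · exact h
  · exact absurd rfl ha
  · exact absurd rfl hb

lemma rch_ctr_pull_nox {G : SimpleGraph V} {x y : V} {F : Set V} (hx : x ∉ F)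
    {a b : V} (h : Rch (Ctr G x y) F a b) : Rch G F a b := by
  induction h with
  | refl => exact Relation.ReflTransGen.refl
  | @tail c d hac hstep ih =>
    refine ih.tail ⟨ctr_adj_of_ne ?_ ?_ hstep.1, hstep.2.1, hstep.2.2⟩
    · intro (hcx : c = x); exact hx (hcx ▸ hstep.2.1)
    · intro (hdx : d = x); exact hx (hdx ▸ hstep.2.2)

lemma rch_ctr_pull {G : SimpleGraph V} {x y : V} (hxy : G.Adj x y) {F : Set V}
    {a b : V} (h : Rch (Ctr G x y) F a b) : Rch G (insert y F) a b := by
  induction h with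
  | refl => exact Relation.ReflTransGen.refl
  | @tail c d hac hstep ih =>
    rcases hstep.1.2 with h | ⟨hcx, h⟩ | ⟨hdx, h⟩
    · exact ih.tail ⟨h, Set.mem_insert_of_mem _ hstep.2.1, Set.mem_insert_of_mem _ hstep.2.2⟩
    · subst hcx
      exact (ih.tail ⟨hxy, Set.mem_insert_of_mem _ hstep.2.1, Set.mem_insert _ _⟩).tail
        ⟨h, Set.mem_insert _ _, Set.mem_insert_of_mem _ hstep.2.2⟩
    · subst hdx
      exact (ih.tail ⟨h, Set.mem_insert_of_mem _ hstep.2.1, Set.mem_insert _ _⟩).tail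
        ⟨hxy.symm, Set.mem_insert _ _, Set.mem_insert_of_mem _ hstep.2.2⟩

lemma mon_ctr_pull {G : SimpleGraph V} {x y : V} (hxy : G.Adj x y) {s : Set V}
    (hys : y ∉ s) (h : MOn (Ctr G x y) s) : MOn G (insert y s) := by
  classical
  obtain ⟨f, h1, h2, h3, h4⟩ := h
  set F := fun i => if x ∈ f i then insert y (f i) else f i with hF
  have hsub : ∀ i, f i ⊆ F i := by
    intro i
    by_cases hxi : x ∈ f i <;> simp only [hF, hxi, if_true, if_false]
    · exact Set.subset_insert _ _
    · exact subset_rfl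
  have hyin : ∀ i, x ∈ f i → y ∈ F i := by
    intro i hxi
    simp only [hF, hxi, if_true]
    exact Set.mem_insert _ _
  have hFsub : ∀ i, F i ⊆ insert y (f i) := by
    intro i
    by_cases hxi : x ∈ f i <;> simp only [hF, hxi, if_true, if_false]
    · exact subset_rfl
    · exact Set.subset_insert _ _
  refine ⟨F, ?_, ?_, ?_, ?_⟩
  · intro i
    exact (hFsub i).trans (Set.insert_subset_insert (h1 i))
  · intro i
    by_cases hxi : x ∈ f i <;> simp only [hF, hxi, if_true, if_false]
    · refine ⟨⟨x, Set.mem_insert_of_mem _ hxi⟩, ?_⟩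
      have hyx : Rch G (insert y (f i)) y x :=
        rch_single hxy.symm (Set.mem_insert _ _) (Set.mem_insert_of_mem _ hxi)
      have key : ∀ a ∈ f i, Rch G (insert y (f i)) a x := fun a ha =>
        rch_ctr_pull hxy ((h2 i).2 a ha x hxi)
      rintro a (rfl | ha) b (rfl | hb)
      · exact Relation.ReflTransGen.refl
      · exact hyx.trans' (key b hb).symm
      · exact (key a ha).trans' hyx.symm
      · exact (key a ha).trans' (key b hb).symm
    · exact ⟨(h2 i).1, fun a ha b hb => rch_ctr_pull_nox hxi ((h2 i).2 a ha b hb)⟩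
  · intro i j hij
    have hbase := h3 i j hij
    have hy : ∀ k, y ∉ f k := fun k hk => hys (h1 k hk)
    by_cases hxi : x ∈ f i <;> by_cases hxj : x ∈ f j <;>
      simp only [hF, hxi, hxj, if_true, if_false]
    · exact ((Set.disjoint_left.1 hbase hxi) hxj).elim
    · rw [Set.disjoint_left]
      rintro a (rfl | ha) haj
      · exact hy j haj
      · exact Set.disjoint_left.1 hbase ha haj
    · rw [Set.disjoint_left]
      rintro a ha (rfl | haj)
      · exact hy i ha
      · exact Set.disjoint_left.1 hbase ha haj
    · exact hbase
  · intro i j hij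
    obtain ⟨a, ha, b, hb, hab⟩ := h4 i j hij
    rcases hab.2 with h | ⟨hax, h⟩ | ⟨hbx, h⟩
    · exact ⟨a, hsub i ha, b, hsub j hb, h⟩
    · exact ⟨y, hyin i (hax ▸ ha), b, hsub j hb, h⟩
    · exact ⟨a, hsub i ha, y, hyin j (hbx ▸ hb), h⟩


/-- edges-maximal K4-minor-free relative to a vertex set -/
def EMF (G : SimpleGraph V) (s : Set V) : Prop :=
  ¬ MOn G s ∧ ∀ u v, u ∈ s → v ∈ s → u ≠ v → ¬ G.Adj u v → MOn (pl G u v) s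

def MaxCliqueOn (G : SimpleGraph V) (s t : Set V) : Prop :=
  t ⊆ s ∧ G.IsClique t ∧ ∀ t' : Set V, t' ⊆ s → G.IsClique t' → t ⊆ t' → t' = t

def GoodOn (G : SimpleGraph V) (s : Set V) (c : V → Fin 2) : Prop :=
  ∀ t : Set V, MaxCliqueOn G s t → t.Nontrivial → ∃ u ∈ t, ∃ w ∈ t, c u ≠ c w

/-- bridge: Conn ↔ induced-subgraph connectivity -/
lemma conn_iff_induce {G : SimpleGraph V} {s : Set V} : Conn G s ↔ (G.induce s).Connected := by
  constructor
  · rintro ⟨⟨a0, ha0⟩, hconn⟩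
    haveI : Nonempty s := ⟨⟨a0, ha0⟩⟩
    refine ⟨?_⟩
    rintro ⟨u, hu⟩ ⟨v, hv⟩
    have key : ∀ b, Rch G s u b → ∀ hb : b ∈ s, (G.induce s).Reachable ⟨u, hu⟩ ⟨b, hb⟩ := by
      intro b h
      induction h with
      | refl => intro _; exact Reachable.refl _
      | @tail c d hac hstep ih =>
        intro hd
        exact (ih hstep.2.1).trans (Adj.reachable (by exact hstep.1))
    exact key v (hconn u hu v hv) hv
  · intro hC
    have hne : s.Nonempty := by
      obtain ⟨⟨a, ha⟩⟩ := hC.nonempty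
      exact ⟨a, ha⟩
    refine ⟨hne, fun a ha b hb => ?_⟩
    have h := (hC.preconnected ⟨a, ha⟩ ⟨b, hb⟩)
    rw [reachable_iff_reflTransGen] at h
    have key : ∀ (x y : s), Relation.ReflTransGen (G.induce s).Adj x y → Rch G s x y := by
      intro x y hxy
      induction hxy with
      | refl => exact Relation.ReflTransGen.refl
      | @tail c d hac hstep ih =>
        exact ih.tail ⟨hstep, c.2, d.2⟩
    exact key _ _ h
  
/-- bridge: MOn on univ ↔ HasMinor K4 -/
lemma mon_univ_iff {G : SimpleGraph V} :
    MOn G Set.univ ↔ G.HasMinor (⊤ : SimpleGraph (Fin 4)) := by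
  constructor
  · rintro ⟨f, h1, h2, h3, h4⟩
    refine ⟨f, fun i => (h2 i).1, fun i => conn_iff_induce.1 (h2 i), h3, fun i j hij => ?_⟩
    exact h4 i j (by simpa using hij)
  · rintro ⟨f, h1, h2, h3, h4⟩
    refine ⟨f, fun i => Set.subset_univ _, fun i => conn_iff_induce.2 (h2 i), h3,
      fun i j hij => h4 i j (by simpa using hij)⟩

/-- a K4-minor needs at least 4 vertices -/
lemma mon_card [Fintype V] {G : SimpleGraph V} {s : Set V} (h : MOn G s) : 4 ≤ s.ncard := by
  classical
  obtain ⟨f, h1, h2, h3, _⟩ := h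
  choose a ha using fun i => (h2 i).1
  have hinj : Function.Injective a := by
    intro i j hij
    by_contra hne
    exact Set.disjoint_left.1 (h3 i j hne) (ha i) (hij ▸ ha j)
  have hsub : Set.range a ⊆ s := by
    rintro x ⟨i, rfl⟩
    exact h1 i (ha i)
  calc (4 : ℕ) = Nat.card (Fin 4) := by simp
    _ = Nat.card (Set.range a) := (Nat.card_range_of_injective hinj).symm
    _ = (Set.range a).ncard := Nat.card_coe_set_eq _
    _ ≤ s.ncard := Set.ncard_le_ncard hsub (Set.toFinite s)

/-- a K4-minor needs at least 6 available edges -/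
lemma mon_six {H : SimpleGraph V} {s : Set V} (hm : MOn H s) (e1 e2 e3 : Sym2 V)
    (hE : ∀ a b, a ∈ s → b ∈ s → H.Adj a b → s(a, b) = e1 ∨ s(a, b) = e2 ∨ s(a, b) = e3) :
    False := by
  classical
  obtain ⟨f, h1, h2, h3, h4⟩ := hm
  set P : Fin 6 → Fin 4 × Fin 4 := ![(0,1),(0,2),(0,3),(1,2),(1,3),(2,3)] with hP
  have hPne : ∀ k, (P k).1 ≠ (P k).2 := by decide
  have hPdis : ∀ k l : Fin 6, k ≠ l →
      ¬(((P k).1 = (P l).1 ∧ (P k).2 = (P l).2) ∨ ((P k).1 = (P l).2 ∧ (P k).2 = (P l).1)) := by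
    decide
  choose wa hwa wb hwb hadj using fun k => h4 (P k).1 (P k).2 (hPne k)
  have hcls : ∀ k : Fin 6, k ∈ Finset.univ →
      s(wa k, wb k) ∈ ({e1, e2, e3} : Finset (Sym2 V)) := by
    intro k _
    simp only [Finset.mem_insert, Finset.mem_singleton]
    exact hE _ _ (h1 _ (hwa k)) (h1 _ (hwb k)) (hadj k)
  have hcard : ({e1, e2, e3} : Finset (Sym2 V)).card < (Finset.univ : Finset (Fin 6)).card := by
    refine lt_of_le_of_lt ?_ (by simp : 3 < (Finset.univ : Finset (Fin 6)).card)
    refine le_trans (Finset.card_insert_le _ _) ?_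
    refine Nat.succ_le_succ (le_trans (Finset.card_insert_le _ _) ?_)
    exact Nat.succ_le_succ (Finset.card_singleton _).le
  obtain ⟨k, -, l, -, hkl, hsame⟩ :=
    Finset.exists_ne_map_eq_of_card_lt_of_maps_to hcard hcls
  rw [Sym2.eq_iff] at hsame
  have mem_unique : ∀ (x : V) (i j : Fin 4), x ∈ f i → x ∈ f j → i = j := by
    intro x i j hi hj
    by_contra hne
    exact Set.disjoint_left.1 (h3 i j hne) hi hj
  rcases hsame with ⟨hx, hy⟩ | ⟨hx, hy⟩
  · exact hPdis k l hkl (Or.inl ⟨mem_unique _ _ _ (hwa k) (hx ▸ hwa l),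
      mem_unique _ _ _ (hwb k) (hy ▸ hwb l)⟩)
  · exact hPdis k l hkl (Or.inr ⟨mem_unique _ _ _ (hwa k) (hx ▸ hwb l),
      mem_unique _ _ _ (hwb k) (hy ▸ hwa l)⟩)


section Push
variable {H : SimpleGraph V} {s s1 s2 : Set V} {v w : V}

/-- one-sided version of the 2-cut push lemma -/
lemma push_side
    (hvw : H.Adj v w) (hv1 : v ∈ s1) (hw1 : w ∈ s1)
    (hcover : s ⊆ s1 ∪ s2) (hcap : s1 ∩ s2 ⊆ {v, w})
    (hcross : ∀ p q, p ∈ s1 → p ≠ v → p ≠ w → q ∈ s2 → q ≠ v → q ≠ w → ¬H.Adj p q)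
    (f : Fin 4 → Set V) (hf1 : ∀ i, f i ⊆ s) (hf2 : ∀ i, Conn H (f i))
    (hf3 : ∀ i j, i ≠ j → Disjoint (f i) (f j))
    (hf4 : ∀ i j, i ≠ j → ∃ a ∈ f i, ∃ b ∈ f j, H.Adj a b)
    (hpure : ∀ i, v ∉ f i → w ∉ f i → f i ⊆ s1) : MOn H s1 := by
  classical
  -- any element of s outside s1 is deep inside s2
  have hout : ∀ a, a ∈ s → a ∉ s1 → a ∈ s2 ∧ a ≠ v ∧ a ≠ w := by
    intro a ha ha1
    rcases hcover ha with h | h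
    · exact absurd h ha1
    · exact ⟨h, fun hv => ha1 (hv ▸ hv1), fun hw => ha1 (hw ▸ hw1)⟩
  -- non-pure witness
  have hhub : ∀ i (a : V), a ∈ f i → a ∉ s1 → ∃ e ∈ f i, e = v ∨ e = w := by
    intro i a ha ha1
    by_cases hvb : v ∈ f i
    · exact ⟨v, hvb, Or.inl rfl⟩
    by_cases hwb : w ∈ f i
    · exact ⟨w, hwb, Or.inr rfl⟩
    · exact absurd (hpure i hvb hwb ha) ha1
  refine ⟨fun i => f i ∩ s1, fun i => Set.inter_subset_right, ?_, ?_, ?_⟩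
  · intro i
    -- nonempty
    have hne : (f i ∩ s1).Nonempty := by
      by_cases hvb : v ∈ f i
      · exact ⟨v, hvb, hv1⟩
      by_cases hwb : w ∈ f i
      · exact ⟨w, hwb, hw1⟩
      · obtain ⟨a, ha⟩ := (hf2 i).1
        exact ⟨a, ha, hpure i hvb hwb ha⟩
    refine ⟨hne, fun a ha b hb => ?_⟩
    refine rch_project hv1 hw1 (fun _ => hvw) ?_ ((hf2 i).2 a ha.1 b hb.1) ha.2 hb.2
    intro p q hpq hp hq
    by_cases hpv : p = v
    · exact Or.inl hpv
    by_cases hpw : p = w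
    · exact Or.inr hpw
    · obtain ⟨hq2, hqv, hqw⟩ := hout q (hf1 i hpq.2.2) hq
      exact absurd hpq.1 (hcross p q hp hpv hpw hq2 hqv hqw)
  · intro i j hij
    exact Disjoint.mono Set.inter_subset_left Set.inter_subset_left (hf3 i j hij)
  · intro i j hij
    obtain ⟨a, ha, b, hb, hab⟩ := hf4 i j hij
    have hdisj := hf3 i j hij
    by_cases ha1 : a ∈ s1 <;> by_cases hb1 : b ∈ s1
    · exact ⟨a, ⟨ha, ha1⟩, b, ⟨hb, hb1⟩, hab⟩
    · -- b outside
      obtain ⟨hb2, hbv, hbw⟩ := hout b (hf1 j hb) hb1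
      -- then a must be a hub
      have hahub : a = v ∨ a = w := by
        by_contra hcon
        push_neg at hcon
        exact (hcross a b ha1 hcon.1 hcon.2 hb2 hbv hbw) hab
      obtain ⟨e, he, he'⟩ := hhub j b hb hb1
      have hne : a ≠ e := fun h => Set.disjoint_left.1 hdisj ha (h ▸ he)
      have hadj : H.Adj a e := by
        rcases hahub with rfl | rfl <;> rcases he' with rfl | rfl
        · exact absurd rfl hne
        · exact hvw
        · exact hvw.symm
        · exact absurd rfl hne
      have he1 : e ∈ s1 := by rcases he' with rfl | rfl; exacts [hv1, hw1]
      exact ⟨a, ⟨ha, ha1⟩, e, ⟨he, he1⟩, hadj⟩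
    · -- a outside
      obtain ⟨ha2, hav, haw⟩ := hout a (hf1 i ha) ha1
      have hbhub : b = v ∨ b = w := by
        by_contra hcon
        push_neg at hcon
        exact (hcross b a hb1 hcon.1 hcon.2 ha2 hav haw) hab.symm
      obtain ⟨e, he, he'⟩ := hhub i a ha ha1
      have hne : e ≠ b := fun h => Set.disjoint_left.1 hdisj (h ▸ he) hb
      have hadj : H.Adj e b := by
        rcases he' with rfl | rfl <;> rcases hbhub with rfl | rfl
        · exact absurd rfl hne
        · exact hvw
        · exact hvw.symm
        · exact absurd rfl hne
      have he1 : e ∈ s1 := by rcases he' with rfl | rfl; exacts [hv1, hw1]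
      exact ⟨e, ⟨he, he1⟩, b, ⟨hb, hb1⟩, hadj⟩
    · -- both outside
      obtain ⟨e, he, he'⟩ := hhub i a ha ha1
      obtain ⟨e', he'', he'''⟩ := hhub j b hb hb1
      have hne : e ≠ e' := fun h => Set.disjoint_left.1 hdisj he (h ▸ he'')
      have hadj : H.Adj e e' := by
        rcases he' with rfl | rfl <;> rcases he''' with rfl | rfl
        · exact absurd rfl hne
        · exact hvw
        · exact hvw.symm
        · exact absurd rfl hne
      have h1 : e ∈ s1 := by rcases he' with rfl | rfl; exacts [hv1, hw1]
      have h2 : e' ∈ s1 := by rcases he''' with rfl | rfl; exacts [hv1, hw1]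
      exact ⟨e, ⟨he, h1⟩, e', ⟨he'', h2⟩, hadj⟩

/-- the 2-cut push lemma -/
lemma push (hvw : H.Adj v w) (hv1 : v ∈ s1) (hw1 : w ∈ s1) (hv2 : v ∈ s2) (hw2 : w ∈ s2)
    (hcover : s ⊆ s1 ∪ s2) (hcap : s1 ∩ s2 ⊆ {v, w})
    (hcross : ∀ p q, p ∈ s1 → p ≠ v → p ≠ w → q ∈ s2 → q ≠ v → q ≠ w → ¬H.Adj p q)
    (hm : MOn H s) : MOn H s1 ∨ MOn H s2 := by
  classical
  obtain ⟨f, hf1, hf2, hf3, hf4⟩ := hm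
  have hcross' : ∀ p q, p ∈ s2 → p ≠ v → p ≠ w → q ∈ s1 → q ≠ v → q ≠ w → ¬H.Adj p q :=
    fun p q hp hpv hpw hq hqv hqw hadj => (hcross q p hq hqv hqw hp hpv hpw) hadj.symm
  -- dichotomy for pure sets
  have hdich : ∀ i, v ∉ f i → w ∉ f i → f i ⊆ s1 ∨ f i ⊆ s2 := by
    intro i hvb hwb
    by_cases hsub : f i ⊆ s1
    · exact Or.inl hsub
    right
    rw [Set.not_subset] at hsub
    obtain ⟨a, ha, ha1⟩ := hsub
    have haout : a ∈ s2 ∧ a ≠ v ∧ a ≠ w := by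
      rcases hcover (hf1 i ha) with h | h
      · exact absurd h ha1
      · exact ⟨h, fun hv => hvb (hv ▸ ha), fun hw => hwb (hw ▸ ha)⟩
    intro b hb
    by_cases hb1 : b ∈ s1
    · -- chain from b to a must exit s1 at a non-hub, contradiction
      exfalso
      obtain ⟨p, q, hp, hq, hpq⟩ := exit_step ((hf2 i).2 b hb a ha) hb1 ha1
      have hqs : q ∈ s2 ∧ q ≠ v ∧ q ≠ w := by
        rcases hcover (hf1 i hpq.2.2) with h | h
        · exact absurd h hq
        · exact ⟨h, fun hv => hvb (hv ▸ hpq.2.2), fun hw => hwb (hw ▸ hpq.2.2)⟩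
      have hpv : p ≠ v := fun h => hvb (h ▸ hpq.2.1)
      have hpw : p ≠ w := fun h => hwb (h ▸ hpq.2.1)
      exact (hcross p q hp hpv hpw hqs.1 hqs.2.1 hqs.2.2) hpq.1
    · rcases hcover (hf1 i hb) with h | h
      · exact absurd h hb1
      · exact h
  by_cases hall : ∀ i, v ∉ f i → w ∉ f i → f i ⊆ s1
  · exact Or.inl (push_side hvw hv1 hw1 hcover hcap hcross f hf1 hf2 hf3 hf4 hall)
  · push_neg at hall
    obtain ⟨i0, hi0v, hi0w, hi0⟩ := hall
    have hi0s2 : f i0 ⊆ s2 := (hdich i0 hi0v hi0w).resolve_left hi0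
    -- show all pure sets go to s2
    right
    refine push_side hvw hv2 hw2 (by rwa [Set.union_comm])
      (by rwa [Set.inter_comm]) hcross' f hf1 hf2 hf3 hf4 ?_
    intro j hjv hjw
    rcases hdich j hjv hjw with hj1 | hj2
    · -- impossible: witness between f i0 and f j would cross
      exfalso
      have hij : i0 ≠ j := by
        rintro rfl
        obtain ⟨a, ha⟩ := (hf2 i0).1
        have ha1 := hj1 ha
        have := hi0s2 ha
        have : a ∈ ({v, w} : Set V) := hcap ⟨ha1, this⟩
        rcases this with rfl | rfl
        · exact hi0v ha
        · exact hi0w ha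
      obtain ⟨a, ha, b, hb, hab⟩ := hf4 i0 j hij
      have hav : a ≠ v := fun h => hi0v (h ▸ ha)
      have haw : a ≠ w := fun h => hi0w (h ▸ ha)
      have hbv : b ≠ v := fun h => hjv (h ▸ hb)
      have hbw : b ≠ w := fun h => hjw (h ▸ hb)
      exact (hcross b a (hj1 hb) hbv hbw (hi0s2 ha) hav haw) hab.symm
    · exact hj2

end Push

/-- replace the artificial edge vw by a path through fresh territory P -/
lemma mon_pl_replace {G : SimpleGraph V} {v w : V} {s1 P : Set V} (hvw : v ≠ w)
    (hm : MOn (pl G v w) s1) (hP : Conn G P) (hPd : ∀ x ∈ P, x ∉ s1)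
    (hpv : ∃ p ∈ P, G.Adj v p) (hqw : ∃ q ∈ P, G.Adj w q) : MOn G (s1 ∪ P) := by
  classical
  obtain ⟨p0, hp0, hp0adj⟩ := hpv
  obtain ⟨q0, hq0, hq0adj⟩ := hqw
  set Q : Set V := insert v (insert w P) with hQ
  have hPQ : P ⊆ Q := fun x hx => Set.mem_insert_of_mem _ (Set.mem_insert_of_mem _ hx)
  have hvQ : v ∈ Q := Set.mem_insert _ _
  have hwQ : w ∈ Q := Set.mem_insert_of_mem _ (Set.mem_insert _ _)
  have hlink : Rch G Q v w := by
    refine (rch_single hp0adj hvQ (hPQ hp0)).trans' ?_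
    refine (rch_mono_set hPQ (hP.2 p0 hp0 q0 hq0)).trans' ?_
    exact rch_single hq0adj.symm (hPQ hq0) hwQ
  obtain ⟨f, h1, h2, h3, h4⟩ := hm
  by_cases hvin : ∃ i, v ∈ f i
  case neg =>
    -- v occurs in no branch set: the extra edge is unusable
    have hnov : ∀ i, v ∉ f i := by push_neg at hvin; exact hvin
    refine mon_mono_set Set.subset_union_left ⟨f, h1, ?_, h3, ?_⟩
    · exact fun i => ⟨(h2 i).1, fun a ha b hb => rch_pl_unused (Or.inl (hnov i)) hvw ((h2 i).2 a ha b hb)⟩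
    · intro i j hij
      obtain ⟨a, ha, b, hb, hab⟩ := h4 i j hij
      rcases (pl_adj hvw).1 hab with h | (⟨rfl, rfl⟩ | ⟨rfl, rfl⟩)
      · exact ⟨a, ha, b, hb, h⟩
      · exact absurd ha (hnov i)
      · exact absurd hb (hnov j)
  obtain ⟨i0, hi0⟩ := hvin
  by_cases hwin : ∃ j, w ∈ f j
  case neg =>
    have hnow : ∀ i, w ∉ f i := by push_neg at hwin; exact hwin
    refine mon_mono_set Set.subset_union_left ⟨f, h1, ?_, h3, ?_⟩
    · exact fun i => ⟨(h2 i).1, fun a ha b hb => rch_pl_unused (Or.inr (hnow i)) hvw ((h2 i).2 a ha b hb)⟩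
    · intro i j hij
      obtain ⟨a, ha, b, hb, hab⟩ := h4 i j hij
      rcases (pl_adj hvw).1 hab with h | (⟨rfl, rfl⟩ | ⟨rfl, rfl⟩)
      · exact ⟨a, ha, b, hb, h⟩
      · exact absurd hb (hnow j)
      · exact absurd ha (hnow i)
  obtain ⟨i1, hi1⟩ := hwin
  have hPnotin : ∀ i, ∀ x ∈ P, x ∉ f i := fun i x hx hxf => (hPd x hx) (h1 i hxf)
  by_cases hii : i0 = i1
  · -- v and w in the same branch set: absorb the whole of Q
    subst hii
    set g : Fin 4 → Set V := fun i => if i = i0 then f i0 ∪ Q else f i with hg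
    have hQs : Q ⊆ s1 ∪ P := by
      rintro x (rfl | rfl | hx)
      · exact Or.inl (h1 i0 hi0)
      · exact Or.inl (h1 i0 hi1)
      · exact Or.inr hx
    have hvg : ∀ j, j ≠ i0 → v ∉ f j := fun j hj hv =>
      Set.disjoint_left.1 (h3 j i0 hj) hv hi0
    have hwg : ∀ j, j ≠ i0 → w ∉ f j := fun j hj hw =>
      Set.disjoint_left.1 (h3 j i0 hj) hw hi1
    refine ⟨g, ?_, ?_, ?_, ?_⟩
    · intro i
      by_cases hi : i = i0 <;> simp only [hg, hi, if_true, if_false]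
      · exact Set.union_subset ((h1 i0).trans Set.subset_union_left) hQs
      · exact (h1 i).trans Set.subset_union_left
    · intro i
      by_cases hi : i = i0 <;> simp only [hg, hi, if_true, if_false]
      · -- connectivity of f i0 ∪ Q
        refine ⟨⟨v, Or.inl hi0⟩, ?_⟩
        have hub : ∀ a ∈ f i0 ∪ Q, Rch G (f i0 ∪ Q) a v := by
          rintro a (ha | ha)
          · exact rch_pl_replace hvw hlink ((h2 i0).2 a ha v hi0)
          · rcases ha with rfl | rfl | ha
            · exact Relation.ReflTransGen.refl
            · refine Rch.symm (rch_mono_set Set.subset_union_right hlink)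
            · refine rch_mono_set Set.subset_union_right ?_
              refine (rch_mono_set hPQ (hP.2 a ha p0 hp0)).trans' ?_
              exact rch_single hp0adj.symm (hPQ hp0) hvQ
        exact fun a ha b hb => (hub a ha).trans' (hub b hb).symm
      · exact ⟨(h2 i).1, fun a ha b hb =>
          rch_pl_unused (Or.inl (hvg i hi)) hvw ((h2 i).2 a ha b hb)⟩
    · intro i j hij
      have hQd : ∀ j, j ≠ i0 → Disjoint Q (f j) := by
        intro j hj
        rw [Set.disjoint_left]
        rintro x (rfl | rfl | hx)
        · exact hvg j hj
        · exact hwg j hj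
        · exact hPnotin j x hx
      by_cases hi : i = i0 <;> by_cases hj : j = i0 <;>
        simp only [hg, hi, hj, if_true, if_false]
      · exact absurd (hj ▸ hi : i = j) hij
      · exact Set.disjoint_union_left.2 ⟨hi ▸ h3 i j hij,
          hQd j (fun hj0 => hij (hi.trans hj0.symm))⟩
      · exact Set.disjoint_union_right.2 ⟨hj ▸ h3 i j hij,
          (hQd i (fun hi0' => hij (hi0'.trans hj.symm))).symm⟩
      · exact h3 i j hij
    · intro i j hij
      have hsubg : ∀ k, f k ⊆ (if k = i0 then f i0 ∪ Q else f k) := by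
        intro k
        by_cases hk : k = i0 <;> simp only [hk, if_true, if_false]
        · exact Set.subset_union_left
        · exact subset_rfl
      obtain ⟨a, ha, b, hb, hab⟩ := h4 i j hij
      rcases (pl_adj hvw).1 hab with h | (⟨rfl, rfl⟩ | ⟨rfl, rfl⟩)
      · exact ⟨a, hsubg i ha, b, hsubg j hb, h⟩
      · exfalso
        have hi : i = i0 := by
          by_contra hi; exact hvg i hi ha
        have hj : j = i0 := by
          by_contra hj; exact hwg j hj hb
        exact hij (hi.trans hj.symm)
      · exfalso
        have hi : i = i0 := by
          by_contra hi; exact hwg i hi ha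
        have hj : j = i0 := by
          by_contra hj; exact hvg j hj hb
        exact hij (hi.trans hj.symm)
  · -- v ∈ f i0, w ∈ f i1, different branch sets
    set g : Fin 4 → Set V := fun i => if i = i0 then f i0 ∪ P else f i with hg
    have hvg : ∀ j, j ≠ i0 → v ∉ f j := fun j hj hv =>
      Set.disjoint_left.1 (h3 j i0 hj) hv hi0
    have hwg : ∀ j, j ≠ i1 → w ∉ f j := fun j hj hw =>
      Set.disjoint_left.1 (h3 j i1 hj) hw hi1
    have hsubg : ∀ k, f k ⊆ g k := by
      intro k
      by_cases hk : k = i0 <;> simp only [hg, hk, if_true, if_false]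
      · exact Set.subset_union_left
      · exact subset_rfl
    refine ⟨g, ?_, ?_, ?_, ?_⟩
    · intro i
      by_cases hi : i = i0 <;> simp only [hg, hi, if_true, if_false]
      · exact Set.union_subset ((h1 i0).trans Set.subset_union_left) Set.subset_union_right
      · exact (h1 i).trans Set.subset_union_left
    · intro i
      by_cases hi : i = i0 <;> simp only [hg, hi, if_true, if_false]
      · have hc0 : Conn G (f i0) := ⟨(h2 i0).1, fun a ha b hb =>
          rch_pl_unused (Or.inr (hwg i0 hii)) hvw ((h2 i0).2 a ha b hb)⟩
        exact conn_union hc0 hP hi0 hp0 hp0adj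
      · refine ⟨(h2 i).1, fun a ha b hb => ?_⟩
        by_cases hi1' : i = i1
        · subst hi1'
          exact rch_pl_unused (Or.inl (hvg i hi)) hvw ((h2 i).2 a ha b hb)
        · exact rch_pl_unused (Or.inl (hvg i hi)) hvw ((h2 i).2 a ha b hb)
    · intro i j hij
      have hPd' : ∀ j, Disjoint P (f j) := by
        intro j
        rw [Set.disjoint_left]
        intro x hx
        exact hPnotin j x hx
      by_cases hi : i = i0 <;> by_cases hj : j = i0 <;>
        simp only [hg, hi, hj, if_true, if_false]
      · exact absurd (hj ▸ hi : i = j) hij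
      · exact Set.disjoint_union_left.2 ⟨hi ▸ h3 i j hij, hPd' j⟩
      · exact Set.disjoint_union_right.2 ⟨hj ▸ h3 i j hij, (hPd' i).symm⟩
      · exact h3 i j hij
    · intro i j hij
      obtain ⟨a, ha, b, hb, hab⟩ := h4 i j hij
      rcases (pl_adj hvw).1 hab with h | (⟨hav, hbw⟩ | ⟨haw, hbv⟩)
      · exact ⟨a, hsubg i ha, b, hsubg j hb, h⟩
      · -- witness was the artificial edge v–w : replace by q0–w
        have hi : i = i0 := by
          by_contra hi; exact hvg i hi (hav ▸ ha)
        have hj : j = i1 := by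
          by_contra hj; exact hwg j hj (hbw ▸ hb)
        have hq0g : q0 ∈ g i0 := by
          simp only [hg, if_pos rfl]
          exact Or.inr hq0
        rw [hi, hj]
        exact ⟨q0, hq0g, w, hsubg i1 hi1, hq0adj.symm⟩
      · have hi : i = i1 := by
          by_contra hi; exact hwg i hi (haw ▸ ha)
        have hj : j = i0 := by
          by_contra hj; exact hvg j hj (hbv ▸ hb)
        have hq0g : q0 ∈ g i0 := by
          simp only [hg, if_pos rfl]
          exact Or.inr hq0
        rw [hi, hj]
        exact ⟨w, hsubg i1 hi1, q0, hq0g, hq0adj⟩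


section Aux
variable [Fintype V]

lemma ncard_sdiff_ge {S A : Set V} : S.ncard ≤ (S \ A).ncard + A.ncard := by
  have hsub : S ⊆ (S \ A) ∪ A := by
    intro z hz
    by_cases h : z ∈ A
    · exact Or.inr h
    · exact Or.inl ⟨hz, h⟩
  calc S.ncard ≤ ((S \ A) ∪ A).ncard := Set.ncard_le_ncard hsub (Set.toFinite _)
    _ ≤ (S \ A).ncard + A.ncard := Set.ncard_union_le _ _

lemma ncard_pair_le (x y : V) : ({x, y} : Set V).ncard ≤ 2 := by
  refine le_trans (Set.ncard_insert_le _ _) ?_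
  simp [Set.ncard_singleton]

lemma ncard_triple_le (x y z : V) : ({x, y, z} : Set V).ncard ≤ 3 := by
  refine le_trans (Set.ncard_insert_le _ _) ?_
  exact Nat.succ_le_succ (ncard_pair_le y z)

lemma nonempty_of_ncard_ge {S : Set V} {k : ℕ} (hk : 1 ≤ k) (h : k ≤ S.ncard) : S.Nonempty := by
  rcases Set.eq_empty_or_nonempty S with rfl | hne
  · simp at h; omega
  · exact hne

lemma two_distinct_of_ncard {S : Set V} (h : 2 ≤ S.ncard) : ∃ x ∈ S, ∃ y ∈ S, x ≠ y := by
  have := Set.one_lt_ncard_iff (Set.toFinite S)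
  obtain ⟨x, y, hx, hy, hxy⟩ := this.1 (by omega)
  exact ⟨x, hx, y, hy, hxy⟩

end Aux


section Tutte
variable [Fintype V]

lemma le_ctr {G : SimpleGraph V} {x y : V} : G ≤ Ctr G x y :=
  fun {a b} h => ⟨h.ne, Or.inl h⟩

/-- transfer of connectivity to a contracted graph -/
lemma conn_ctr_transfer {G : SimpleGraph V} {S : Set V} {x y p q : V}
    (hxS : x ∈ S) (hxyne : x ≠ y) (hpx : p ≠ x) (hqx : q ≠ x)
    (hconn : Conn G (S \ {p, q})) :
    Conn (Ctr G x y) ((S \ {y}) \ {p, q}) := by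
  classical
  have hxmem : x ∈ (S \ {y}) \ {p, q} := by
    refine ⟨⟨hxS, hxyne⟩, ?_⟩
    simp only [Set.mem_insert_iff, Set.mem_singleton_iff]
    push_neg
    exact ⟨fun h => hpx h.symm, fun h => hqx h.symm⟩
  have hmem : ∀ z ∈ S \ {p, q}, (if z = y then x else z) ∈ (S \ {y}) \ {p, q} := by
    intro z hz
    by_cases hzy : z = y
    · simp only [hzy, if_true]; exact hxmem
    · simp only [hzy, if_false]; exact ⟨⟨hz.1, hzy⟩, hz.2⟩
  have key : ∀ a b, Rch G (S \ {p, q}) a b →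
      Rch (Ctr G x y) ((S \ {y}) \ {p, q}) (if a = y then x else a) (if b = y then x else b) := by
    intro a b h
    induction h with
    | refl => exact Relation.ReflTransGen.refl
    | @tail c d hac hstep ih =>
      by_cases hcd : (if c = y then x else c) = (if d = y then x else d)
      · rwa [hcd] at ih
      · refine ih.tail ⟨⟨hcd, ?_⟩, hmem c hstep.2.1, hmem d hstep.2.2⟩
        by_cases hcy : c = y <;> by_cases hdy : d = y
        · exact absurd ((if_pos hcy).trans (if_pos hdy).symm) hcd
        · rw [if_pos hcy, if_neg hdy]
          exact Or.inr (Or.inl ⟨rfl, hcy ▸ hstep.1⟩)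
        · rw [if_neg hcy, if_pos hdy]
          exact Or.inr (Or.inr ⟨rfl, hdy ▸ hstep.1⟩)
        · rw [if_neg hcy, if_neg hdy]
          exact Or.inl hstep.1
  obtain ⟨a0, ha0⟩ := hconn.1
  refine ⟨⟨_, hmem a0 ha0⟩, ?_⟩
  intro a ha b hb
  have haS : a ∈ S \ {p, q} := ⟨ha.1.1, ha.2⟩
  have hbS : b ∈ S \ {p, q} := ⟨hb.1.1, hb.2⟩
  have := key a b (hconn.2 a haS b hbS)
  rwa [if_neg (show ¬ a = y from ha.1.2), if_neg (show ¬ b = y from hb.1.2)] at this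

/-- main engine: 3-connected-lite sets carry a K4 minor -/
theorem conn3_mon : ∀ n : ℕ, ∀ (G : SimpleGraph V) (S : Set V), S.ncard = n → 4 ≤ n →
    (∀ x y, x ∈ S → y ∈ S → x ≠ y → Conn G (S \ {x, y})) → MOn G S := by
  intro n
  induction n using Nat.strong_induction_on with
  | _ n IH =>
  intro G S hcard hn h3
  -- complete-adjacency inside S in the base case
  by_cases hn4 : n = 4
  · subst hn4
    have hadjall : ∀ u ∈ S, ∀ t ∈ S, u ≠ t → G.Adj u t := by
      intro u hu t ht hut
      have hsub : ({u, t} : Set V) ⊆ S := by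
        rintro z (rfl | rfl)
        exacts [hu, ht]
      have h2 : (S \ {u, t}).ncard = 2 := by
        rw [Set.ncard_diff hsub, hcard, Set.ncard_pair hut]
      obtain ⟨x, y, hxy, hset⟩ := Set.ncard_eq_two.1 h2
      have hxS : x ∈ S \ {u, t} := by rw [hset]; exact Set.mem_insert _ _
      have hyS : y ∈ S \ {u, t} := by rw [hset]; exact Set.mem_insert_of_mem _ rfl
      have hconn := h3 x y hxS.1 hyS.1 hxy
      have heq : S \ {x, y} = {u, t} := by
        ext w
        constructor
        · rintro ⟨hwS, hw⟩
          by_contra hwut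
          have : w ∈ S \ {u, t} := ⟨hwS, hwut⟩
          rw [hset] at this
          exact hw this
        · rintro (rfl | rfl)
          · refine ⟨hu, ?_⟩
            rintro (rfl | rfl)
            · exact hxS.2 (Set.mem_insert _ _)
            · exact hyS.2 (Set.mem_insert _ _)
          · refine ⟨ht, ?_⟩
            rintro (rfl | rfl)
            · exact hxS.2 (Set.mem_insert_of_mem _ rfl)
            · exact hyS.2 (Set.mem_insert_of_mem _ rfl)
      rw [heq] at hconn
      exact rch_pair_adj hut (hconn.2 u (Set.mem_insert _ _) t (Set.mem_insert_of_mem _ rfl))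
    -- extract four distinct vertices
    have hne : S.Nonempty := nonempty_of_ncard_ge (k := 4) (by omega) (by omega)
    obtain ⟨a, haS⟩ := hne
    have h3' : (S \ {a}).ncard = 3 := by
      rw [Set.ncard_diff_singleton_of_mem haS, hcard]
    obtain ⟨b, c, d, hbc, hbd, hcd, hset⟩ := Set.ncard_eq_three.1 h3'
    have hbS : b ∈ S ∧ b ≠ a := by
      have : b ∈ S \ {a} := by rw [hset]; exact Set.mem_insert _ _
      exact ⟨this.1, this.2⟩
    have hcS : c ∈ S ∧ c ≠ a := by
      have : c ∈ S \ {a} := by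
        rw [hset]; exact Set.mem_insert_of_mem _ (Set.mem_insert _ _)
      exact ⟨this.1, this.2⟩
    have hdS : d ∈ S ∧ d ≠ a := by
      have : d ∈ S \ {a} := by
        rw [hset]; exact Set.mem_insert_of_mem _ (Set.mem_insert_of_mem _ rfl)
      exact ⟨this.1, this.2⟩
    have hab : a ≠ b := fun h => hbS.2 h.symm
    have hac : a ≠ c := fun h => hcS.2 h.symm
    have had : a ≠ d := fun h => hdS.2 h.symm
    have hba : b ≠ a := hbS.2
    have hca : c ≠ a := hcS.2
    have hda : d ≠ a := hdS.2
    have hcb : c ≠ b := hbc.symm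
    have hdb : d ≠ b := hbd.symm
    have hdc : d ≠ c := hcd.symm
    set vv : Fin 4 → V := fun i => if i.val = 0 then a else if i.val = 1 then b
      else if i.val = 2 then c else d with hvv
    have hvS : ∀ i, vv i ∈ S := by
      intro i
      fin_cases i
      · exact haS
      · exact hbS.1
      · exact hcS.1
      · exact hdS.1
    have hvne : ∀ i j : Fin 4, i ≠ j → vv i ≠ vv j := by
      intro i j hij
      fin_cases i <;> fin_cases j <;>
        first
          | exact absurd rfl hij
          | exact hab | exact hba | exact hac | exact hca | exact had | exact hda
          | exact hbc | exact hcb | exact hbd | exact hdb | exact hcd | exact hdc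
    refine ⟨fun i => {vv i}, ?_, ?_, ?_, ?_⟩
    · intro i
      exact Set.singleton_subset_iff.2 (hvS i)
    · intro i
      exact conn_singleton G (vv i)
    · intro i j hij
      exact Set.disjoint_singleton.2 (hvne i j hij)
    · intro i j hij
      exact ⟨vv i, rfl, vv j, rfl, hadjall (vv i) (hvS i) (vv j) (hvS j) (hvne i j hij)⟩
  · have hn5 : 5 ≤ n := by omega
    -- global connectivity
    have hconnS : Conn G S := by
      have hne : S.Nonempty := nonempty_of_ncard_ge (k := 4) (by omega) (by omega)
      refine ⟨hne, fun u hu t ht => ?_⟩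
      have h2 : 2 ≤ (S \ {u, t}).ncard := by
        have := ncard_sdiff_ge (S := S) (A := {u, t})
        have := ncard_pair_le u t
        omega
      obtain ⟨x, hx, y, hy, hxy⟩ := two_distinct_of_ncard h2
      have hcu : Conn G (S \ {x, y}) := h3 x y hx.1 hy.1 hxy
      have hu' : u ∈ S \ {x, y} := by
        refine ⟨hu, ?_⟩
        rintro (rfl | rfl)
        · exact hx.2 (Set.mem_insert _ _)
        · exact hy.2 (Set.mem_insert _ _)
      have ht' : t ∈ S \ {x, y} := by
        refine ⟨ht, ?_⟩
        rintro (rfl | rfl)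
        · exact hx.2 (Set.mem_insert_of_mem _ rfl)
        · exact hy.2 (Set.mem_insert_of_mem _ rfl)
      exact rch_mono_set Set.diff_subset (hcu.2 u hu' t ht')
    by_cases hok : ∃ x y, x ∈ S ∧ y ∈ S ∧ G.Adj x y ∧
        ∀ p q, p ∈ S \ {y} → q ∈ S \ {y} → p ≠ q → Conn (Ctr G x y) ((S \ {y}) \ {p, q})
    · obtain ⟨x, y, hx, hy, hadj, h3'⟩ := hok
      have hynotin : y ∉ S \ {y} := by simp
      have hcard' : (S \ {y}).ncard = n - 1 := by
        rw [Set.ncard_diff_singleton_of_mem hy, hcard]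
      have hm := IH (n - 1) (by omega) (Ctr G x y) (S \ {y}) hcard' (by omega)
        (fun p q hp hq hpq => h3' p q hp hq hpq)
      have := mon_ctr_pull hadj hynotin hm
      rwa [Set.insert_diff_singleton, Set.insert_eq_self.2 hy] at this
    · exfalso
      push_neg at hok
      -- every edge has a separating triple
      have hall : ∀ x y, x ∈ S → y ∈ S → G.Adj x y →
          ∃ z, z ∈ S ∧ z ≠ x ∧ z ≠ y ∧ ¬ Conn G (S \ {x, y, z}) := by
        intro x y hx hy hadj
        obtain ⟨p, q, hp, hq, hpq, hnc⟩ := hok x y hx hy hadj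
        have hxyne : x ≠ y := hadj.ne
        have hxpq : x = p ∨ x = q := by
          by_contra hcon
          push_neg at hcon
          exact hnc (conn_ctr_transfer hx hxyne (fun h => hcon.1 h.symm)
            (fun h => hcon.2 h.symm) (h3 p q hp.1 hq.1 hpq))
        have key : ∀ z, z ∈ S \ {y} → z ≠ x → ¬ Conn (Ctr G x y) ((S \ {y}) \ {x, z}) →
            ∃ z', z' ∈ S ∧ z' ≠ x ∧ z' ≠ y ∧ ¬ Conn G (S \ {x, y, z'}) := by
          intro z hz hzx hncz
          refine ⟨z, hz.1, hzx, hz.2, ?_⟩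
          intro hcG
          apply hncz
          have hseteq : (S \ {y}) \ {x, z} = S \ {x, y, z} := by
            ext w
            simp only [Set.mem_diff, Set.mem_singleton_iff, Set.mem_insert_iff]
            tauto
          rw [hseteq]
          have hseteq2 : S \ {x, y, z} = S \ {x, y, z} := rfl
          exact conn_mono_graph le_ctr hcG
        rcases hxpq with rfl | rfl
        · exact key q hq (fun h => hpq h.symm) hnc
        · refine key p hp hpq ?_
          rwa [Set.pair_comm] at hnc
      -- minimal separating component, then descend
      set NN : Set ℕ := {k | ∃ x y z c₁, x ∈ S ∧ y ∈ S ∧ z ∈ S ∧ G.Adj x y ∧ z ≠ x ∧ z ≠ y ∧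
        c₁ ∈ S \ {x, y, z} ∧ (comp G (S \ {x, y, z}) c₁).ncard = k} with hNN
      have hNNne : NN.Nonempty := by
        obtain ⟨u, hu, t, ht, hut⟩ := two_distinct_of_ncard (by omega : 2 ≤ S.ncard)
        obtain ⟨p₀, q₀, hpq₀⟩ := rch_exists_step (hconnS.2 u hu t ht) hut
        obtain ⟨z, hzS, hzp, hzq, hncz⟩ := hall p₀ q₀ hpq₀.2.1 hpq₀.2.2 hpq₀.1
        have hTne : (S \ {p₀, q₀, z}).Nonempty := by
          refine nonempty_of_ncard_ge (k := 2) (by omega) ?_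
          have := ncard_sdiff_ge (S := S) (A := {p₀, q₀, z})
          have := ncard_triple_le p₀ q₀ z
          omega
        obtain ⟨a₁, ha₁⟩ := hTne
        exact ⟨_, p₀, q₀, z, a₁, hpq₀.2.1, hpq₀.2.2, hzS, hpq₀.1, hzp, hzq, ha₁, rfl⟩
      have hmin := Nat.sInf_mem hNNne
      rw [hNN] at hmin
      obtain ⟨x, y, z, c₁, hxS, hyS, hzS, hadj, hzx, hzy, hc₁, hcareq⟩ := hmin
      set T : Set V := S \ {x, y, z} with hT
      set C : Set V := comp G T c₁ with hC
      -- z attaches to C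
      have hzatt : ∃ m ∈ C, G.Adj z m := by
        by_contra hcon
        push_neg at hcon
        refine split_not_conn (s := S \ {x, y}) (A := C) ?_ ?_ ?_ ?_ (h3 x y hxS hyS hadj.ne)
        · intro w hw
          have := comp_subset hw
          exact ⟨this.1, fun h => this.2 (by
            rcases h with rfl | rfl
            · exact Or.inl rfl
            · exact Or.inr (Or.inl rfl))⟩
        · exact ⟨c₁, mem_comp_self hc₁⟩
        · refine ⟨z, ⟨hzS, ?_⟩, ?_⟩
          · rintro (rfl | rfl)
            · exact hzx rfl
            · exact hzy rfl
          · intro hzC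
            exact (comp_subset hzC).2 (Or.inr (Or.inr rfl))
        · rintro p' q' hstep hp'
          by_cases hq'z : q' = z
          · exact absurd (hq'z ▸ hstep.1.symm) (hcon p' hp')
          · refine comp_closed p' q' ⟨hstep.1, comp_subset hp', ?_⟩ hp'
            exact ⟨hstep.2.2.1, by
              intro h
              rcases h with rfl | rfl | rfl
              · exact hstep.2.2.2 (Or.inl rfl)
              · exact hstep.2.2.2 (Or.inr rfl)
              · exact hq'z rfl⟩
      obtain ⟨m, hmC, hzm⟩ := hzatt
      have hmT : m ∈ T := comp_subset hmC
      have hmS : m ∈ S := hmT.1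
      obtain ⟨w', hw'S, hw'z, hw'm, hdis'⟩ := hall z m hzS hmS hzm
      set T' : Set V := S \ {z, m, w'} with hT'
      have hT'ne : T'.Nonempty := by
        refine nonempty_of_ncard_ge (k := 2) (by omega) ?_
        rw [hT']
        have := ncard_sdiff_ge (S := S) (A := ({z, m, w'} : Set V))
        have := ncard_triple_le z m w'
        omega
      obtain ⟨a₁, ha₁, b₁, hb₁, hsep⟩ := not_conn_split hT'ne hdis'
      -- the two components are disjoint
      have hdisj : Disjoint (comp G T' a₁) (comp G T' b₁) := by
        rw [Set.disjoint_left]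
        intro w hwa hwb
        exact hsep ⟨hb₁, (hwa.2.trans' hwb.2.symm).symm.symm⟩
      -- choose a component avoiding x and y
      have hxyT' : ∀ u₁, u₁ = x ∨ u₁ = y → u₁ ∈ T' → (u₁ ∈ comp G T' a₁ → x ∈ comp G T' a₁ ∨ y ∈ comp G T' a₁) := by
        intro u₁ h hu₁ hmem
        rcases h with rfl | rfl
        · exact Or.inl hmem
        · exact Or.inr hmem
      have hchoice : ∃ c₂, c₂ ∈ T' ∧ x ∉ comp G T' c₂ ∧ y ∉ comp G T' c₂ := by
        by_cases hxa : x ∈ comp G T' a₁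
        · refine ⟨b₁, hb₁, ?_, ?_⟩
          · exact fun h => Set.disjoint_left.1 hdisj hxa h
          · intro hyb
            -- then y ∈ comp b₁, x ∈ comp a₁; but x ~ y forces same component
            have hyT' : y ∈ T' := comp_subset hyb
            have hxT' : x ∈ T' := comp_subset hxa
            have : y ∈ comp G T' a₁ := comp_closed x y ⟨hadj, hxT', hyT'⟩ hxa
            exact Set.disjoint_left.1 hdisj this hyb
        · by_cases hya : y ∈ comp G T' a₁
          · refine ⟨b₁, hb₁, ?_, ?_⟩
            · intro hxb
              have hyT' : y ∈ T' := comp_subset hya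
              have hxT' : x ∈ T' := comp_subset hxb
              have : x ∈ comp G T' a₁ := comp_closed y x ⟨hadj.symm, hyT', hxT'⟩ hya
              exact hxa this
            · exact fun h => Set.disjoint_left.1 hdisj hya h
          · exact ⟨a₁, ha₁, hxa, hya⟩
      obtain ⟨c₂, hc₂, hxD, hyD⟩ := hchoice
      set D : Set V := comp G T' c₂ with hD
      -- m attaches to D
      have hmatt : ∃ d₀ ∈ D, G.Adj m d₀ := by
        by_contra hcon
        push_neg at hcon
        refine split_not_conn (s := S \ {z, w'}) (A := D) ?_ ?_ ?_ ?_
          (h3 z w' hzS hw'S (fun h => hw'z h.symm))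
        · intro w hw
          have := comp_subset hw
          exact ⟨this.1, fun h => this.2 (by
            rcases h with rfl | rfl
            · exact Or.inl rfl
            · exact Or.inr (Or.inr rfl))⟩
        · exact ⟨c₂, mem_comp_self hc₂⟩
        · refine ⟨m, ⟨hmS, ?_⟩, ?_⟩
          · rintro (rfl | rfl)
            · exact hzm.ne rfl
            · exact hw'm rfl
          · intro hmD
            exact (comp_subset hmD).2 (Or.inr (Or.inl rfl))
        · rintro p' q' hstep hp'
          by_cases hq'm : q' = m
          · exact absurd (hq'm ▸ hstep.1.symm) (hcon p' hp')
          · refine comp_closed p' q' ⟨hstep.1, comp_subset hp', ?_⟩ hp'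
            exact ⟨hstep.2.2.1, by
              intro h
              rcases h with rfl | rfl | rfl
              · exact hstep.2.2.2 (Or.inl rfl)
              · exact hq'm rfl
              · exact hstep.2.2.2 (Or.inr rfl)⟩
      obtain ⟨d₀, hd₀D, hmd₀⟩ := hmatt
      -- D sits inside C, missing m : strictly smaller
      have hDsubT : D ⊆ T := by
        intro w hw
        have hwT' := comp_subset hw
        refine ⟨hwT'.1, ?_⟩
        rintro (rfl | rfl | rfl)
        · exact hxD hw
        · exact hyD hw
        · exact hwT'.2 (Or.inl rfl)
      have hd₀C : d₀ ∈ C := by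
        refine comp_closed m d₀ ⟨hmd₀, hmT, hDsubT hd₀D⟩ hmC
      have hDsubC : D ⊆ C := by
        intro w hw
        have hr : Rch G D d₀ w := (comp_conn hc₂).2 d₀ hd₀D w hw
        have hr' : Rch G T d₀ w := rch_mono_set hDsubT hr
        exact (rch_closed (comp_closed (a := c₁)) hr' hd₀C).1
      have hmnotD : m ∉ D := fun h => (comp_subset h).2 (Or.inr (Or.inl rfl))
      have hDC : D ⊂ C := ⟨hDsubC, fun h => hmnotD (h hmC)⟩
      have hlt : D.ncard < C.ncard := Set.ncard_lt_ncard hDC (Set.toFinite C)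
      have hDNN : D.ncard ∈ NN := by
        rw [hNN]
        exact ⟨z, m, w', c₂, hzS, hmS, hw'S, hzm, hw'z, hw'm, hc₂, rfl⟩
      have hfin : sInf NN ≤ D.ncard := Nat.sInf_le hDNN
      rw [hNN] at hfin
      rw [hcareq] at hlt
      omega

end Tutte

section Structure
variable [Fintype V]

/-- Step A: an edge-maximal K4-minor-free set with no separating edge is connected -/
lemma emf_conn {G : SimpleGraph V} {S : Set V} (hemf : EMF G S) (hcard : 4 ≤ S.ncard)
    (hA : ∀ v w, v ∈ S → w ∈ S → G.Adj v w → Conn G (S \ {v, w})) : Conn G S := by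
  classical
  by_contra hnc
  have hSne : S.Nonempty := nonempty_of_ncard_ge (k := 4) (by omega) (by omega)
  obtain ⟨a0, ha0, b0, hb0, hb0n⟩ := not_conn_split hSne hnc
  -- every edge spans its whole component
  have hpair : ∀ p q, p ∈ S → q ∈ S → G.Adj p q → comp G S p ⊆ {p, q} := by
    intro p q hp hq hpq
    by_contra hsub
    rw [Set.not_subset] at hsub
    obtain ⟨r, hrC, hrpq⟩ := hsub
    have hz : ∃ z ∈ S, z ∉ comp G S p := by
      by_cases hap : a0 ∈ comp G S p
      · refine ⟨b0, hb0, fun hbp => hb0n ?_⟩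
        exact ⟨hb0, (hap.2.symm.trans' hbp.2)⟩
      · exact ⟨a0, ha0, hap⟩
    obtain ⟨z, hzS, hzn⟩ := hz
    refine split_not_conn (s := S \ {p, q}) (A := comp G S p \ {p, q}) ?_ ?_ ?_ ?_
      (hA p q hp hq hpq)
    · exact fun t ht => ⟨comp_subset ht.1, ht.2⟩
    · exact ⟨r, hrC, hrpq⟩
    · refine ⟨z, ⟨⟨hzS, ?_⟩, fun ht => hzn ht.1⟩⟩
      rintro (rfl | rfl)
      · exact hzn (mem_comp_self hzS)
      · exact hzn (comp_closed p z ⟨hpq, hp, hzS⟩ (mem_comp_self hp))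
    · rintro u t hstep hu
      refine ⟨comp_closed u t ⟨hstep.1, comp_subset hu.1, hstep.2.2.1⟩ hu.1, hstep.2.2.2⟩
  -- unique-neighbor (matching) property
  have huniq : ∀ p q r, p ∈ S → q ∈ S → r ∈ S → G.Adj p q → G.Adj p r → q = r := by
    intro p q r hp hq hr hpq hpr
    have h1 : r ∈ comp G S p := comp_closed p r ⟨hpr, hp, hr⟩ (mem_comp_self hp)
    rcases hpair p q hp hq hpq h1 with h | h
    · exact absurd h hpr.ne'
    · exact h.symm
  have hne0 : a0 ≠ b0 := fun h => hb0n (h ▸ mem_comp_self ha0)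
  have hnadj0 : ¬ G.Adj a0 b0 := fun h => hb0n (comp_closed a0 b0 ⟨h, ha0, hb0⟩ (mem_comp_self ha0))
  have hm := hemf.2 a0 b0 ha0 hb0 hne0 hnadj0
  set H := pl G a0 b0 with hH
  obtain ⟨f, hf1, hf2, hf3, hf4⟩ := hm
  have hHadj : ∀ x y, H.Adj x y → G.Adj x y ∨ (x = a0 ∧ y = b0) ∨ (x = b0 ∧ y = a0) :=
    fun x y h => (pl_adj hne0).1 h
  -- all branch sets live in one H-component
  obtain ⟨r0, hr0⟩ := (hf2 0).1
  set Y : Set V := comp H S r0 with hY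
  have hsub0 : f 0 ⊆ Y := by
    intro t ht
    exact ⟨hf1 0 ht, rch_mono_set (hf1 0) ((hf2 0).2 r0 hr0 t ht)⟩
  have hYall : ∀ i, f i ⊆ Y := by
    intro i
    by_cases hi0 : i = 0
    · exact hi0 ▸ hsub0
    obtain ⟨a, ha, b, hb, hab⟩ := hf4 0 i (Ne.symm hi0)
    have hbY : b ∈ Y := comp_closed a b ⟨hab, hf1 0 ha, hf1 i hb⟩ (hsub0 ha)
    intro t ht
    have hr : Rch H S b t := rch_mono_set (hf1 i) ((hf2 i).2 b hb t ht)
    exact ⟨hf1 i ht, hbY.2.trans' hr⟩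
  have hmY : MOn H Y := ⟨f, hYall, hf2, hf3, hf4⟩
  by_cases hab0Y : a0 ∈ Y ∨ b0 ∈ Y
  · -- Y is contained in the double star around a0, b0
    set Z : Set V := {a0, b0} ∪ ({x ∈ S | G.Adj a0 x} ∪ {x ∈ S | G.Adj b0 x}) with hZ
    have hZcl : ∀ u t, Rel H S u t → u ∈ Z → t ∈ Z := by
      intro u t hstep hu
      have hcases := hHadj u t hstep.1
      rcases hu with (hua | hub) | (hu | hu)
      · -- u = a0
        rcases hcases with h | ⟨_, htb⟩ | ⟨h1, _⟩
        · exact Or.inr (Or.inl ⟨hstep.2.2, hua ▸ h⟩)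
        · exact Or.inl (Or.inr htb)
        · exact absurd (hua.symm.trans h1) hne0
      · rw [Set.mem_singleton_iff] at hub
        rcases hcases with h | ⟨h1, _⟩ | ⟨_, hta⟩
        · exact Or.inr (Or.inr ⟨hstep.2.2, hub ▸ h⟩)
        · exact absurd (h1.symm.trans hub) hne0
        · exact Or.inl (Or.inl hta)
      · -- u is a G-neighbor of a0
        rcases hcases with h | ⟨h1, _⟩ | ⟨h1, _⟩
        · exact Or.inl (Or.inl (huniq u a0 t hu.1 ha0 hstep.2.2 hu.2.symm h).symm)
        · exact absurd (h1 ▸ hu.2 : G.Adj a0 a0) (G.loopless.irrefl a0)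
        · exact absurd (h1 ▸ hu.2 : G.Adj a0 b0) hnadj0
      · rcases hcases with h | ⟨h1, _⟩ | ⟨h1, _⟩
        · exact Or.inl (Or.inr (huniq u b0 t hu.1 hb0 hstep.2.2 hu.2.symm h).symm)
        · exact absurd (h1 ▸ hu.2 : G.Adj b0 a0) (fun h' => hnadj0 h'.symm)
        · exact absurd (h1 ▸ hu.2 : G.Adj b0 b0) (G.loopless.irrefl b0)
    have hYZ : Y ⊆ Z := by
      intro t ht
      have hstart : ∀ c, c ∈ Y → c ∈ Z → t ∈ Z := by
        intro c hc hcZ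
        have hrc : Rch H S c t := (hc.2.symm).trans' ht.2
        exact (rch_closed hZcl hrc hcZ).1
      rcases hab0Y with h | h
      · exact hstart a0 h (Or.inl (Or.inl rfl))
      · exact hstart b0 h (Or.inl (Or.inr rfl))
    -- at most three possible edge values inside Y
    set e2 : Sym2 V := if h : ∃ m, m ∈ S ∧ G.Adj a0 m then s(a0, h.choose) else s(a0, b0) with he2
    set e3 : Sym2 V := if h : ∃ m, m ∈ S ∧ G.Adj b0 m then s(b0, h.choose) else s(a0, b0) with he3
    refine mon_six hmY s(a0, b0) e2 e3 ?_
    intro x y hx hy hxy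
    have hyS : y ∈ S := comp_subset hy
    have hxS : x ∈ S := comp_subset hx
    have hxZ := hYZ hx
    rcases hxZ with (hxa0 | hxb0) | (hxa | hxb)
    · -- x = a0
      rcases hHadj x y hxy with h | ⟨_, hyb⟩ | ⟨h1, _⟩
      · right; left
        have hEx : ∃ m, m ∈ S ∧ G.Adj a0 m := ⟨y, hyS, hxa0 ▸ h⟩
        have hspec := hEx.choose_spec
        have hyc : y = hEx.choose := huniq a0 y _ ha0 hyS hspec.1 (hxa0 ▸ h) hspec.2
        rw [he2, dif_pos hEx, hxa0]
        exact congrArg (fun t => s(a0, t)) hyc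
      · left
        rw [hxa0, hyb]
      · exact absurd (hxa0.symm.trans h1) hne0
    · rw [Set.mem_singleton_iff] at hxb0
      rcases hHadj x y hxy with h | ⟨h1, _⟩ | ⟨_, hya⟩
      · right; right
        have hEx : ∃ m, m ∈ S ∧ G.Adj b0 m := ⟨y, hyS, hxb0 ▸ h⟩
        have hspec := hEx.choose_spec
        have hyc : y = hEx.choose := huniq b0 y _ hb0 hyS hspec.1 (hxb0 ▸ h) hspec.2
        rw [he3, dif_pos hEx, hxb0]
        exact congrArg (fun t => s(b0, t)) hyc
      · exact absurd (h1.symm.trans hxb0) hne0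
      · left
        rw [hxb0, hya, Sym2.eq_swap]
    · -- x a G-neighbor of a0
      rcases hHadj x y hxy with h | ⟨h1, _⟩ | ⟨h1, _⟩
      · have hya : y = a0 := (huniq x a0 y hxS ha0 hyS hxa.2.symm h).symm
        right; left
        have hEx : ∃ m, m ∈ S ∧ G.Adj a0 m := ⟨x, hxS, hxa.2⟩
        have hspec := hEx.choose_spec
        have hxc : x = hEx.choose := huniq a0 x _ ha0 hxS hspec.1 hxa.2 hspec.2
        rw [he2, dif_pos hEx, hya, Sym2.eq_swap]
        exact congrArg (fun t => s(a0, t)) hxc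
      · exact absurd (h1 ▸ hxa.2 : G.Adj a0 a0) (G.loopless.irrefl a0)
      · exact absurd (h1 ▸ hxa.2 : G.Adj a0 b0) hnadj0
    · rcases hHadj x y hxy with h | ⟨h1, _⟩ | ⟨h1, _⟩
      · have hyb : y = b0 := (huniq x b0 y hxS hb0 hyS hxb.2.symm h).symm
        right; right
        have hEx : ∃ m, m ∈ S ∧ G.Adj b0 m := ⟨x, hxS, hxb.2⟩
        have hspec := hEx.choose_spec
        have hxc : x = hEx.choose := huniq b0 x _ hb0 hxS hspec.1 hxb.2 hspec.2
        rw [he3, dif_pos hEx, hyb, Sym2.eq_swap]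
        exact congrArg (fun t => s(b0, t)) hxc
      · exact absurd (h1 ▸ hxb.2 : G.Adj b0 a0) (fun h' => hnadj0 h'.symm)
      · exact absurd (h1 ▸ hxb.2 : G.Adj b0 b0) (G.loopless.irrefl b0)
  · -- Y avoids both a0 and b0 : it is tiny
    push_neg at hab0Y
    have hr0S : r0 ∈ S := hf1 0 hr0
    have hr0Y : r0 ∈ Y := mem_comp_self hr0S
    by_cases hex : ∃ m, m ∈ S ∧ G.Adj r0 m
    · set pr : V := hex.choose with hpr
      have hprS : pr ∈ S := hex.choose_spec.1
      have hpradj : G.Adj r0 pr := hex.choose_spec.2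
      have hWcl : ∀ u t, Rel H S u t → u ∈ ({r0, pr} : Set V) → t ∈ ({r0, pr} : Set V) := by
        rintro u t hstep hu
        have huY : u ∈ Y := by
          rcases hu with rfl | rfl
          · exact hr0Y
          · exact comp_closed r0 pr ⟨le_pl hpradj, hr0S, hprS⟩ hr0Y
        have hua : u ≠ a0 := fun h => hab0Y.1 (h ▸ huY)
        have hub : u ≠ b0 := fun h => hab0Y.2 (h ▸ huY)
        rcases hHadj u t hstep.1 with h | ⟨h1, _⟩ | ⟨h1, _⟩
        · rcases hu with hur | hup
          · exact Or.inr (huniq r0 t pr hr0S hstep.2.2 hprS (hur ▸ h) hpradj)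
          · exact Or.inl (huniq pr t r0 hprS hstep.2.2 hr0S (hup ▸ h) hpradj.symm)
        · exact absurd h1 hua
        · exact absurd h1 hub
      have hYW : Y ⊆ ({r0, pr} : Set V) := by
        intro t ht
        exact (rch_closed hWcl ht.2 (Or.inl rfl)).1
      have h4 := mon_card hmY
      have h2 : Y.ncard ≤ 2 := le_trans (Set.ncard_le_ncard hYW (Set.toFinite _)) (ncard_pair_le r0 pr)
      omega
    · -- r0 has no neighbor at all : Y = {r0}
      have hWcl : ∀ u t, Rel H S u t → u ∈ ({r0} : Set V) → t ∈ ({r0} : Set V) := by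
        rintro u t hstep rfl
        have hua : u ≠ a0 := fun h => hab0Y.1 (h ▸ hr0Y)
        have hub : u ≠ b0 := fun h => hab0Y.2 (h ▸ hr0Y)
        rcases hHadj u t hstep.1 with h | ⟨h1, _⟩ | ⟨h1, _⟩
        · exact absurd ⟨t, hstep.2.2, h⟩ hex
        · exact absurd h1 hua
        · exact absurd h1 hub
      have hYW : Y ⊆ ({r0} : Set V) := fun t ht => (rch_closed hWcl ht.2 rfl).1
      have h4 := mon_card hmY
      have h1 : Y.ncard ≤ 1 := le_trans (Set.ncard_le_ncard hYW (Set.toFinite _)) (by simp)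
      omega


/-- Step B: no cutvertex -/
lemma emf_nocut {G : SimpleGraph V} {S : Set V} (hemf : EMF G S) (hcard : 4 ≤ S.ncard)
    (hA : ∀ v w, v ∈ S → w ∈ S → G.Adj v w → Conn G (S \ {v, w}))
    (hconnS : Conn G S) : ∀ v ∈ S, Conn G (S \ {v}) := by
  classical
  intro v hv
  by_contra hnc
  set T : Set V := S \ {v} with hT
  have hTcard : 3 ≤ T.ncard := by
    have h1 := ncard_sdiff_ge (S := S) (A := ({v} : Set V))
    have h2 : ({v} : Set V).ncard = 1 := Set.ncard_singleton v
    rw [hT]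
    omega
  have hTne : T.Nonempty := nonempty_of_ncard_ge (k := 3) (by omega) hTcard
  by_cases hbig : ∃ x ∈ T, ∃ y ∈ T, x ≠ y ∧ Rch G T x y
  · obtain ⟨x, hxT, y, hyT, hxy, hrch⟩ := hbig
    set C : Set V := comp G T x with hC
    have hyC : y ∈ C := ⟨hyT, hrch⟩
    have hxC : x ∈ C := mem_comp_self hxT
    have hatt : ∃ u ∈ C, G.Adj v u := by
      by_contra hcon
      push_neg at hcon
      refine split_not_conn (s := S) (A := C) (fun t ht => (comp_subset ht).1)
        ⟨x, hxC⟩ ⟨v, hv, fun hvC => (comp_subset hvC).2 rfl⟩ ?_ hconnS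
      rintro p q hstep hp
      by_cases hq : q = v
      · exact absurd (hq ▸ hstep.1.symm) (fun h => hcon p hp h)
      · exact comp_closed p q ⟨hstep.1, comp_subset hp, ⟨hstep.2.2, hq⟩⟩ hp
    obtain ⟨u, huC, hvu⟩ := hatt
    have huS : u ∈ S := (comp_subset huC).1
    have hCT : ∃ t ∈ T, t ∉ C := by
      by_contra hcon
      push_neg at hcon
      exact hnc ⟨hTne, fun a ha b hb => ((hcon a ha).2.symm).trans' (hcon b hb).2⟩
    obtain ⟨t0, ht0T, ht0C⟩ := hCT
    refine split_not_conn (s := S \ {v, u}) (A := C \ {u}) ?_ ?_ ?_ ?_ (hA v u hv huS hvu)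
    · intro z hz
      refine ⟨(comp_subset hz.1).1, ?_⟩
      rintro (rfl | rfl)
      · exact (comp_subset hz.1).2 rfl
      · exact hz.2 rfl
    · by_cases hxu : x = u
      · exact ⟨y, hyC, fun h => hxy (hxu.trans h.symm)⟩
      · exact ⟨x, hxC, hxu⟩
    · refine ⟨t0, ⟨⟨ht0T.1, ?_⟩, fun h => ht0C h.1⟩⟩
      rintro (rfl | rfl)
      · exact ht0T.2 rfl
      · exact ht0C huC
    · rintro p q hstep hp
      have hqT : q ∈ T := ⟨hstep.2.2.1, fun h => hstep.2.2.2 (Or.inl h)⟩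
      exact ⟨comp_closed p q ⟨hstep.1, comp_subset hp.1, hqT⟩ hp.1,
        fun h => hstep.2.2.2 (Or.inr h)⟩
  · push_neg at hbig
    have hstar : ∀ p ∈ T, ∀ q ∈ T, ¬ G.Adj p q := by
      intro p hp q hq hadj
      exact hbig p hp q hq hadj.ne (rch_single hadj hp hq)
    obtain ⟨u1, hu1, u2, hu2, hne12⟩ := two_distinct_of_ncard (by omega : 2 ≤ T.ncard)
    have hm := hemf.2 u1 u2 hu1.1 hu2.1 hne12 (hstar u1 hu1 u2 hu2)
    obtain ⟨f, hf1, hf2, hf3, hf4⟩ := hm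
    obtain ⟨iv, hiv⟩ : ∃ iv : Fin 4, ∀ i, i ≠ iv → v ∉ f i := by
      by_cases hex : ∃ i, v ∈ f i
      · obtain ⟨iv, hi⟩ := hex
        exact ⟨iv, fun i hne' hvi => Set.disjoint_left.1 (hf3 i iv hne') hvi hi⟩
      · push_neg at hex
        exact ⟨0, fun i _ => hex i⟩
    obtain ⟨i, j, k, hij, hik, hjk, hiiv, hjiv, hkiv⟩ :=
      (by decide : ∀ iv : Fin 4, ∃ i j k : Fin 4,
        i ≠ j ∧ i ≠ k ∧ j ≠ k ∧ i ≠ iv ∧ j ≠ iv ∧ k ≠ iv) iv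
    have hwit : ∀ p q, p ≠ v → q ≠ v → p ∈ S → q ∈ S → (pl G u1 u2).Adj p q →
        (p = u1 ∧ q = u2) ∨ (p = u2 ∧ q = u1) := by
      intro p q hpv hqv hpS hqS hadj
      rcases (pl_adj hne12).1 hadj with h | h
      · exact absurd h (hstar p ⟨hpS, hpv⟩ q ⟨hqS, hqv⟩)
      · exact h
    obtain ⟨a, ha, b, hb, hab⟩ := hf4 i j hij
    obtain ⟨c, hc, d, hd, hcd⟩ := hf4 i k hik
    have h1 := hwit a b (fun h => hiv i hiiv (h ▸ ha)) (fun h => hiv j hjiv (h ▸ hb))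
      (hf1 i ha) (hf1 j hb) hab
    have h2 := hwit c d (fun h => hiv i hiiv (h ▸ hc)) (fun h => hiv k hkiv (h ▸ hd))
      (hf1 i hc) (hf1 k hd) hcd
    rcases h1 with ⟨ha1, hb2⟩ | ⟨ha2, hb1⟩ <;> rcases h2 with ⟨hc1, hd2⟩ | ⟨hc2, hd1⟩
    · exact Set.disjoint_left.1 (hf3 j k hjk) (hb2 ▸ hb) (hd2 ▸ hd)
    · exact Set.disjoint_left.1 (hf3 i k hik) (ha1 ▸ ha) (hd1 ▸ hd)
    · exact Set.disjoint_left.1 (hf3 i j hij) (hc1 ▸ hc) (hb1 ▸ hb)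
    · exact Set.disjoint_left.1 (hf3 j k hjk) (hb1 ▸ hb) (hd1 ▸ hd)


/-- Step C: nonadjacent pairs do not separate either -/
lemma emf_nonadj_conn {G : SimpleGraph V} {S : Set V} (hemf : EMF G S) (hcard : 4 ≤ S.ncard)
    (hcut : ∀ v ∈ S, Conn G (S \ {v}))
    {x y : V} (hx : x ∈ S) (hy : y ∈ S) (hne : x ≠ y) (hnadj : ¬ G.Adj x y) :
    Conn G (S \ {x, y}) := by
  classical
  by_contra hnc
  set W : Set V := S \ {x, y} with hW
  have hWcard : 2 ≤ W.ncard := by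
    have h1 := ncard_sdiff_ge (S := S) (A := ({x, y} : Set V))
    have h2 := ncard_pair_le x y
    rw [hW]
    omega
  have hWne : W.Nonempty := nonempty_of_ncard_ge (k := 2) (by omega) hWcard
  obtain ⟨a₁, ha₁, b₁, hb₁, hsep⟩ := not_conn_split hWne hnc
  have hdisj : Disjoint (comp G W a₁) (comp G W b₁) := by
    rw [Set.disjoint_left]
    intro t hta htb
    exact hsep ⟨hb₁, (hta.2.trans' htb.2.symm).symm.symm⟩
  have hattach : ∀ c, c ∈ W →
      (∃ p ∈ comp G W c, G.Adj x p) ∧ (∃ q ∈ comp G W c, G.Adj y q) := by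
    intro c hc
    constructor
    · by_contra hcon
      push_neg at hcon
      refine split_not_conn (s := S \ {y}) (A := comp G W c) ?_
        ⟨c, mem_comp_self hc⟩ ?_ ?_ (hcut y hy)
      · intro t ht
        have := comp_subset ht
        exact ⟨this.1, fun h => this.2 (Or.inr h)⟩
      · refine ⟨x, ⟨hx, hne⟩, fun hxc => (comp_subset hxc).2 (Or.inl rfl)⟩
      · rintro p q hstep hp
        by_cases hqx : q = x
        · exact absurd (hqx ▸ hstep.1.symm) (fun h => hcon p hp h)
        · exact comp_closed p q ⟨hstep.1, comp_subset hp,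
            ⟨hstep.2.2.1, by rintro (rfl | rfl); exacts [hqx rfl, hstep.2.2.2 rfl]⟩⟩ hp
    · by_contra hcon
      push_neg at hcon
      refine split_not_conn (s := S \ {x}) (A := comp G W c) ?_
        ⟨c, mem_comp_self hc⟩ ?_ ?_ (hcut x hx)
      · intro t ht
        have := comp_subset ht
        exact ⟨this.1, fun h => this.2 (Or.inl h)⟩
      · refine ⟨y, ⟨hy, Ne.symm hne⟩, fun hyc => (comp_subset hyc).2 (Or.inr rfl)⟩
      · rintro p q hstep hp
        by_cases hqy : q = y
        · exact absurd (hqy ▸ hstep.1.symm) (fun h => hcon p hp h)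
        · exact comp_closed p q ⟨hstep.1, comp_subset hp,
            ⟨hstep.2.2.1, by rintro (rfl | rfl); exacts [hstep.2.2.2 rfl, hqy rfl]⟩⟩ hp
  have hm := hemf.2 x y hx hy hne hnadj
  have hpush := push (H := pl G x y) (s := S) (s1 := comp G W a₁ ∪ {x, y}) (s2 := S \ comp G W a₁)
      ((pl_adj hne).2 (Or.inr (Or.inl ⟨rfl, rfl⟩)))
      (Or.inr (Or.inl rfl)) (Or.inr (Or.inr rfl))
      ⟨hx, fun h => (comp_subset h).2 (Or.inl rfl)⟩
      ⟨hy, fun h => (comp_subset h).2 (Or.inr rfl)⟩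
      (fun z hz => by
        by_cases h : z ∈ comp G W a₁
        · exact Or.inl (Or.inl h)
        · exact Or.inr ⟨hz, h⟩)
      (fun z hz => by
        rcases hz.1 with h | h
        · exact absurd h hz.2.2
        · exact h)
      ?_ hm
  rotate_left
  · -- hcross
    intro p q hp hpx hpy hq hqx hqy hadj
    have hpK : p ∈ comp G W a₁ := by
      rcases hp with h | (h | h)
      · exact h
      · exact absurd h hpx
      · exact absurd h hpy
    have hqW : q ∈ W := ⟨hq.1, by rintro (rfl | rfl); exacts [hqx rfl, hqy rfl]⟩
    rcases (pl_adj hne).1 hadj with h | (⟨h1, _⟩ | ⟨h1, _⟩)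
    · exact hq.2 (comp_closed p q ⟨h, comp_subset hpK, hqW⟩ hpK)
    · exact hpx h1
    · exact hpy h1
  have hs1S : comp G W a₁ ∪ {x, y} ⊆ S := by
    rintro z (hz | (rfl | rfl))
    · exact (comp_subset hz).1
    · exact hx
    · exact hy
  rcases hpush with h1 | h2
  · obtain ⟨⟨p, hp, hxp⟩, ⟨q, hq, hyq⟩⟩ := hattach b₁ hb₁
    have hrep := mon_pl_replace hne h1 (comp_conn hb₁) ?_ ⟨p, hp, hxp⟩ ⟨q, hq, hyq⟩
    · refine hemf.1 (mon_mono_set ?_ hrep)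
      refine Set.union_subset hs1S (fun t ht => (comp_subset ht).1)
    · intro t ht
      rintro (htK | (rfl | rfl))
      · exact Set.disjoint_left.1 hdisj htK ht
      · exact (comp_subset ht).2 (Or.inl rfl)
      · exact (comp_subset ht).2 (Or.inr rfl)
  · obtain ⟨⟨p, hp, hxp⟩, ⟨q, hq, hyq⟩⟩ := hattach a₁ ha₁
    have hrep := mon_pl_replace hne h2 (comp_conn ha₁) ?_ ⟨p, hp, hxp⟩ ⟨q, hq, hyq⟩
    · refine hemf.1 (mon_mono_set ?_ hrep)
      exact Set.union_subset Set.diff_subset (fun t ht => (comp_subset ht).1)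
    · intro t ht hts2
      exact hts2.2 ht

/-- The structure theorem: an edge whose removal (with its endpoints) disconnects -/
theorem exists_sep_edge {G : SimpleGraph V} {S : Set V} (hemf : EMF G S) (hcard : 4 ≤ S.ncard) :
    ∃ v w, v ∈ S ∧ w ∈ S ∧ G.Adj v w ∧ ¬ Conn G (S \ {v, w}) := by
  by_contra hA'
  push_neg at hA'
  have hA : ∀ v w, v ∈ S → w ∈ S → G.Adj v w → Conn G (S \ {v, w}) := by
    intro v w hv hw hadj
    by_contra hnc
    exact hnc (hA' v w hv hw hadj)
  have hconnS := emf_conn hemf hcard hA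
  have hcut := emf_nocut hemf hcard hA hconnS
  have h3 : ∀ p q, p ∈ S → q ∈ S → p ≠ q → Conn G (S \ {p, q}) := by
    intro p q hp hq hpq
    by_cases hadj : G.Adj p q
    · exact hA p q hp hq hadj
    · exact emf_nonadj_conn hemf hcard hcut hp hq hpq hadj
  exact hemf.1 (conn3_mon S.ncard G S rfl hcard h3)

end Structure



section Split
variable [Fintype V]

lemma three_le_ncard {T : Set V} {a b c : V} (ha : a ∈ T) (hb : b ∈ T) (hc : c ∈ T)
    (hab : a ≠ b) (hac : a ≠ c) (hbc : b ≠ c) : 3 ≤ T.ncard := by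
  have hsub : ({a, b, c} : Set V) ⊆ T := by
    rintro z (rfl | rfl | rfl) <;> assumption
  have h3 : ({a, b, c} : Set V).ncard = 3 := by
    rw [Set.ncard_insert_of_notMem (by simp [hab, hac]) (Set.toFinite _),
      Set.ncard_insert_of_notMem (by simp [hbc]) (Set.toFinite _), Set.ncard_singleton]
  calc (3 : ℕ) = ({a, b, c} : Set V).ncard := h3.symm
    _ ≤ T.ncard := Set.ncard_le_ncard hsub (Set.toFinite T)

theorem split_pieces {G : SimpleGraph V} {S : Set V} (hemf : EMF G S) (hcard : 4 ≤ S.ncard) :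
    ∃ (v w : V) (S1 S2 : Set V),
      G.Adj v w ∧ v ∈ S1 ∧ w ∈ S1 ∧ v ∈ S2 ∧ w ∈ S2 ∧
      S1 ∪ S2 = S ∧ S1 ∩ S2 ⊆ {v, w} ∧
      EMF G S1 ∧ EMF G S2 ∧
      S1.ncard < S.ncard ∧ S2.ncard < S.ncard ∧ 3 ≤ S1.ncard ∧ 3 ≤ S2.ncard ∧
      (∀ t : Set V, G.IsClique t → t ⊆ S → t ⊆ S1 ∨ t ⊆ S2) := by
  classical
  obtain ⟨v, w, hv, hw, hvw, hnc⟩ := exists_sep_edge hemf hcard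
  set W : Set V := S \ {v, w} with hW
  have hWcard : 2 ≤ W.ncard := by
    have h1 := ncard_sdiff_ge (S := S) (A := ({v, w} : Set V))
    have h2 := ncard_pair_le v w
    rw [hW]; omega
  obtain ⟨a₁, ha₁, b₁, hb₁, hsep⟩ := not_conn_split
    (nonempty_of_ncard_ge (k := 2) (by omega) hWcard) hnc
  set K : Set V := comp G W a₁ with hK
  set L : Set V := W \ K with hL
  have hKW : K ⊆ W := comp_subset
  have hb₁L : b₁ ∈ L := ⟨hb₁, hsep⟩
  have ha₁K : a₁ ∈ K := mem_comp_self ha₁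
  have hKL : ∀ p ∈ K, ∀ q ∈ L, ¬ G.Adj p q := by
    intro p hp q hq hadj
    exact hq.2 (comp_closed p q ⟨hadj, hKW hp, hq.1⟩ hp)
  set S1 : Set V := K ∪ {v, w} with hS1
  set S2 : Set V := L ∪ {v, w} with hS2
  have hv1 : v ∈ S1 := Or.inr (Or.inl rfl)
  have hw1 : w ∈ S1 := Or.inr (Or.inr rfl)
  have hv2 : v ∈ S2 := Or.inr (Or.inl rfl)
  have hw2 : w ∈ S2 := Or.inr (Or.inr rfl)
  have hKvw : ∀ z ∈ K, z ≠ v ∧ z ≠ w := by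
    intro z hz
    have := (hKW hz).2
    exact ⟨fun h => this (Or.inl h), fun h => this (Or.inr h)⟩
  have hLvw : ∀ z ∈ L, z ≠ v ∧ z ≠ w := by
    intro z hz
    have := hz.1.2
    exact ⟨fun h => this (Or.inl h), fun h => this (Or.inr h)⟩
  have hS1S : S1 ⊆ S := by
    rintro z (hz | (rfl | rfl))
    exacts [(hKW hz).1, hv, hw]
  have hS2S : S2 ⊆ S := by
    rintro z (hz | (rfl | rfl))
    exacts [hz.1.1, hv, hw]
  have hunion : S1 ∪ S2 = S := by
    apply Set.Subset.antisymm
    · exact Set.union_subset hS1S hS2S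
    · intro z hz
      by_cases hzvw : z = v ∨ z = w
      · rcases hzvw with rfl | rfl
        exacts [Or.inl hv1, Or.inl hw1]
      · push_neg at hzvw
        have hzW : z ∈ W := ⟨hz, by rintro (rfl | rfl); exacts [hzvw.1 rfl, hzvw.2 rfl]⟩
        by_cases hzK : z ∈ K
        · exact Or.inl (Or.inl hzK)
        · exact Or.inr (Or.inl ⟨hzW, hzK⟩)
  have hcap : S1 ∩ S2 ⊆ {v, w} := by
    rintro z ⟨hz1 | hz1, hz2⟩
    · rcases hz2 with hz2 | hz2
      · exact absurd hz1 hz2.2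
      · exact hz2
    · exact hz1
  have hmemS1 : ∀ z, z ∈ S1 → z ≠ v → z ≠ w → z ∈ K := by
    rintro z (hz | (rfl | rfl)) hzv hzw
    · exact hz
    · exact absurd rfl hzv
    · exact absurd rfl hzw
  have hmemS2 : ∀ z, z ∈ S2 → z ≠ v → z ≠ w → z ∈ L := by
    rintro z (hz | (rfl | rfl)) hzv hzw
    · exact hz
    · exact absurd rfl hzv
    · exact absurd rfl hzw
  -- EMF for a side
  have hemfside : ∀ (A B KA KB : Set V), A ∪ B = S → A ∩ B ⊆ {v, w} →
      v ∈ A → w ∈ A → v ∈ B → w ∈ B →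
      (∀ p ∈ KA, ∀ q ∈ KB, ¬ G.Adj p q) →
      (∀ z, z ∈ A → z ≠ v → z ≠ w → z ∈ KA) → (∀ z, z ∈ B → z ≠ v → z ≠ w → z ∈ KB) →
      EMF G A := by
    intro A B KA KB hAB hABcap hvA hwA hvB hwB hnoedge hmA hmB
    have hAS : A ⊆ S := by
      intro z hz
      rw [← hAB]
      exact Or.inl hz
    constructor
    · exact fun h => hemf.1 (mon_mono_set hAS h)
    · intro p q hp hq hpq hnadj
      have hm := hemf.2 p q (hAS hp) (hAS hq) hpq hnadj
      have hcross : ∀ p' q', p' ∈ A → p' ≠ v → p' ≠ w → q' ∈ B → q' ≠ v → q' ≠ w →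
          ¬ (pl G p q).Adj p' q' := by
        intro p' q' hp' hpv hpw hq' hqv hqw hadj
        have hp'K := hmA p' hp' hpv hpw
        have hq'L := hmB q' hq' hqv hqw
        rcases (pl_adj hpq).1 hadj with h | (⟨h1, h2⟩ | ⟨h1, h2⟩)
        · exact hnoedge p' hp'K q' hq'L h
        · subst h1; subst h2
          exact hqv (by
            have : q' ∈ A ∩ B := ⟨hq, hq'⟩
            rcases hABcap this with h | h
            · exact h
            · exact absurd h hqw)
        · subst h1; subst h2
          exact hqv (by
            have : q' ∈ A ∩ B := ⟨hp, hq'⟩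
            rcases hABcap this with h | h
            · exact h
            · exact absurd h hqw)
      have hpl : (pl G p q).Adj v w := le_pl hvw
      rcases push hpl hvA hwA hvB hwB (le_of_eq hAB.symm) hABcap hcross hm with h | h
      · exact h
      · exfalso
        have hpqB : ¬ (p ∈ B ∧ q ∈ B) := by
          rintro ⟨hpB, hqB⟩
          have hpvw := hABcap ⟨hp, hpB⟩
          have hqvw := hABcap ⟨hq, hqB⟩
          have : G.Adj p q := by
            rcases hpvw with rfl | rfl <;> rcases hqvw with rfl | rfl
            · exact absurd rfl hpq
            · exact hvw
            · exact hvw.symm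
            · exact absurd rfl hpq
          exact hnadj this
        have : MOn G B := mon_pl_unused hpq (by tauto) h
        exact hemf.1 (mon_mono_set (by rw [← hAB]; exact Set.subset_union_right) this)
  have hemf1 : EMF G S1 :=
    hemfside S1 S2 K L hunion hcap hv1 hw1 hv2 hw2 hKL hmemS1 hmemS2
  have hemf2 : EMF G S2 :=
    hemfside S2 S1 L K (by rw [Set.union_comm]; exact hunion)
      (by rw [Set.inter_comm]; exact hcap) hv2 hw2 hv1 hw1
      (fun p hp q hq hadj => hKL q hq p hp hadj.symm) hmemS2 hmemS1
  -- cardinalities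
  have hb₁S1 : b₁ ∉ S1 := by
    rintro (h | (h | h))
    · exact hb₁L.2 h
    · exact (hLvw b₁ hb₁L).1 h
    · exact (hLvw b₁ hb₁L).2 h
  have ha₁S2 : a₁ ∉ S2 := by
    rintro (h | (h | h))
    · exact h.2 ha₁K
    · exact (hKvw a₁ ha₁K).1 h
    · exact (hKvw a₁ ha₁K).2 h
  have hcard1 : S1.ncard < S.ncard := by
    refine Set.ncard_lt_ncard ⟨hS1S, fun h => hb₁S1 (h (hS2S (Or.inl hb₁L)))⟩ (Set.toFinite S)
  have hcard2 : S2.ncard < S.ncard := by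
    refine Set.ncard_lt_ncard ⟨hS2S, fun h => ha₁S2 (h (hS1S (Or.inl ha₁K)))⟩ (Set.toFinite S)
  have hvwne : v ≠ w := hvw.ne
  have h3a : 3 ≤ S1.ncard :=
    three_le_ncard (Or.inl ha₁K) hv1 hw1 (hKvw a₁ ha₁K).1 (hKvw a₁ ha₁K).2 hvwne
  have h3b : 3 ≤ S2.ncard :=
    three_le_ncard (Or.inl hb₁L) hv2 hw2 (hLvw b₁ hb₁L).1 (hLvw b₁ hb₁L).2 hvwne
  -- cliques split
  have hclq : ∀ t : Set V, G.IsClique t → t ⊆ S → t ⊆ S1 ∨ t ⊆ S2 := by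
    intro t hclique htS
    by_cases hK' : ∃ z ∈ t, z ∈ K
    · left
      obtain ⟨z, hzt, hzK⟩ := hK'
      intro u hut
      by_cases huvw : u = v ∨ u = w
      · rcases huvw with rfl | rfl
        exacts [hv1, hw1]
      · push_neg at huvw
        have huW : u ∈ W := ⟨htS hut, by rintro (rfl | rfl); exacts [huvw.1 rfl, huvw.2 rfl]⟩
        by_cases huK : u ∈ K
        · exact Or.inl huK
        · exfalso
          have huL : u ∈ L := ⟨huW, huK⟩
          have hzu : z ≠ u := fun h => huK (h ▸ hzK)
          exact hKL z hzK u huL (hclique hzt hut hzu)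
    · right
      push_neg at hK'
      intro u hut
      by_cases huvw : u = v ∨ u = w
      · rcases huvw with rfl | rfl
        exacts [hv2, hw2]
      · push_neg at huvw
        have huW : u ∈ W := ⟨htS hut, by rintro (rfl | rfl); exacts [huvw.1 rfl, huvw.2 rfl]⟩
        exact Or.inl ⟨huW, hK' u hut⟩
  exact ⟨v, w, S1, S2, hvw, hv1, hw1, hv2, hw2, hunion, hcap, hemf1, hemf2,
    hcard1, hcard2, h3a, h3b, hclq⟩


lemma clique_pair {G : SimpleGraph V} {x y : V} (hxy : G.Adj x y) :
    G.IsClique ({x, y} : Set V) := by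
  rintro p (rfl | rfl) q (rfl | rfl) hpq
  · exact absurd rfl hpq
  · exact hxy
  · exact hxy.symm
  · exact absurd rfl hpq

lemma clique_triple {G : SimpleGraph V} {x y z : V} (hxy : G.Adj x y) (hxz : G.Adj x z)
    (hyz : G.Adj y z) : G.IsClique ({x, y, z} : Set V) := by
  rintro p (rfl | rfl | rfl) q (rfl | rfl | rfl) hpq <;>
    first
      | exact absurd rfl hpq
      | exact hxy | exact hxy.symm | exact hxz | exact hxz.symm | exact hyz | exact hyz.symm

lemma emf_complete_small {G : SimpleGraph V} {S : Set V} (hemf : EMF G S)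
    (hn : S.ncard ≤ 3) : ∀ p q, p ∈ S → q ∈ S → p ≠ q → G.Adj p q := by
  intro p q hp hq hpq
  by_contra hnadj
  have := mon_card (hemf.2 p q hp hq hpq hnadj)
  omega

theorem emf_triangle : ∀ n : ℕ, ∀ (G : SimpleGraph V) (S : Set V), S.ncard = n → EMF G S →
    3 ≤ S.ncard → ∀ x y, x ∈ S → y ∈ S → G.Adj x y →
    ∃ z ∈ S, G.Adj x z ∧ G.Adj y z := by
  intro n
  induction n using Nat.strong_induction_on with
  | _ n IH =>
  intro G S hcard hemf h3 x y hx hy hxy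
  by_cases h4 : 4 ≤ S.ncard
  · obtain ⟨v, w, S1, S2, hvw, hv1, hw1, hv2, hw2, hunion, hcap, hemf1, hemf2,
      hcard1, hcard2, h3a, h3b, hclq⟩ := split_pieces hemf h4
    have hS1S : S1 ⊆ S := by rw [← hunion]; exact Set.subset_union_left
    have hS2S : S2 ⊆ S := by rw [← hunion]; exact Set.subset_union_right
    have hpair : ({x, y} : Set V) ⊆ S := by rintro z (rfl | rfl) <;> assumption
    rcases hclq {x, y} (clique_pair hxy) hpair with h | h
    · obtain ⟨z, hz, h1, h2⟩ := IH S1.ncard (hcard ▸ hcard1) G S1 rfl hemf1 h3a x y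
        (h (Or.inl rfl)) (h (Or.inr rfl)) hxy
      exact ⟨z, hS1S hz, h1, h2⟩
    · obtain ⟨z, hz, h1, h2⟩ := IH S2.ncard (hcard ▸ hcard2) G S2 rfl hemf2 h3b x y
        (h (Or.inl rfl)) (h (Or.inr rfl)) hxy
      exact ⟨z, hS2S hz, h1, h2⟩
  · have h1 : 1 ≤ (S \ {x, y}).ncard := by
      have := ncard_sdiff_ge (S := S) (A := ({x, y} : Set V))
      have := ncard_pair_le x y
      omega
    obtain ⟨z, hz⟩ := nonempty_of_ncard_ge (k := 1) le_rfl h1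
    have hzx : z ≠ x := fun h => hz.2 (Or.inl h)
    have hzy : z ≠ y := fun h => hz.2 (Or.inr h)
    exact ⟨z, hz.1, emf_complete_small hemf (by omega) x z hx hz.1 hzx.symm,
      emf_complete_small hemf (by omega) y z hy hz.1 hzy.symm⟩

/-- color swap -/
def csw : Fin 2 → Fin 2 := fun i => if i = 0 then 1 else 0

lemma csw_of_ne : ∀ a b : Fin 2, a ≠ b → csw a = b := by decide
lemma csw_ne : ∀ a b : Fin 2, a ≠ b → csw a ≠ csw b := by decide
lemma fin2_forced : ∀ a b a' b' : Fin 2, a ≠ b → a' ≠ b' → a = a' → b = b' := by decide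

lemma good_swap {G : SimpleGraph V} {s : Set V} {c : V → Fin 2} (h : GoodOn G s c) :
    GoodOn G s (fun u => csw (c u)) := by
  intro t hmax hnt
  obtain ⟨u, hu, w, hw, hne⟩ := h t hmax hnt
  exact ⟨u, hu, w, hw, csw_ne _ _ hne⟩

lemma glue {G : SimpleGraph V} {S S1 S2 : Set V} {v w : V}
    (hunion : S1 ∪ S2 = S) (hvw : G.Adj v w)
    (hv1 : v ∈ S1) (hw1 : w ∈ S1) (hv2 : v ∈ S2) (hw2 : w ∈ S2)
    (hcap : S1 ∩ S2 ⊆ {v, w})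
    (hclq : ∀ t : Set V, G.IsClique t → t ⊆ S → t ⊆ S1 ∨ t ⊆ S2)
    (c1 : V → Fin 2) (hc1 : GoodOn G S1 c1)
    (hIHa : ∀ x y, x ∈ S2 → y ∈ S2 → G.Adj x y → ∃ c, GoodOn G S2 c ∧ c x ≠ c y)
    (hIHm : ∀ x y z, x ∈ S2 → y ∈ S2 → z ∈ S2 → G.Adj x y → G.Adj x z → G.Adj y z →
        ∃ c, GoodOn G S2 c ∧ c x = c y)
    (htri : ∃ z ∈ S2, G.Adj v z ∧ G.Adj w z) :
    ∃ c : V → Fin 2, GoodOn G S c ∧ ∀ u ∈ S1, c u = c1 u := by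
  classical
  have hS1S : S1 ⊆ S := by rw [← hunion]; exact Set.subset_union_left
  have hS2S : S2 ⊆ S := by rw [← hunion]; exact Set.subset_union_right
  obtain ⟨c2', hc2', hv2', hw2'⟩ :
      ∃ c2', GoodOn G S2 c2' ∧ c2' v = c1 v ∧ c2' w = c1 w := by
    by_cases h : c1 v = c1 w
    · obtain ⟨z, hz, hvz, hwz⟩ := htri
      obtain ⟨c2, hc2, heq⟩ := hIHm v w z hv2 hw2 hz hvw hvz hwz
      by_cases hvv : c2 v = c1 v
      · exact ⟨c2, hc2, hvv, by rw [← heq, hvv, h]⟩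
      · refine ⟨fun u => csw (c2 u), good_swap hc2, csw_of_ne _ _ hvv, ?_⟩
        show csw (c2 w) = c1 w
        rw [← heq, csw_of_ne _ _ hvv, h]
    · obtain ⟨c2, hc2, hne2⟩ := hIHa v w hv2 hw2 hvw
      by_cases hvv : c2 v = c1 v
      · exact ⟨c2, hc2, hvv, fin2_forced _ _ _ _ hne2 h hvv⟩
      · refine ⟨fun u => csw (c2 u), good_swap hc2, csw_of_ne _ _ hvv, ?_⟩
        exact fin2_forced _ _ _ _ (csw_ne _ _ hne2) h (csw_of_ne _ _ hvv)
  set c : V → Fin 2 := fun u => if u ∈ S1 then c1 u else c2' u with hc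
  have hag1 : ∀ u ∈ S1, c u = c1 u := by
    intro u hu
    simp only [hc, if_pos hu]
  have hag2 : ∀ u ∈ S2, c u = c2' u := by
    intro u hu
    by_cases h1 : u ∈ S1
    · rcases hcap ⟨h1, hu⟩ with rfl | rfl
      · rw [hag1 u h1, ← hv2']
      · rw [hag1 u h1, ← hw2']
    · simp only [hc, if_neg h1]
  refine ⟨c, ?_, hag1⟩
  intro t hmax hnt
  rcases hclq t hmax.2.1 hmax.1 with hside | hside
  · have hmax1 : MaxCliqueOn G S1 t :=
      ⟨hside, hmax.2.1, fun t' ht's ht'c htt' => hmax.2.2 t' (ht's.trans hS1S) ht'c htt'⟩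
    obtain ⟨u, hu, w', hw', hne⟩ := hc1 t hmax1 hnt
    exact ⟨u, hu, w', hw', by rw [hag1 u (hside hu), hag1 w' (hside hw')]; exact hne⟩
  · have hmax2 : MaxCliqueOn G S2 t :=
      ⟨hside, hmax.2.1, fun t' ht's ht'c htt' => hmax.2.2 t' (ht's.trans hS2S) ht'c htt'⟩
    obtain ⟨u, hu, w', hw', hne⟩ := hc2' t hmax2 hnt
    exact ⟨u, hu, w', hw', by rw [hag2 u (hside hu), hag2 w' (hside hw')]; exact hne⟩

theorem emf_color : ∀ n : ℕ, ∀ (G : SimpleGraph V) (S : Set V), S.ncard = n → EMF G S →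
    (∀ x y, x ∈ S → y ∈ S → G.Adj x y → ∃ c : V → Fin 2, GoodOn G S c ∧ c x ≠ c y) ∧
    (∀ x y z, x ∈ S → y ∈ S → z ∈ S → G.Adj x y → G.Adj x z → G.Adj y z →
      ∃ c : V → Fin 2, GoodOn G S c ∧ c x = c y) := by
  classical
  intro n
  induction n using Nat.strong_induction_on with
  | _ n IH =>
  intro G S hcard hemf
  by_cases h4 : 4 ≤ S.ncard
  · obtain ⟨v, w, S1, S2, hvw, hv1, hw1, hv2, hw2, hunion, hcap, hemf1, hemf2,
      hcard1, hcard2, h3a, h3b, hclq⟩ := split_pieces hemf h4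
    have hIH1 := IH S1.ncard (hcard ▸ hcard1) G S1 rfl hemf1
    have hIH2 := IH S2.ncard (hcard ▸ hcard2) G S2 rfl hemf2
    have htri1 : ∃ z ∈ S1, G.Adj v z ∧ G.Adj w z :=
      emf_triangle S1.ncard G S1 rfl hemf1 h3a v w hv1 hw1 hvw
    have htri2 : ∃ z ∈ S2, G.Adj v z ∧ G.Adj w z :=
      emf_triangle S2.ncard G S2 rfl hemf2 h3b v w hv2 hw2 hvw
    have hclq' : ∀ t : Set V, G.IsClique t → t ⊆ S → t ⊆ S2 ∨ t ⊆ S1 :=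
      fun t h1 h2 => (hclq t h1 h2).symm
    have hunion' : S2 ∪ S1 = S := by rw [Set.union_comm]; exact hunion
    have hcap' : S2 ∩ S1 ⊆ {v, w} := by rw [Set.inter_comm]; exact hcap
    constructor
    · intro x y hx hy hxy
      have hpair : ({x, y} : Set V) ⊆ S := by rintro z (rfl | rfl) <;> assumption
      rcases hclq {x, y} (clique_pair hxy) hpair with h | h
      · obtain ⟨c1, hc1, hne1⟩ := hIH1.1 x y (h (Or.inl rfl)) (h (Or.inr rfl)) hxy
        obtain ⟨c, hcg, hag⟩ := glue hunion hvw hv1 hw1 hv2 hw2 hcap hclq c1 hc1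
          hIH2.1 hIH2.2 htri2
        exact ⟨c, hcg, by rw [hag x (h (Or.inl rfl)), hag y (h (Or.inr rfl))]; exact hne1⟩
      · obtain ⟨c1, hc1, hne1⟩ := hIH2.1 x y (h (Or.inl rfl)) (h (Or.inr rfl)) hxy
        obtain ⟨c, hcg, hag⟩ := glue hunion' hvw hv2 hw2 hv1 hw1 hcap' hclq' c1 hc1
          hIH1.1 hIH1.2 htri1
        exact ⟨c, hcg, by rw [hag x (h (Or.inl rfl)), hag y (h (Or.inr rfl))]; exact hne1⟩
    · intro x y z hx hy hz hxy hxz hyz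
      have htrip : ({x, y, z} : Set V) ⊆ S := by rintro u (rfl | rfl | rfl) <;> assumption
      rcases hclq {x, y, z} (clique_triple hxy hxz hyz) htrip with h | h
      · obtain ⟨c1, hc1, heq1⟩ := hIH1.2 x y z (h (Or.inl rfl)) (h (Or.inr (Or.inl rfl)))
          (h (Or.inr (Or.inr rfl))) hxy hxz hyz
        obtain ⟨c, hcg, hag⟩ := glue hunion hvw hv1 hw1 hv2 hw2 hcap hclq c1 hc1
          hIH2.1 hIH2.2 htri2
        exact ⟨c, hcg, by rw [hag x (h (Or.inl rfl)), hag y (h (Or.inr (Or.inl rfl)))]; exact heq1⟩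
      · obtain ⟨c1, hc1, heq1⟩ := hIH2.2 x y z (h (Or.inl rfl)) (h (Or.inr (Or.inl rfl)))
          (h (Or.inr (Or.inr rfl))) hxy hxz hyz
        obtain ⟨c, hcg, hag⟩ := glue hunion' hvw hv2 hw2 hv1 hw1 hcap' hclq' c1 hc1
          hIH1.1 hIH1.2 htri1
        exact ⟨c, hcg, by rw [hag x (h (Or.inl rfl)), hag y (h (Or.inr (Or.inl rfl)))]; exact heq1⟩
  · -- small case : S is complete
    push_neg at h4
    have hcomp := emf_complete_small hemf (by omega)
    have hSclq : G.IsClique S := fun p hp q hq hpq => hcomp p q hp hq hpq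
    have hmaxS : ∀ t : Set V, MaxCliqueOn G S t → t.Nontrivial → t = S := by
      intro t hmax _
      exact (hmax.2.2 S subset_rfl hSclq hmax.1).symm
    constructor
    · intro x y hx hy hxy
      refine ⟨fun u => if u = x then 0 else 1, ?_, ?_⟩
      · intro t hmax hnt
        have ht := hmaxS t hmax hnt
        refine ⟨x, ht ▸ hx, y, ht ▸ hy, ?_⟩
        show (if x = x then (0 : Fin 2) else 1) ≠ (if y = x then (0 : Fin 2) else 1)
        rw [if_pos rfl, if_neg hxy.ne']
        decide
      · show (if x = x then (0 : Fin 2) else 1) ≠ (if y = x then (0 : Fin 2) else 1)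
        rw [if_pos rfl, if_neg hxy.ne']
        decide
    · intro x y z hx hy hz hxy hxz hyz
      refine ⟨fun u => if u = z then 1 else 0, ?_, ?_⟩
      · intro t hmax hnt
        have ht := hmaxS t hmax hnt
        refine ⟨x, ht ▸ hx, z, ht ▸ hz, ?_⟩
        show (if x = z then (1 : Fin 2) else 0) ≠ (if z = z then (1 : Fin 2) else 0)
        rw [if_pos rfl, if_neg hxz.ne]
        decide
      · show (if x = z then (1 : Fin 2) else 0) = (if y = z then (1 : Fin 2) else 0)
        rw [if_neg hxz.ne, if_neg hyz.ne]

end Split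


end K4Work

open K4Work in
/-- Every edge-maximal `K₄`-minor-free graph is 2-clique-colorable. -/
theorem edge_maximal_K4_minor_free_two_clique_colorable {V : Type*} [Fintype V]
    (G : SimpleGraph V) (h : G.EdgeMaximalMinorFree (⊤ : SimpleGraph (Fin 4))) :
    G.CliqueColorable 2 := by
  classical
  have hemf : EMF G Set.univ := by
    constructor
    · exact fun hm => h.1 (mon_univ_iff.1 hm)
    · intro u v _ _ huv hnadj
      exact mon_univ_iff.2 (h.2 u v huv hnadj)
  by_cases hedge : ∃ x y : V, G.Adj x y
  · obtain ⟨x, y, hxy⟩ := hedge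
    obtain ⟨c, hc, -⟩ := (emf_color (Set.ncard (Set.univ : Set V)) G Set.univ rfl hemf).1 x y
      (Set.mem_univ x) (Set.mem_univ y) hxy
    refine ⟨c, ?_⟩
    intro s hmax hnt
    refine hc s ?_ hnt
    exact ⟨Set.subset_univ s, hmax.1, fun t' _ ht'c htt' => (hmax.2 t' ht'c htt').symm⟩
  · push_neg at hedge
    refine ⟨fun _ => 0, ?_⟩
    intro s hmax hnt
    obtain ⟨u, hu, w, hw, huw⟩ := hnt
    exact absurd (hmax.1 hu hw huw) (hedge u w)
end

section
/- Let G be a K_5-minor-free graph with at least one edge such that every edge of G is contained in some triangle of G. Then G has a 3-clique-coloring in which, moreover, no triangle of G is monochromatic. -/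
open SimpleGraph

section Aux
open Finset
universe u v'
variable {V : Type u}

lemma connected_induce_singleton (G : SimpleGraph V) (a : V) :
    (G.induce {a}).Connected := by
  rw [connected_iff]
  exact ⟨fun u v => (Subsingleton.elim u v) ▸ Reachable.refl u, ⟨⟨a, rfl⟩⟩⟩

noncomputable def induceInduceIso (G : SimpleGraph V) (s : Set V) (t : Set s) :
    (G.induce s).induce t ≃g G.induce (Subtype.val '' t) where
  toEquiv := Equiv.Set.image Subtype.val t Subtype.val_injective
  map_rel_iff' := by
    rintro ⟨⟨a, ha⟩, hat⟩ ⟨⟨b, hb⟩, hbt⟩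
    simp [Equiv.Set.image, Equiv.Set.imageOfInjOn]

lemma connected_induce_image {G : SimpleGraph V} {s : Set V} {t : Set s}
    (h : ((G.induce s).induce t).Connected) :
    (G.induce (Subtype.val '' t)).Connected :=
  (induceInduceIso G s t).connected_iff.mp h

lemma hasMinor_mono {W : Type v'} {G G' : SimpleGraph V} {H : SimpleGraph W}
    (hle : G ≤ G') (h : G.HasMinor H) : G'.HasMinor H := by
  obtain ⟨f, h1, h2, h3, h4⟩ := h
  refine ⟨f, h1, fun w => (h2 w).mono ?_, h3, fun w₁ w₂ hadj => ?_⟩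
  · intro a b hab; exact hle hab
  · obtain ⟨a, ha, b, hb, hab⟩ := h4 w₁ w₂ hadj
    exact ⟨a, ha, b, hb, hle hab⟩

lemma hasMinor_of_induce {W : Type v'} {G : SimpleGraph V} {s : Set V} {H : SimpleGraph W}
    (h : (G.induce s).HasMinor H) : G.HasMinor H := by
  obtain ⟨f, h1, h2, h3, h4⟩ := h
  refine ⟨fun w => Subtype.val '' f w, fun w => (h1 w).image _,
    fun w => connected_induce_image (h2 w),
    fun w₁ w₂ hne => (Set.disjoint_image_iff Subtype.val_injective).mpr (h3 w₁ w₂ hne),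
    fun w₁ w₂ hadj => ?_⟩
  obtain ⟨a, ha, b, hb, hab⟩ := h4 w₁ w₂ hadj
  exact ⟨a.1, ⟨a, ha, rfl⟩, b.1, ⟨b, hb, rfl⟩, hab⟩

lemma hasMinor_top_of_clique {G : SimpleGraph V} {n : ℕ} (s : Finset V) (hcard : s.card = n)
    (hclq : ∀ a ∈ s, ∀ b ∈ s, a ≠ b → G.Adj a b) :
    G.HasMinor (⊤ : SimpleGraph (Fin n)) := by
  have e : Fin n ≃ ↥s := (s.equivFin.trans (finCongr hcard)).symm
  refine ⟨fun i => {(e i).1}, fun i => ⟨(e i).1, rfl⟩,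
    fun i => connected_induce_singleton G _, fun i j hne => ?_, fun i j hadj => ?_⟩
  · simp only [Set.disjoint_singleton]
    intro hh
    exact hne (e.injective (Subtype.ext hh))
  · refine ⟨(e i).1, rfl, (e j).1, rfl, hclq _ (e i).2 _ (e j).2 ?_⟩
    intro hh
    exact hadj.ne (e.injective (Subtype.ext hh))


/-- cone: K_n minor inside the neighborhood of `v` extends to a K_{n+1} minor. -/
lemma hasMinor_succ_of_nbhd {G : SimpleGraph V} {v : V} {s : Set V} {n : ℕ}
    (hs : ∀ u ∈ s, G.Adj v u)
    (h : (G.induce s).HasMinor (⊤ : SimpleGraph (Fin n))) :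
    G.HasMinor (⊤ : SimpleGraph (Fin (n + 1))) := by
  obtain ⟨f, h1, h2, h3, h4⟩ := h
  have hvs : v ∉ s := fun hv => G.loopless.irrefl v (hs v hv)
  refine ⟨fun i => if hi : i.1 < n then Subtype.val '' f ⟨i.1, hi⟩ else {v},
    fun i => ?_, fun i => ?_, fun i j hne => ?_, fun i j hadj => ?_⟩
  · dsimp only
    by_cases hi : i.1 < n
    · rw [dif_pos hi]; exact (h1 ⟨i.1, hi⟩).image _
    · rw [dif_neg hi]; exact ⟨v, rfl⟩
  · dsimp only
    by_cases hi : i.1 < n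
    · rw [dif_pos hi]; exact connected_induce_image (h2 ⟨i.1, hi⟩)
    · rw [dif_neg hi]; exact connected_induce_singleton G v
  · dsimp only
    by_cases hi : i.1 < n <;> by_cases hj : j.1 < n
    · rw [dif_pos hi, dif_pos hj]
      refine (Set.disjoint_image_iff Subtype.val_injective).mpr (h3 _ _ ?_)
      intro hh; exact hne (Fin.ext (by simpa using congrArg Fin.val hh))
    · rw [dif_pos hi, dif_neg hj]
      simp only [Set.disjoint_singleton_right]
      rintro ⟨a, _, rfl⟩; exact hvs a.2
    · rw [dif_neg hi, dif_pos hj]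
      simp only [Set.disjoint_singleton_left]
      rintro ⟨a, _, rfl⟩; exact hvs a.2
    · exact absurd (Fin.ext (by omega)) hne
  · dsimp only
    have hij : i ≠ j := hadj.ne
    by_cases hi : i.1 < n <;> by_cases hj : j.1 < n
    · rw [dif_pos hi, dif_pos hj]
      have hne2 : (⟨i.1, hi⟩ : Fin n) ≠ ⟨j.1, hj⟩ := by
        intro hh; exact hij (Fin.ext (by simpa using congrArg Fin.val hh))
      obtain ⟨a, ha, b, hb, hab⟩ := h4 _ _ ((top_adj _ _).mpr hne2)
      exact ⟨a.1, ⟨a, ha, rfl⟩, b.1, ⟨b, hb, rfl⟩, hab⟩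
    · rw [dif_pos hi, dif_neg hj]
      obtain ⟨a, ha⟩ := h1 ⟨i.1, hi⟩
      exact ⟨a.1, ⟨a, ha, rfl⟩, v, rfl, (hs a.1 a.2).symm⟩
    · rw [dif_neg hi, dif_pos hj]
      obtain ⟨a, ha⟩ := h1 ⟨j.1, hj⟩
      exact ⟨v, rfl, a.1, ⟨a, ha, rfl⟩, hs a.1 a.2⟩
    · exact absurd (Fin.ext (by omega)) hij

section Contract
variable {W : Type v'}

/-- the graph obtained by contracting the edge `xy` onto `x` (vertex set: all but `y`). -/
def contr (G : SimpleGraph V) (x y : V) : SimpleGraph {v : V // v ≠ y} where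
  Adj a b := a ≠ b ∧ (G.Adj a.1 b.1 ∨ (a.1 = x ∧ G.Adj y b.1) ∨ (b.1 = x ∧ G.Adj y a.1))
  symm := by
    constructor
    rintro a b ⟨hne, h⟩
    exact ⟨hne.symm, by tauto⟩
  loopless := ⟨fun a h => h.1 rfl⟩

/-- the branch set in `G` corresponding to a branch set of the contraction. -/
def contrSet (x y : V) (f : Set {v : V // v ≠ y}) : Set V :=
  Subtype.val '' f ∪ {v | v = y ∧ ∃ hx : x ≠ y, (⟨x, hx⟩ : {v : V // v ≠ y}) ∈ f}

lemma mem_contrSet_val {x y : V} {f : Set {v : V // v ≠ y}} {a : {v : V // v ≠ y}} (ha : a ∈ f) :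
    a.1 ∈ contrSet x y f := Or.inl ⟨a, ha, rfl⟩

lemma reach_contr {G : SimpleGraph V} {x y : V} {f : Set {v : V // v ≠ y}}
    (A B : ↥f) (hxy : G.Adj x y)
    (hr : ((contr G x y).induce f).Reachable A B) :
    (G.induce (contrSet x y f)).Reachable ⟨A.1.1, mem_contrSet_val A.2⟩
      ⟨B.1.1, mem_contrSet_val B.2⟩ := by
  obtain ⟨w⟩ := hr
  induction w with
  | nil => exact Reachable.refl _
  | @cons u c d hadj p ih =>
    refine Reachable.trans ?_ ih
    obtain ⟨hne, hcase⟩ := hadj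
    have hyne : x ≠ y := hxy.ne
    rcases hcase with hG | ⟨hux, hyc⟩ | ⟨hcx, hyu⟩
    · exact (Adj.reachable (by exact hG : (G.induce (contrSet x y f)).Adj
        ⟨u.1.1, mem_contrSet_val u.2⟩ ⟨c.1.1, mem_contrSet_val c.2⟩))
    · have hyf : y ∈ contrSet x y f := Or.inr ⟨rfl, hyne, by
        have : u.1 = (⟨x, hyne⟩ : {v : V // v ≠ y}) := Subtype.ext hux
        exact this ▸ u.2⟩
      have r1 : (G.induce (contrSet x y f)).Adj ⟨u.1.1, mem_contrSet_val u.2⟩ ⟨y, hyf⟩ := by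
        exact hux ▸ hxy
      have r2 : (G.induce (contrSet x y f)).Adj ⟨y, hyf⟩ ⟨c.1.1, mem_contrSet_val c.2⟩ := by
        exact hyc
      exact (r1.reachable).trans r2.reachable
    · have hyf : y ∈ contrSet x y f := Or.inr ⟨rfl, hyne, by
        have : c.1 = (⟨x, hyne⟩ : {v : V // v ≠ y}) := Subtype.ext hcx
        exact this ▸ c.2⟩
      have r1 : (G.induce (contrSet x y f)).Adj ⟨u.1.1, mem_contrSet_val u.2⟩ ⟨y, hyf⟩ := by
        exact hyu.symm
      have r2 : (G.induce (contrSet x y f)).Adj ⟨y, hyf⟩ ⟨c.1.1, mem_contrSet_val c.2⟩ := by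
        exact hcx ▸ hxy.symm
      exact (r1.reachable).trans r2.reachable

lemma connected_contrSet {G : SimpleGraph V} {x y : V} {f : Set {v : V // v ≠ y}}
    (hxy : G.Adj x y)
    (hne : f.Nonempty) (hconn : ((contr G x y).induce f).Connected) :
    (G.induce (contrSet x y f)).Connected := by
  rw [connected_iff]
  obtain ⟨a, ha⟩ := hne
  refine ⟨?_, ⟨⟨a.1, mem_contrSet_val ha⟩⟩⟩
  have key : ∀ v : V, ∀ hv : v ∈ contrSet x y f,
      (G.induce (contrSet x y f)).Reachable ⟨v, hv⟩ ⟨a.1, mem_contrSet_val ha⟩ := by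
    intro v hv
    rcases hv with ⟨b, hb, rfl⟩ | ⟨hvy, hxney, hxf⟩
    · exact reach_contr ⟨b, hb⟩ ⟨a, ha⟩ hxy (hconn.preconnected _ _)
    · subst hvy
      have hyf : v ∈ contrSet x v f := Or.inr ⟨rfl, hxney, hxf⟩
      have step : (G.induce (contrSet x v f)).Adj ⟨v, hyf⟩
          ⟨x, mem_contrSet_val (a := ⟨x, hxney⟩) hxf⟩ := by exact hxy.symm
      exact step.reachable.trans
        (reach_contr ⟨⟨x, hxney⟩, hxf⟩ ⟨a, ha⟩ hxy (hconn.preconnected _ _))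
  intro u v
  exact (key u.1 u.2).trans (key v.1 v.2).symm

lemma hasMinor_of_contr {G : SimpleGraph V} {x y : V} {H : SimpleGraph W} (hxy : G.Adj x y)
    (h : (contr G x y).HasMinor H) : G.HasMinor H := by
  obtain ⟨f, h1, h2, h3, h4⟩ := h
  refine ⟨fun w => contrSet x y (f w), fun w => ?_,
    fun w => connected_contrSet hxy (h1 w) (h2 w),
    fun w₁ w₂ hne => ?_, fun w₁ w₂ hadj => ?_⟩
  · obtain ⟨a, ha⟩ := h1 w
    exact ⟨a.1, mem_contrSet_val ha⟩
  · rw [Set.disjoint_left]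
    rintro v (⟨a, ha, rfl⟩ | ⟨hvy, hxney, hxf⟩)
    · rintro (⟨b, hb, hba⟩ | ⟨hvy, _, _⟩)
      · exact Set.disjoint_left.mp (h3 w₁ w₂ hne) ha (Subtype.ext hba.symm ▸ hb)
      · exact a.2 hvy
    · rintro (⟨b, hb, hby⟩ | ⟨_, hxney', hxf'⟩)
      · exact b.2 (hby.trans hvy)
      · exact Set.disjoint_left.mp (h3 w₁ w₂ hne) hxf hxf'
  · obtain ⟨a, ha, b, hb, hab⟩ := h4 w₁ w₂ hadj
    obtain ⟨-, hG | ⟨hax, hyb⟩ | ⟨hbx, hya⟩⟩ := hab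
    · exact ⟨a.1, mem_contrSet_val ha, b.1, mem_contrSet_val hb, hG⟩
    · refine ⟨y, Or.inr ⟨rfl, hxy.ne, ?_⟩, b.1, mem_contrSet_val hb, hyb⟩
      have : a = (⟨x, hxy.ne⟩ : {v : V // v ≠ y}) := Subtype.ext hax
      exact this ▸ ha
    · refine ⟨a.1, mem_contrSet_val ha, y, Or.inr ⟨rfl, hxy.ne, ?_⟩, hya.symm⟩
      have : b = (⟨x, hxy.ne⟩ : {v : V // v ≠ y}) := Subtype.ext hbx
      exact this ▸ hb

end Contract

section Counting
variable [Fintype V] [DecidableEq V] {G : SimpleGraph V} [DecidableRel G.Adj] {x y : V}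

instance contrDecAdj : DecidableRel (contr G x y).Adj := fun a b => by
  unfold contr; exact instDecidableAnd

instance induceDecAdj {s : Set V} [DecidablePred (· ∈ s)] :
    DecidableRel (G.induce s).Adj := fun a b => by
  change Decidable (G.Adj a.1 b.1); infer_instance

/-- the contraction map sending `y` to `x`. -/
def phi (x y : V) (hne : x ≠ y) : V → {v : V // v ≠ y} :=
  fun v => if h : v = y then ⟨x, hne⟩ else ⟨v, h⟩

omit [Fintype V] [DecidableRel G.Adj] in
lemma phi_ne {x y : V} (hne : x ≠ y) {v : V} (h : v ≠ y) : phi x y hne v = ⟨v, h⟩ := dif_neg h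

lemma card_edge_delete_le (y : V) :
    #G.edgeFinset ≤ #(G.induce {v : V | v ≠ y}).edgeFinset + G.degree y := by
  classical
  have hsplit := Finset.card_filter_add_card_filter_not
    (s := G.edgeFinset) (p := fun e => y ∈ e)
  have hdeg : #(G.edgeFinset.filter (fun e => y ∈ e)) = G.degree y := by
    rw [← card_incidenceFinset_eq_degree, incidenceFinset_eq_filter]
  -- it suffices to bound the edges avoiding y
  have hkey : #(G.edgeFinset.filter (fun e => ¬ y ∈ e)) ≤
      #(G.induce {v : V | v ≠ y}).edgeFinset := by
    by_cases hxy0 : ∃ x0 : V, x0 ≠ y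
    · obtain ⟨x0, hx0⟩ := hxy0
      refine Finset.card_le_card_of_injOn (Sym2.map (phi x0 y hx0)) ?_ ?_
      · intro e he
        simp only [Finset.mem_coe, mem_filter, mem_edgeFinset] at he
        obtain ⟨he1, he2⟩ := he
        induction e with
        | _ a b =>
          rw [Sym2.mem_iff, not_or] at he2
          rw [Sym2.map_pair_eq, phi_ne hx0 (Ne.symm he2.1),
            phi_ne hx0 (Ne.symm he2.2)]
          rw [Finset.mem_coe, mem_edgeFinset, mem_edgeSet]
          exact he1
      · intro e he e' he' heq
        simp only [coe_filter, Set.mem_setOf_eq, mem_edgeFinset] at he he'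
        induction e with
        | _ a b =>
          induction e' with
          | _ c d =>
            rw [Sym2.mem_iff, not_or] at he he'
            obtain ⟨-, ha, hb⟩ := he
            obtain ⟨-, hc, hd⟩ := he'
            rw [Sym2.map_pair_eq, Sym2.map_pair_eq,
              phi_ne hx0 (Ne.symm ha), phi_ne hx0 (Ne.symm hb),
              phi_ne hx0 (Ne.symm hc), phi_ne hx0 (Ne.symm hd),
              Sym2.eq_iff] at heq
            rw [Sym2.eq_iff]
            rcases heq with ⟨h1, h2⟩ | ⟨h1, h2⟩
            · exact Or.inl ⟨congrArg Subtype.val h1, congrArg Subtype.val h2⟩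
            · exact Or.inr ⟨congrArg Subtype.val h1, congrArg Subtype.val h2⟩
    · -- V = {y}, no edges at all
      push_neg at hxy0
      have : #G.edgeFinset = 0 := by
        rw [Finset.card_eq_zero, Finset.eq_empty_iff_forall_notMem]
        intro e he
        induction e with
        | _ a b =>
          rw [mem_edgeFinset, mem_edgeSet] at he
          exact he.ne (by rw [hxy0 a, hxy0 b])
      omega
  omega

lemma card_edge_contr_le (hxy : G.Adj x y) :
    #G.edgeFinset ≤ #(contr G x y).edgeFinset + 1 +
      #(G.neighborFinset x ∩ G.neighborFinset y) := by
  classical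
  have hne : x ≠ y := hxy.ne
  set f := phi x y hne with hf
  set x' : {v : V // v ≠ y} := ⟨x, hne⟩ with hx'
  -- B1: edges avoiding y, mapped by Sym2.map f
  set B1 := (G.edgeFinset.filter (fun e => ¬ y ∈ e)).image (Sym2.map f) with hB1
  -- B2: neighbors z of y with z ≠ x and ¬ Adj x z, giving contracted edges s(x', z)
  set N2 := (G.neighborFinset y).filter (fun z => ¬ G.Adj x z ∧ z ≠ x) with hN2
  set B2 := N2.image (fun z => s(x', f z)) with hB2
  have hsub1 : B1 ⊆ (contr G x y).edgeFinset := by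
    intro e he
    rw [hB1, Finset.mem_image] at he
    obtain ⟨e₀, he₀, rfl⟩ := he
    simp only [mem_filter, mem_edgeFinset] at he₀
    obtain ⟨h1, h2⟩ := he₀
    induction e₀ with
    | _ a b =>
      rw [Sym2.mem_iff, not_or] at h2
      rw [Sym2.map_pair_eq, hf, phi_ne hne (Ne.symm h2.1), phi_ne hne (Ne.symm h2.2),
        mem_edgeFinset, mem_edgeSet]
      exact ⟨fun hh => h1.ne (congrArg Subtype.val hh), Or.inl h1⟩
  have hsub2 : B2 ⊆ (contr G x y).edgeFinset := by
    intro e he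
    rw [hB2, Finset.mem_image] at he
    obtain ⟨z, hz, rfl⟩ := he
    rw [hN2, mem_filter, mem_neighborFinset] at hz
    obtain ⟨hyz, hnxz, hzx⟩ := hz
    have hzy : z ≠ y := (hyz.symm).ne
    rw [hf, phi_ne hne hzy, mem_edgeFinset, mem_edgeSet]
    exact ⟨fun hh => hzx (congrArg Subtype.val hh).symm, Or.inr (Or.inl ⟨rfl, hyz⟩)⟩
  have hdisj : Disjoint B1 B2 := by
    rw [Finset.disjoint_left]
    intro e he1 he2
    rw [hB1, Finset.mem_image] at he1
    rw [hB2, Finset.mem_image] at he2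
    obtain ⟨e₀, he₀, rfl⟩ := he1
    obtain ⟨z, hz, heq⟩ := he2
    rw [hN2, mem_filter, mem_neighborFinset] at hz
    obtain ⟨hyz, hnxz, hzx⟩ := hz
    have hzy : z ≠ y := (hyz.symm).ne
    simp only [mem_filter, mem_edgeFinset] at he₀
    obtain ⟨h1, h2⟩ := he₀
    induction e₀ with
    | _ a b =>
      rw [Sym2.mem_iff, not_or] at h2
      rw [Sym2.map_pair_eq, hf, phi_ne hne (Ne.symm h2.1), phi_ne hne (Ne.symm h2.2),
        phi_ne hne hzy, Sym2.eq_iff] at heq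
      -- heq : ⟨x',z⟩ = pair of subtypes from a b
      rcases heq with ⟨hA, hB⟩ | ⟨hA, hB⟩
      · have h1' : a = x := (congrArg Subtype.val hA).symm
        have h2' : b = z := (congrArg Subtype.val hB).symm
        exact hnxz (h1' ▸ h2' ▸ h1)
      · have h1' : b = x := (congrArg Subtype.val hA).symm
        have h2' : a = z := (congrArg Subtype.val hB).symm
        exact hnxz (h1' ▸ h2' ▸ h1.symm)
  have hcard1 : #B1 = #(G.edgeFinset.filter (fun e => ¬ y ∈ e)) := by
    rw [hB1]
    refine Finset.card_image_of_injOn ?_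
    intro e he e' he' heq
    simp only [coe_filter, Set.mem_setOf_eq, mem_edgeFinset] at he he'
    induction e with
    | _ a b =>
      induction e' with
      | _ c d =>
        rw [Sym2.mem_iff, not_or] at he he'
        obtain ⟨-, ha, hb⟩ := he
        obtain ⟨-, hc, hd⟩ := he'
        rw [Sym2.map_pair_eq, Sym2.map_pair_eq, hf,
          phi_ne hne (Ne.symm ha), phi_ne hne (Ne.symm hb),
          phi_ne hne (Ne.symm hc), phi_ne hne (Ne.symm hd), Sym2.eq_iff] at heq
        rw [Sym2.eq_iff]
        rcases heq with ⟨h1, h2⟩ | ⟨h1, h2⟩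
        · exact Or.inl ⟨congrArg Subtype.val h1, congrArg Subtype.val h2⟩
        · exact Or.inr ⟨congrArg Subtype.val h1, congrArg Subtype.val h2⟩
  have hcard2 : #B2 = #N2 := by
    rw [hB2]
    refine Finset.card_image_of_injOn ?_
    intro z hz z' hz' heq
    rw [hN2, coe_filter, Set.mem_setOf_eq, mem_neighborFinset] at hz hz'
    have hzy : z ≠ y := (hz.1.symm).ne
    have hzy' : z' ≠ y := (hz'.1.symm).ne
    dsimp only at heq
    rw [hf, phi_ne hne hzy, phi_ne hne hzy', Sym2.eq_iff] at heq
    rcases heq with ⟨-, h2⟩ | ⟨h1, h2⟩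
    · exact congrArg Subtype.val h2
    · exact absurd (congrArg Subtype.val h1).symm hz'.2.2
  -- now the counting
  have hunion : #B1 + #B2 ≤ #(contr G x y).edgeFinset := by
    rw [← Finset.card_union_of_disjoint hdisj]
    exact Finset.card_le_card (Finset.union_subset hsub1 hsub2)
  have hsplit := Finset.card_filter_add_card_filter_not
    (s := G.edgeFinset) (p := fun e => y ∈ e)
  have hdeg : #(G.edgeFinset.filter (fun e => y ∈ e)) = G.degree y := by
    rw [← card_incidenceFinset_eq_degree, incidenceFinset_eq_filter]
  have hN2card : #N2 + (#(G.neighborFinset x ∩ G.neighborFinset y) + 1) = G.degree y := by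
    have h2 := Finset.card_filter_add_card_filter_not
      (s := G.neighborFinset y) (p := fun z => ¬ G.Adj x z ∧ z ≠ x)
    have : (G.neighborFinset y).filter (fun z => ¬ (¬ G.Adj x z ∧ z ≠ x)) =
        insert x (G.neighborFinset x ∩ G.neighborFinset y) := by
      ext z
      simp only [mem_filter, mem_insert, mem_inter, mem_neighborFinset, not_and_or, not_not,
        ne_eq]
      constructor
      · rintro ⟨hyz, hAdj | hzx⟩
        · exact Or.inr ⟨hAdj, hyz⟩
        · exact Or.inl (by simpa using hzx)
      · rintro (rfl | ⟨hAdj, hyz⟩)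
        · exact ⟨hxy.symm, Or.inr rfl⟩
        · exact ⟨hyz, Or.inl hAdj⟩
    rw [this] at h2
    have h4 : #(insert x (G.neighborFinset x ∩ G.neighborFinset y)) =
        #(G.neighborFinset x ∩ G.neighborFinset y) + 1 :=
      Finset.card_insert_of_notMem (fun hmem => G.loopless.irrefl x
        ((SimpleGraph.mem_neighborFinset G x x).mp (Finset.mem_inter.mp hmem).1))
    have h3 : #(G.neighborFinset y) = G.degree y := G.card_neighborFinset_eq_degree y
    rw [h4] at h2
    rw [hN2]
    omega
  omega

end Counting

section Wrappers
variable [Fintype V]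

/-- instance-free edge count -/
noncomputable def E (G : SimpleGraph V) : ℕ := Nat.card G.edgeSet

/-- instance-free degree -/
noncomputable def D (G : SimpleGraph V) (v : V) : ℕ := Nat.card (G.neighborSet v)

/-- instance-free codegree -/
noncomputable def T (G : SimpleGraph V) (x y : V) : ℕ := Nat.card (G.commonNeighbors x y)

lemma E_eq (G : SimpleGraph V) [DecidableRel G.Adj] : E G = #G.edgeFinset := by
  rw [E, Nat.card_eq_fintype_card, edgeFinset_card]

lemma D_eq (G : SimpleGraph V) [DecidableRel G.Adj] (v : V) : D G v = G.degree v := by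
  rw [D, Nat.card_eq_fintype_card, card_neighborSet_eq_degree]

lemma T_eq [DecidableEq V] (G : SimpleGraph V) [DecidableRel G.Adj] (x y : V) :
    T G x y = #(G.neighborFinset x ∩ G.neighborFinset y) := by
  rw [T]
  have h : G.commonNeighbors x y = ↑(G.neighborFinset x ∩ G.neighborFinset y) := by
    ext z
    simp only [commonNeighbors, Set.mem_inter_iff, Finset.coe_inter, mem_coe,
      SimpleGraph.mem_neighborFinset, mem_neighborSet]
  rw [h, Nat.card_coe_set_eq, Set.ncard_coe_finset]

lemma card_ne [DecidableEq V] (v : V) :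
    Fintype.card ↥{w : V | w ≠ v} + 1 = Fintype.card V := by
  classical
  have := Fintype.card_subtype_compl (fun w : V => w = v)
  have h1 : Fintype.card {w : V // w = v} = 1 := Fintype.card_subtype_eq v
  have h2 : Fintype.card ↥{w : V | w ≠ v} = Fintype.card {w : V // ¬ w = v} := by
    apply Fintype.card_congr
    exact Equiv.subtypeEquivRight (by intro a; simp [Set.mem_setOf_eq])
  have h4 : 1 ≤ Fintype.card V := Fintype.card_pos_iff.mpr ⟨v⟩
  rw [h1] at this
  omega

/-- if all common neighborhoods with `v` are big, the neighborhood of `v` is a clique -/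
lemma adj_of_common_nbrs [DecidableEq V] {G : SimpleGraph V} [DecidableRel G.Adj] {v : V}
    (h : ∀ u, G.Adj v u → G.degree v - 1 ≤ #(G.neighborFinset v ∩ G.neighborFinset u))
    {u w : V} (hu : G.Adj v u) (hw : G.Adj v w) (huw : u ≠ w) : G.Adj u w := by
  have hsub : G.neighborFinset v ∩ G.neighborFinset u ⊆ (G.neighborFinset v).erase u := by
    intro z hz
    rw [Finset.mem_inter] at hz
    have hadj : G.Adj u z := (SimpleGraph.mem_neighborFinset G u z).mp hz.2
    exact Finset.mem_erase.mpr ⟨Ne.symm hadj.ne, hz.1⟩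
  have hcard : #((G.neighborFinset v).erase u) = G.degree v - 1 := by
    rw [Finset.card_erase_of_mem ((SimpleGraph.mem_neighborFinset G v u).mpr hu),
      card_neighborFinset_eq_degree]
  have heq : G.neighborFinset v ∩ G.neighborFinset u = (G.neighborFinset v).erase u :=
    Finset.eq_of_subset_of_card_le hsub (by rw [hcard]; exact h u hu)
  have hwmem : w ∈ (G.neighborFinset v).erase u :=
    Finset.mem_erase.mpr ⟨huw.symm, (SimpleGraph.mem_neighborFinset G v w).mpr hw⟩
  rw [← heq, Finset.mem_inter] at hwmem
  exact (SimpleGraph.mem_neighborFinset G u w).mp hwmem.2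

/-- common neighbors with `v` bound the degree in the induced neighborhood graph -/
lemma degree_induce_nbhd_ge [DecidableEq V] {G : SimpleGraph V} [DecidableRel G.Adj] {v : V}
    (u : ↥(G.neighborSet v)) :
    #(G.neighborFinset v ∩ G.neighborFinset u.1) ≤ (G.induce (G.neighborSet v)).degree u := by
  classical
  rw [← card_neighborFinset_eq_degree]
  refine Finset.card_le_card_of_injOn
    (fun z => if h : z ∈ G.neighborSet v then ⟨z, h⟩ else u) ?_ ?_
  · intro z hz
    rw [Finset.mem_coe, Finset.mem_inter, mem_neighborFinset, mem_neighborFinset] at hz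
    have hzv : z ∈ G.neighborSet v := hz.1
    dsimp only
    rw [dif_pos hzv, Finset.mem_coe, mem_neighborFinset]
    exact hz.2
  · intro z hz z' hz' heq
    simp only [coe_inter, Set.mem_inter_iff, mem_coe, mem_neighborFinset] at hz hz'
    have hzv : z ∈ G.neighborSet v := hz.1
    have hzv' : z' ∈ G.neighborSet v := hz'.1
    dsimp only at heq
    rw [dif_pos hzv, dif_pos hzv'] at heq
    exact congrArg Subtype.val heq

end Wrappers

section Mader

theorem maderK4 (n : ℕ) : ∀ (m : ℕ), ∀ {V : Type u} [Fintype V] (G : SimpleGraph V),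
    Fintype.card V = n → E G = m → 4 ≤ n → 2*n ≤ m + 2 →
    G.HasMinor (⊤ : SimpleGraph (Fin 4)) := by
  induction n using Nat.strong_induction_on with
  | _ n ihn =>
  intro m
  induction m using Nat.strong_induction_on with
  | _ m ihm =>
  intro V _ G hn hm hn4 hcnt
  classical
  letI : DecidableRel G.Adj := Classical.decRel _
  have hmE : #G.edgeFinset = m := by rw [← E_eq]; exact hm
  by_cases hstrict : 2*n ≤ m + 1
  · -- delete an edge
    have hm1 : 1 ≤ m := by omega
    obtain ⟨e, he⟩ := Finset.card_pos.mp (by omega : 0 < #G.edgeFinset)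
    letI : DecidableRel (G.deleteEdges {e}).Adj := Classical.decRel _
    have he' : E (G.deleteEdges {e}) = m - 1 := by
      have hset : (G.deleteEdges {e}).edgeFinset = G.edgeFinset \ {e} := by
        ext e'
        simp [edgeSet_deleteEdges]
      rw [E_eq, hset, Finset.sdiff_singleton_eq_erase, Finset.card_erase_of_mem he, hmE]
    exact hasMinor_mono (G.deleteEdges_le (s := {e}))
      (ihm (m-1) (by omega) _ hn he' hn4 (by omega))
  · have hmex : m + 2 = 2 * n := by omega
    by_cases hn5 : n = 4
    · subst hn5
      have hGtop : G.edgeFinset = (⊤ : SimpleGraph V).edgeFinset := by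
        apply Finset.eq_of_subset_of_card_le (edgeFinset_mono le_top)
        rw [card_edgeFinset_top_eq_card_choose_two, hn, hmE]
        have : Nat.choose 4 2 = 6 := by decide
        omega
      refine hasMinor_top_of_clique Finset.univ (by simp [hn]) ?_
      intro a _ b _ hab
      have hmem : s(a,b) ∈ (⊤ : SimpleGraph V).edgeFinset := by
        rw [mem_edgeFinset, mem_edgeSet]; exact hab
      rw [← hGtop, mem_edgeFinset, mem_edgeSet] at hmem
      exact hmem
    · have hn5' : 5 ≤ n := by omega
      by_cases hlow : ∃ v : V, G.degree v ≤ 2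
      · -- delete a low degree vertex
        obtain ⟨v, hv⟩ := hlow
        have hcard : Fintype.card ↥{w : V | w ≠ v} + 1 = n := by
          rw [← hn]; exact card_ne v
        have hE := card_edge_delete_le (G := G) v
        have hE2 : E (G.induce {w : V | w ≠ v}) = #(G.induce {w : V | w ≠ v}).edgeFinset :=
          E_eq _
        exact hasMinor_of_induce (ihn (n-1) (by omega) _ (G.induce {w : V | w ≠ v})
          (by omega) rfl (by omega) (by omega))
      · push_neg at hlow
        by_cases hfew : ∃ x y : V, G.Adj x y ∧ #(G.neighborFinset x ∩ G.neighborFinset y) ≤ 1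
        · -- contract an edge in few triangles
          obtain ⟨x, y, hxy, ht⟩ := hfew
          have hcard : Fintype.card {v : V // v ≠ y} + 1 = n := by
            rw [← hn]
            exact card_ne y
          have hE := card_edge_contr_le hxy
          have hE2 : E (contr G x y) = #(contr G x y).edgeFinset := E_eq _
          exact hasMinor_of_contr hxy (ihn (n-1) (by omega) _ (contr G x y)
            (by omega) rfl (by omega) (by omega))
        · push_neg at hfew
          have hsum : ∑ v : V, G.degree v = 2 * m := by
            rw [← hmE]; exact G.sum_degrees_eq_twice_card_edges
          have hex : ∃ v : V, G.degree v ≤ 3 := by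
            by_contra hall
            push_neg at hall
            have : 4 * n ≤ ∑ v : V, G.degree v := by
              calc 4 * n = ∑ _v : V, 4 := by rw [Finset.sum_const, card_univ, hn]; ring
              _ ≤ ∑ v : V, G.degree v := Finset.sum_le_sum (fun v _ => hall v)
            omega
          obtain ⟨v, hv3⟩ := hex
          have hv3' : G.degree v = 3 := le_antisymm hv3 (hlow v)
          have hclq : ∀ u w : V, G.Adj v u → G.Adj v w → u ≠ w → G.Adj u w := by
            intro u w hu hw huw
            refine adj_of_common_nbrs (fun z hz => ?_) hu hw huw
            have := hfew v z hz
            omega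
          refine hasMinor_top_of_clique (insert v (G.neighborFinset v)) ?_ ?_
          · rw [Finset.card_insert_of_notMem (fun hmem => G.loopless.irrefl v
              ((SimpleGraph.mem_neighborFinset G v v).mp hmem)),
              card_neighborFinset_eq_degree, hv3']
          · intro a ha b hb hab
            rw [Finset.mem_insert] at ha hb
            rcases ha with rfl | ha <;> rcases hb with rfl | hb
            · exact absurd rfl hab
            · exact (SimpleGraph.mem_neighborFinset G a b).mp hb
            · exact ((SimpleGraph.mem_neighborFinset G b a).mp ha).symm
            · exact hclq a b ((SimpleGraph.mem_neighborFinset G v a).mp ha)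
                ((SimpleGraph.mem_neighborFinset G v b).mp hb) hab

end Mader

theorem maderK5 (n : ℕ) : ∀ (m : ℕ), ∀ {V : Type u} [Fintype V] (G : SimpleGraph V),
    Fintype.card V = n → E G = m → 5 ≤ n → 3*n ≤ m + 5 →
    G.HasMinor (⊤ : SimpleGraph (Fin 5)) := by
  induction n using Nat.strong_induction_on with
  | _ n ihn =>
  intro m
  induction m using Nat.strong_induction_on with
  | _ m ihm =>
  intro V _ G hn hm hn5 hcnt
  classical
  letI : DecidableRel G.Adj := Classical.decRel _
  have hmE : #G.edgeFinset = m := by rw [← E_eq]; exact hm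
  by_cases hstrict : 3*n ≤ m + 4
  · -- delete an edge
    have hm1 : 1 ≤ m := by omega
    obtain ⟨e, he⟩ := Finset.card_pos.mp (by omega : 0 < #G.edgeFinset)
    letI : DecidableRel (G.deleteEdges {e}).Adj := Classical.decRel _
    have he' : E (G.deleteEdges {e}) = m - 1 := by
      have hset : (G.deleteEdges {e}).edgeFinset = G.edgeFinset \ {e} := by
        ext e'
        simp [edgeSet_deleteEdges]
      rw [E_eq, hset, Finset.sdiff_singleton_eq_erase, Finset.card_erase_of_mem he, hmE]
    exact hasMinor_mono (G.deleteEdges_le (s := {e}))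
      (ihm (m-1) (by omega) _ hn he' hn5 (by omega))
  · have hmex : m + 5 = 3 * n := by omega
    by_cases hn6 : n = 5
    · subst hn6
      have hGtop : G.edgeFinset = (⊤ : SimpleGraph V).edgeFinset := by
        apply Finset.eq_of_subset_of_card_le (edgeFinset_mono le_top)
        rw [card_edgeFinset_top_eq_card_choose_two, hn, hmE]
        have : Nat.choose 5 2 = 10 := by decide
        omega
      refine hasMinor_top_of_clique Finset.univ (by simp [hn]) ?_
      intro a _ b _ hab
      have hmem : s(a,b) ∈ (⊤ : SimpleGraph V).edgeFinset := by
        rw [mem_edgeFinset, mem_edgeSet]; exact hab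
      rw [← hGtop, mem_edgeFinset, mem_edgeSet] at hmem
      exact hmem
    · have hn6' : 6 ≤ n := by omega
      by_cases hlow : ∃ v : V, G.degree v ≤ 3
      · -- delete a low degree vertex
        obtain ⟨v, hv⟩ := hlow
        have hcard : Fintype.card ↥{w : V | w ≠ v} + 1 = n := by
          rw [← hn]; exact card_ne v
        have hE := card_edge_delete_le (G := G) v
        have hE2 : E (G.induce {w : V | w ≠ v}) = #(G.induce {w : V | w ≠ v}).edgeFinset :=
          E_eq _
        exact hasMinor_of_induce (ihn (n-1) (by omega) _ (G.induce {w : V | w ≠ v})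
          (by omega) rfl (by omega) (by omega))
      · push_neg at hlow
        by_cases hfew : ∃ x y : V, G.Adj x y ∧ #(G.neighborFinset x ∩ G.neighborFinset y) ≤ 2
        · -- contract an edge in few triangles
          obtain ⟨x, y, hxy, ht⟩ := hfew
          have hcard : Fintype.card {v : V // v ≠ y} + 1 = n := by
            rw [← hn]
            exact card_ne y
          have hE := card_edge_contr_le hxy
          have hE2 : E (contr G x y) = #(contr G x y).edgeFinset := E_eq _
          exact hasMinor_of_contr hxy (ihn (n-1) (by omega) _ (contr G x y)
            (by omega) rfl (by omega) (by omega))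
        · push_neg at hfew
          have hsum : ∑ v : V, G.degree v = 2 * m := by
            rw [← hmE]; exact G.sum_degrees_eq_twice_card_edges
          have hex : ∃ v : V, G.degree v ≤ 5 := by
            by_contra hall
            push_neg at hall
            have : 6 * n ≤ ∑ v : V, G.degree v := by
              calc 6 * n = ∑ _v : V, 6 := by rw [Finset.sum_const, card_univ, hn]; ring
              _ ≤ ∑ v : V, G.degree v := Finset.sum_le_sum (fun v _ => hall v)
            omega
          obtain ⟨v, hv5⟩ := hex
          have hv4 : 4 ≤ G.degree v := hlow v
          by_cases hdeg4 : G.degree v = 4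
          · -- neighborhood is a 4-clique
            have hclq : ∀ u w : V, G.Adj v u → G.Adj v w → u ≠ w → G.Adj u w := by
              intro u w hu hw huw
              refine adj_of_common_nbrs (fun z hz => ?_) hu hw huw
              have := hfew v z hz
              omega
            refine hasMinor_top_of_clique (insert v (G.neighborFinset v)) ?_ ?_
            · rw [Finset.card_insert_of_notMem (fun hmem => G.loopless.irrefl v
                ((SimpleGraph.mem_neighborFinset G v v).mp hmem)),
                card_neighborFinset_eq_degree, hdeg4]
            · intro a ha b hb hab
              rw [Finset.mem_insert] at ha hb
              rcases ha with rfl | ha <;> rcases hb with rfl | hb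
              · exact absurd rfl hab
              · exact (SimpleGraph.mem_neighborFinset G a b).mp hb
              · exact ((SimpleGraph.mem_neighborFinset G b a).mp ha).symm
              · exact hclq a b ((SimpleGraph.mem_neighborFinset G v a).mp ha)
                  ((SimpleGraph.mem_neighborFinset G v b).mp hb) hab
          · -- degree v = 5 : apply the K4 theorem to the neighborhood
            have hdeg5 : G.degree v = 5 := by omega
            have hcard5 : Fintype.card ↥(G.neighborSet v) = 5 := by
              rw [Fintype.card_congr (Equiv.refl _), card_neighborSet_eq_degree, hdeg5]
            letI : DecidableRel (G.induce (G.neighborSet v)).Adj := Classical.decRel _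
            have hdegH : ∀ u : ↥(G.neighborSet v),
                3 ≤ (G.induce (G.neighborSet v)).degree u := by
              intro u
              have h1 : #(G.neighborFinset v ∩ G.neighborFinset u.1) ≤
                  (G.induce (G.neighborSet v)).degree u := by
                convert degree_induce_nbhd_ge (G := G) (v := v) u
              have h2 := hfew v u.1 u.2
              have h3 : (G.induce (G.neighborSet v)).degree u =
                  (G.induce (G.neighborSet v)).degree u := rfl
              omega
            have hsumH : ∑ u : ↥(G.neighborSet v), (G.induce (G.neighborSet v)).degree u =
                2 * #(G.induce (G.neighborSet v)).edgeFinset :=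
              (G.induce (G.neighborSet v)).sum_degrees_eq_twice_card_edges
            have hlb : 15 ≤ ∑ u : ↥(G.neighborSet v), (G.induce (G.neighborSet v)).degree u := by
              calc (15 : ℕ) = ∑ _u : ↥(G.neighborSet v), 3 := by
                    rw [Finset.sum_const, card_univ, hcard5, smul_eq_mul]
                _ ≤ _ := Finset.sum_le_sum (fun u _ => hdegH u)
            have hEH : 8 ≤ E (G.induce (G.neighborSet v)) := by
              have := E_eq (G.induce (G.neighborSet v))
              omega
            have hK4 := maderK4 5 (E (G.induce (G.neighborSet v)))
              (G.induce (G.neighborSet v)) hcard5 rfl (by omega) (by omega)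
            exact hasMinor_succ_of_nbhd (fun u hu => hu) hK4

section Coloring

lemma exists_low_degree [Fintype V] [Nonempty V] (G : SimpleGraph V) [DecidableRel G.Adj]
    (hK5 : ¬ G.HasMinor (⊤ : SimpleGraph (Fin 5))) : ∃ v : V, G.degree v ≤ 5 := by
  classical
  by_contra hall
  push_neg at hall
  set n := Fintype.card V with hn
  have hn7 : 7 ≤ n := by
    obtain ⟨v⟩ := ‹Nonempty V›
    have h6 : 6 ≤ G.degree v := hall v
    have : G.degree v < n := by
      rw [← card_neighborFinset_eq_degree, hn]
      exact Finset.card_lt_card ⟨Finset.subset_univ _, fun hsub =>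
        G.loopless.irrefl v ((SimpleGraph.mem_neighborFinset G v v).mp (hsub (Finset.mem_univ v)))⟩
    omega
  have hsum : ∑ v : V, G.degree v = 2 * #G.edgeFinset :=
    G.sum_degrees_eq_twice_card_edges
  have hge : 6 * n ≤ ∑ v : V, G.degree v := by
    calc 6 * n = ∑ _v : V, 6 := by rw [Finset.sum_const, card_univ, smul_eq_mul]; ring
    _ ≤ ∑ v : V, G.degree v := Finset.sum_le_sum (fun v _ => hall v)
  have hE : E G = #G.edgeFinset := E_eq G
  exact hK5 (maderK5 n (E G) G rfl rfl (by omega) (by omega))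

/-- every K5-minor-free graph has a 3-colouring with no monochromatic triangle -/
theorem triFree3Color (n : ℕ) : ∀ {V : Type u} [Fintype V] (G : SimpleGraph V),
    Fintype.card V = n → (¬ G.HasMinor (⊤ : SimpleGraph (Fin 5))) →
    ∃ c : V → Fin 3, ∀ t : Finset V, G.IsNClique 3 t → ∃ u ∈ t, ∃ w ∈ t, c u ≠ c w := by
  induction n using Nat.strong_induction_on with
  | _ n ihn =>
  intro V _ G hn hK5
  classical
  letI : DecidableRel G.Adj := Classical.decRel _
  rcases isEmpty_or_nonempty V with hemp | hne
  · refine ⟨fun v => 0, fun t ht => ?_⟩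
    obtain ⟨u, hu⟩ := Finset.card_pos.mp (by rw [ht.2]; omega)
    exact (hemp.false u).elim
  · obtain ⟨v, hv⟩ := exists_low_degree G hK5
    have hcard : Fintype.card ↥{w : V | w ≠ v} + 1 = n := by rw [← hn]; exact card_ne v
    have hK5' : ¬ (G.induce {w : V | w ≠ v}).HasMinor (⊤ : SimpleGraph (Fin 5)) :=
      fun h => hK5 (hasMinor_of_induce h)
    obtain ⟨c', hc'⟩ := ihn (n-1) (by omega) (G.induce {w : V | w ≠ v}) (by omega) hK5'
    set d : V → Fin 3 := fun w => if h : w = v then 0 else c' ⟨w, h⟩ with hd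
    have hpig : ∃ i : Fin 3, #((G.neighborFinset v).filter (fun u => d u = i)) ≤ 1 := by
      by_contra hno
      push_neg at hno
      have hsplit : ∑ i : Fin 3, #((G.neighborFinset v).filter (fun u => d u = i)) =
          #(G.neighborFinset v) :=
        (Finset.card_eq_sum_card_fiberwise (fun u _ => Finset.mem_univ (d u))).symm
      have h6 : 6 ≤ ∑ i : Fin 3, #((G.neighborFinset v).filter (fun u => d u = i)) := by
        calc (6 : ℕ) = ∑ _i : Fin 3, 2 := by simp
        _ ≤ _ := Finset.sum_le_sum (fun i _ => hno i)
      have hdeg : #(G.neighborFinset v) = G.degree v := G.card_neighborFinset_eq_degree v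
      omega
    obtain ⟨i₀, hi₀⟩ := hpig
    refine ⟨fun w => if w = v then i₀ else d w, fun t ht => ?_⟩
    by_contra hmono
    push_neg at hmono
    by_cases hvt : v ∈ t
    · -- two other vertices of t are neighbors of v with color i₀
      have hc2 : #(t.erase v) = 2 := by
        rw [Finset.card_erase_of_mem hvt, ht.2]
      obtain ⟨u, hu, w, hw, huw⟩ := Finset.one_lt_card.mp (by omega : 1 < #(t.erase v))
      have hu' := Finset.mem_erase.mp hu
      have hw' := Finset.mem_erase.mp hw
      have hadju : G.Adj v u := ht.1 hvt hu'.2 (Ne.symm hu'.1)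
      have hadjw : G.Adj v w := ht.1 hvt hw'.2 (Ne.symm hw'.1)
      have hcu : (if u = v then i₀ else d u) = (if v = v then i₀ else d v) :=
        hmono u hu'.2 v hvt
      have hcw : (if w = v then i₀ else d w) = (if v = v then i₀ else d v) :=
        hmono w hw'.2 v hvt
      rw [if_pos rfl, if_neg hu'.1] at hcu
      rw [if_pos rfl, if_neg hw'.1] at hcw
      have hsub : ({u, w} : Finset V) ⊆ (G.neighborFinset v).filter (fun z => d z = i₀) := by
        intro z hz
        rw [Finset.mem_insert, Finset.mem_singleton] at hz
        rw [Finset.mem_filter, mem_neighborFinset]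
        rcases hz with rfl | rfl
        · exact ⟨hadju, hcu⟩
        · exact ⟨hadjw, hcw⟩
      have : #({u, w} : Finset V) = 2 := Finset.card_pair huw
      have := Finset.card_le_card hsub
      omega
    · -- the triangle lives in the induced graph
      have htne : ∀ w ∈ t, w ≠ v := fun w hw hwv => hvt (hwv ▸ hw)
      set t' : Finset ↥{w : V | w ≠ v} := t.subtype (fun w => w ∈ {w : V | w ≠ v}) with ht'
      have hmem' : ∀ x : ↥{w : V | w ≠ v}, x ∈ t' ↔ x.1 ∈ t := by
        intro x
        rw [ht', Finset.mem_subtype]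
      have hclq' : (G.induce {w : V | w ≠ v}).IsNClique 3 t' := by
        constructor
        · intro x hx y hy hxy
          have : G.Adj x.1 y.1 := ht.1 ((hmem' x).mp hx) ((hmem' y).mp hy)
            (fun h => hxy (Subtype.ext h))
          exact this
        · rw [ht', Finset.card_subtype, Finset.filter_true_of_mem
            (p := fun w => w ∈ {w : V | w ≠ v}) (fun w hw => htne w hw), ht.2]
      obtain ⟨u', hu', w', hw', hne'⟩ := hc' t' hclq'
      have hdu : d u'.1 = c' u' := by
        rw [hd]
        dsimp only
        rw [dif_neg u'.2]
      have hdw : d w'.1 = c' w' := by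
        rw [hd]
        dsimp only
        rw [dif_neg w'.2]
      have := hmono u'.1 ((hmem' u').mp hu') w'.1 ((hmem' w').mp hw')
      rw [if_neg u'.2, if_neg w'.2, hdu, hdw] at this
      exact hne' this

end Coloring

end Aux

/-- A `K₅`-minor-free graph with at least one edge in which every edge lies in a
triangle has a 3-clique-coloring with no monochromatic triangle. -/
theorem K5_minor_free_every_edge_in_triangle_three_clique_colorable {V : Type*} [Fintype V]
    (G : SimpleGraph V) (hK5 : ¬ G.HasMinor (⊤ : SimpleGraph (Fin 5)))
    (hedge : ∃ u v : V, G.Adj u v)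
    (htri : ∀ u v : V, G.Adj u v → ∃ w : V, G.Adj u w ∧ G.Adj v w) :
    ∃ c : V → Fin 3, G.IsCliqueColoring c ∧
      ∀ t : Finset V, G.IsNClique 3 t → ∃ u ∈ t, ∃ v ∈ t, c u ≠ c v := by
  classical
  obtain ⟨c, hc⟩ := triFree3Color (Fintype.card V) G rfl hK5
  refine ⟨c, ?_, hc⟩
  intro s hmax hnt
  obtain ⟨u, hu, v, hv, huv⟩ := hnt
  have hadj : G.Adj u v := hmax.1 hu hv huv
  by_cases hex : ∃ w ∈ s, w ≠ u ∧ w ≠ v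
  · obtain ⟨w, hws, hwu, hwv⟩ := hex
    have htriangle : G.IsNClique 3 {u, v, w} := by
      constructor
      · intro a ha b hb hab
        simp only [Finset.coe_insert, Set.mem_insert_iff, Finset.coe_singleton,
          Set.mem_singleton_iff] at ha hb
        have has : a ∈ s := by rcases ha with rfl | rfl | rfl <;> assumption
        have hbs : b ∈ s := by rcases hb with rfl | rfl | rfl <;> assumption
        exact hmax.1 has hbs hab
      · rw [Finset.card_insert_of_notMem (by simp [huv, Ne.symm hwu]),
          Finset.card_insert_of_notMem (by simp [Ne.symm hwv]), Finset.card_singleton]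
    obtain ⟨a, ha, b, hb, hab⟩ := hc _ htriangle
    have hmem : ∀ x ∈ ({u, v, w} : Finset V), x ∈ s := by
      intro x hx
      simp only [Finset.mem_insert, Finset.mem_singleton] at hx
      rcases hx with rfl | rfl | rfl <;> assumption
    exact ⟨a, hmem a ha, b, hmem b hb, hab⟩
  · push_neg at hex
    obtain ⟨w, hadjuw, hadjvw⟩ := htri u v hadj
    have hclq : G.IsClique (insert w s) := by
      refine hmax.1.insert (fun b hb hne => ?_)
      rcases eq_or_ne b u with rfl | hbu
      · exact hadjuw.symm
      · exact (hex b hb hbu) ▸ hadjvw.symm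
    have heq := hmax.2 (insert w s) hclq (Set.subset_insert w s)
    have hwin : w ∈ s := heq ▸ Set.mem_insert w s
    rcases eq_or_ne w u with rfl | hwu
    · exact absurd hadjuw (G.loopless.irrefl w)
    · exact absurd ((hex w hwin hwu) ▸ hadjvw) (G.loopless.irrefl w)
end

section
/- If G is a claw-free graph containing no clique on 4 vertices, then the maximum degree of G is at most 5, and for every vertex v of degree 5 the subgraph of G induced by the closed neighborhood N[v] is isomorphic to the 5-wheel W_5 (the graph obtained from the cycle C_5 by adding a new vertex adjacent to all five cycle vertices). -/
set_option maxRecDepth 10000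
set_option maxHeartbeats 1000000


open SimpleGraph

/-- The `n`-wheel: a cycle `Cₙ` together with a hub (`none`) adjacent to every
cycle vertex. -/
def wheelGraph (n : ℕ) : SimpleGraph (Option (Fin n)) :=
  SimpleGraph.fromRel fun a b =>
    a = none ∨ b = none ∨ ∃ i j, a = some i ∧ b = some j ∧ (SimpleGraph.cycleGraph n).Adj i j



private def pidxN (i j : Fin 5) : ℕ :=
  if i.val < j.val then i.val*5 + j.val - (i.val+1)*(i.val+2)/2
  else j.val*5 + i.val - (j.val+1)*(j.val+2)/2

private def adjN (k : ℕ) (i j : Fin 5) : Bool := i ≠ j && k.testBit (pidxN i j)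

private def tripL : List (Fin 5 × Fin 5 × Fin 5) :=
  [(0,1,2),(0,1,3),(0,1,4),(0,2,3),(0,2,4),(0,3,4),(1,2,3),(1,2,4),(1,3,4),(2,3,4)]

private def triFree (k : ℕ) : Bool :=
  tripL.all fun t => !(adjN k t.1 t.2.1 && adjN k t.1 t.2.2 && adjN k t.2.1 t.2.2)

private def indFree (k : ℕ) : Bool :=
  tripL.all fun t => adjN k t.1 t.2.1 || adjN k t.1 t.2.2 || adjN k t.2.1 t.2.2

private def L12 : List ℕ := [220, 234, 316, 358, 425, 453, 570, 598, 665, 707, 789, 803]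

private lemma stageA : ∀ a < 32, ∀ b < 32,
    (!(triFree (32*a+b) && indFree (32*a+b)) || L12.contains (32*a+b)) = true := by decide

private lemma stageB : ∀ k ∈ L12, ∃ g : Fin 5 → Fin 5, Function.Injective g ∧
    ∀ i j, adjN k i j = true ↔ (cycleGraph 5).Adj (g i) (g j) := by
  intro k hk
  fin_cases hk
  · exact ⟨![3,0,1,2,4], by decide, by decide⟩
  · exact ⟨![0,3,1,2,4], by decide, by decide⟩
  · exact ⟨![3,1,0,2,4], by decide, by decide⟩
  · exact ⟨![1,3,0,2,4], by decide, by decide⟩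
  · exact ⟨![0,1,3,2,4], by decide, by decide⟩
  · exact ⟨![1,0,3,2,4], by decide, by decide⟩
  · exact ⟨![0,2,1,3,4], by decide, by decide⟩
  · exact ⟨![2,0,1,3,4], by decide, by decide⟩
  · exact ⟨![0,1,2,3,4], by decide, by decide⟩
  · exact ⟨![1,0,2,3,4], by decide, by decide⟩
  · exact ⟨![2,1,0,3,4], by decide, by decide⟩
  · exact ⟨![1,2,0,3,4], by decide, by decide⟩

private lemma keyC5 : ∀ k < 1024, triFree k = true → indFree k = true →
    ∃ g : Fin 5 → Fin 5, Function.Injective g ∧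
      ∀ i j, adjN k i j = true ↔ (cycleGraph 5).Adj (g i) (g j) := by
  intro k hk ht hi
  have h := stageA (k / 32) (by omega) (k % 32) (by omega)
  rw [show 32 * (k/32) + k % 32 = k by omega, ht, hi] at h
  simp only [Bool.not_true, Bool.and_self, Bool.false_or] at h
  exact stageB k (by simpa using h)

/-- binary encoding of a list of booleans -/
private def kOf : List Bool → ℕ
  | [] => 0
  | b :: l => b.toNat + 2 * kOf l

private lemma kOf_lt : ∀ l : List Bool, kOf l < 2 ^ l.length := by
  intro l
  induction l with
  | nil => simp [kOf]
  | cons b l ih =>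
    have hb : b.toNat ≤ 1 := Bool.toNat_le b
    have : (2:ℕ) ^ (b :: l).length = 2 * 2 ^ l.length := by
      simp [List.length_cons, pow_succ]; ring
    simp only [kOf, this]; omega

private lemma testBit_kOf : ∀ (l : List Bool) (p : ℕ), (kOf l).testBit p = l.getD p false := by
  intro l
  induction l with
  | nil => intro p; simp [kOf, Nat.zero_testBit]
  | cons b l ih =>
    intro p
    cases p with
    | zero =>
      cases b <;> simp [kOf, Nat.testBit_zero] <;> omega
    | succ n =>
      have hdiv : kOf (b :: l) / 2 = kOf l := by
        simp only [kOf]; cases b <;> simp <;> omega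
      rw [Nat.testBit_add_one, hdiv]
      simpa using ih n


/-- A claw-free graph with no 4-clique has maximum degree at most 5, and the
closed neighborhood of every vertex of degree 5 induces a 5-wheel. -/
theorem claw_free_no_K4_max_degree_five {V : Type*} [Fintype V] [DecidableEq V]
    (G : SimpleGraph V) [DecidableRel G.Adj]
    (hclaw : G.ClawFree) (h4 : G.CliqueFree 4) :
    (∀ v : V, G.degree v ≤ 5) ∧
      ∀ v : V, G.degree v = 5 →
        Nonempty (G.induce (insert v (G.neighborSet v)) ≃g wheelGraph 5) := by
  -- no claw
  have claw : ∀ x a b c : V, G.Adj x a → G.Adj x b → G.Adj x c → a ≠ b → a ≠ c → b ≠ c →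
      ¬G.Adj a b → ¬G.Adj a c → ¬G.Adj b c → False := by
    intro x a b c hxa hxb hxc hab hac hbc nab nac nbc
    have hxa' := hxa.ne
    have hxb' := hxb.ne
    have hxc' := hxc.ne
    have hax : a ≠ x := Ne.symm hxa'
    have hbx : b ≠ x := Ne.symm hxb'
    have hcx : c ≠ x := Ne.symm hxc'
    have hba : b ≠ a := Ne.symm hab
    have hca : c ≠ a := Ne.symm hac
    have hcb : c ≠ b := Ne.symm hbc
    have nba : ¬G.Adj b a := fun h => nab h.symm
    have nca : ¬G.Adj c a := fun h => nac h.symm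
    have ncb : ¬G.Adj c b := fun h => nbc h.symm
    refine hclaw.false ⟨⟨Sum.elim (fun _ => x) ![a,b,c], ?_⟩, ?_⟩
    · rintro (i | i) (j | j)
      · intro _; exact congrArg Sum.inl (Subsingleton.elim i j)
      · fin_cases i <;> fin_cases j <;> simp_all
      · fin_cases i <;> fin_cases j <;> simp_all
      · fin_cases i <;> fin_cases j <;> simp_all
    · show ∀ {p q : Fin 1 ⊕ Fin 3}, G.Adj (Sum.elim (fun _ => x) ![a,b,c] p)
        (Sum.elim (fun _ => x) ![a,b,c] q) ↔ _
      rintro (i | i) (j | j)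
      · fin_cases i <;> fin_cases j <;>
          simp_all [completeBipartiteGraph]
      · fin_cases i <;> fin_cases j <;>
          simp_all [completeBipartiteGraph]
      · fin_cases i <;> fin_cases j <;>
          simp_all [completeBipartiteGraph, G.adj_comm]
      · fin_cases i <;> fin_cases j <;>
          simp_all [completeBipartiteGraph, G.adj_comm]
  -- no triangle in any neighborhood
  have hT : ∀ v a b c : V, G.Adj v a → G.Adj v b → G.Adj v c →
      G.Adj a b → G.Adj a c → G.Adj b c → False := by
    intro v a b c hva hvb hvc hab hac hbc
    refine h4 {v, a, b, c} ?_
    have h1 : G.IsNClique 1 {c} := isNClique_singleton.2 rfl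
    have h2 : G.IsNClique 2 (insert b {c}) := h1.insert (by simpa using hbc)
    have h3 : G.IsNClique 3 (insert a (insert b {c})) := by
      refine h2.insert ?_
      intro x hx
      simp only [Finset.mem_insert, Finset.mem_singleton] at hx
      rcases hx with rfl | rfl <;> assumption
    refine h3.insert ?_
    intro x hx
    simp only [Finset.mem_insert, Finset.mem_singleton] at hx
    rcases hx with rfl | rfl | rfl <;> assumption
  have degb : ∀ v : V, G.degree v ≤ 5 := by
    intro v
    by_contra hdeg
    push_neg at hdeg
    have hN : 6 ≤ (G.neighborFinset v).card := hdeg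
    obtain ⟨u1, hu1⟩ : (G.neighborFinset v).Nonempty := Finset.card_pos.1 (by omega)
    have hvu1 : G.Adj v u1 := (G.mem_neighborFinset v u1).1 hu1
    set S := (G.neighborFinset v).erase u1 with hS
    have hScard : 5 ≤ S.card := by
      rw [hS, Finset.card_erase_of_mem hu1]; omega
    have hsplit : (S.filter (fun x => G.Adj u1 x)).card
        + (S.filter (fun x => ¬ G.Adj u1 x)).card = S.card :=
      Finset.card_filter_add_card_filter_not _
    have hmemS : ∀ x ∈ S, G.Adj v x ∧ x ≠ u1 := by
      intro x hx
      rw [hS, Finset.mem_erase] at hx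
      exact ⟨(G.mem_neighborFinset v x).1 hx.2, hx.1⟩
    rcases le_or_gt 3 (S.filter (fun x => G.Adj u1 x)).card with hA | hA
    · obtain ⟨a, b, c, ha, hb, hc, hab, hac, hbc⟩ :=
        (Finset.two_lt_card_iff (s := S.filter (fun x => G.Adj u1 x))).1 (by omega)
      simp only [Finset.mem_filter] at ha hb hc
      have hva := (hmemS a ha.1).1
      have hu1a := ha.2
      have hvb := (hmemS b hb.1).1
      have hu1b := hb.2
      have hvc := (hmemS c hc.1).1
      have hu1c := hc.2
      have nab : ¬ G.Adj a b := fun h => hT v u1 a b hvu1 hva hvb hu1a hu1b h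
      have nac : ¬ G.Adj a c := fun h => hT v u1 a c hvu1 hva hvc hu1a hu1c h
      have nbc : ¬ G.Adj b c := fun h => hT v u1 b c hvu1 hvb hvc hu1b hu1c h
      exact claw u1 a b c hu1a hu1b hu1c hab hac hbc nab nac nbc
    · have hB : 3 ≤ (S.filter (fun x => ¬ G.Adj u1 x)).card := by omega
      obtain ⟨a, b, c, ha, hb, hc, hab, hac, hbc⟩ :=
        (Finset.two_lt_card_iff (s := S.filter (fun x => ¬ G.Adj u1 x))).1 (by omega)
      simp only [Finset.mem_filter] at ha hb hc
      obtain ⟨hva, hu1a'⟩ := hmemS a ha.1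
      have na := ha.2
      obtain ⟨hvb, hu1b'⟩ := hmemS b hb.1
      have nb := hb.2
      obtain ⟨hvc, hu1c'⟩ := hmemS c hc.1
      have nc := hc.2
      by_cases pab : G.Adj a b
      · by_cases pac : G.Adj a c
        · by_cases pbc : G.Adj b c
          · exact hT v a b c hva hvb hvc pab pac pbc
          · exact claw v u1 b c hvu1 hvb hvc (Ne.symm hu1b') (Ne.symm hu1c') hbc nb nc pbc
        · exact claw v u1 a c hvu1 hva hvc (Ne.symm hu1a') (Ne.symm hu1c') hac na nc pac
      · exact claw v u1 a b hvu1 hva hvb (Ne.symm hu1a') (Ne.symm hu1b') hab na nb pab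
  refine ⟨degb, ?_⟩
  intro v hdeg
  have hcard : (G.neighborFinset v).card = 5 := hdeg
  set N := G.neighborFinset v with hNdef
  let e : ↥N ≃ Fin 5 := N.equivFinOfCardEq hcard
  let A : Fin 5 → Fin 5 → Bool := fun i j => decide (G.Adj ↑(e.symm i) ↑(e.symm j))
  have hAadj : ∀ i j, A i j = true ↔ G.Adj ↑(e.symm i) ↑(e.symm j) := by
    intro i j; simp [A]
  have hsym : ∀ i j, A i j = A j i := by
    intro i j; simp [A, G.adj_comm]
  have hirr : ∀ i, A i i = false := by
    intro i; simp [A]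
  have hadjv : ∀ i : Fin 5, G.Adj v ↑(e.symm i) := by
    intro i
    exact (G.mem_neighborFinset v _).1 (e.symm i).2
  -- no triangle / no independent triple in the Fin 5 model
  have htri : ∀ i j l : Fin 5, ¬(A i j = true ∧ A i l = true ∧ A j l = true) := by
    rintro i j l ⟨h1, h2, h3⟩
    exact hT v _ _ _ (hadjv i) (hadjv j) (hadjv l)
      ((hAadj i j).1 h1) ((hAadj i l).1 h2) ((hAadj j l).1 h3)
  have hind : ∀ i j l : Fin 5, i ≠ j → i ≠ l → j ≠ l →
      (A i j = true ∨ A i l = true ∨ A j l = true) := by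
    intro i j l hij hil hjl
    by_contra hcon
    push_neg at hcon
    obtain ⟨n1, n2, n3⟩ := hcon
    have ne1 : (↑(e.symm i) : V) ≠ ↑(e.symm j) := by
      intro h; exact hij (e.symm.injective (Subtype.ext h))
    have ne2 : (↑(e.symm i) : V) ≠ ↑(e.symm l) := by
      intro h; exact hil (e.symm.injective (Subtype.ext h))
    have ne3 : (↑(e.symm j) : V) ≠ ↑(e.symm l) := by
      intro h; exact hjl (e.symm.injective (Subtype.ext h))
    exact claw v _ _ _ (hadjv i) (hadjv j) (hadjv l) ne1 ne2 ne3
      (fun h => n1 ((hAadj i j).2 h)) (fun h => n2 ((hAadj i l).2 h))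
      (fun h => n3 ((hAadj j l).2 h))
  -- encode A as a natural number
  set kA : ℕ := kOf [A 0 1, A 0 2, A 0 3, A 0 4, A 1 2, A 1 3, A 1 4, A 2 3, A 2 4, A 3 4]
    with hkA
  have hbit : ∀ p : ℕ, kA.testBit p =
      [A 0 1, A 0 2, A 0 3, A 0 4, A 1 2, A 1 3, A 1 4, A 2 3, A 2 4, A 3 4].getD p false :=
    fun p => testBit_kOf _ p
  have hAeq : ∀ i j : Fin 5, adjN kA i j = A i j := by
    intro i j
    fin_cases i <;> fin_cases j <;>
      simp [adjN, pidxN, hbit] <;>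
      first
        | rfl
        | exact hirr _
        | exact (hirr _).symm
        | exact hsym _ _
        | exact (hsym _ _).symm
  have hklt : kA < 1024 := by
    have := kOf_lt [A 0 1, A 0 2, A 0 3, A 0 4, A 1 2, A 1 3, A 1 4, A 2 3, A 2 4, A 3 4]
    simpa [hkA] using this
  have htriF : triFree kA = true := by
    rw [triFree, List.all_eq_true]
    intro t _
    simp only [hAeq, Bool.not_eq_true', Bool.eq_false_iff, Ne, Bool.and_eq_true]
    rintro ⟨⟨h1, h2⟩, h3⟩
    exact htri _ _ _ ⟨h1, h2, h3⟩
  have hindF : indFree kA = true := by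
    simp only [indFree, List.all_eq_true, tripL, List.mem_cons, List.not_mem_nil, or_false]
    rintro t (rfl | rfl | rfl | rfl | rfl | rfl | rfl | rfl | rfl | rfl) <;>
      · simp only [hAeq, Bool.or_eq_true]
        rw [or_assoc]
        apply hind <;> decide
  obtain ⟨g, hginj, hgiff⟩ := keyC5 kA hklt htriF hindF
  have hgbij : Function.Bijective g := (Fintype.bijective_iff_injective_and_card g).2 ⟨hginj, rfl⟩
  let σ : Equiv.Perm (Fin 5) := Equiv.ofBijective g hgbij
  have hσ : ∀ i, σ i = g i := fun i => rfl
  have hAcyc : ∀ i j, A i j = true ↔ (cycleGraph 5).Adj (σ i) (σ j) := by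
    intro i j
    rw [hσ, hσ, ← hgiff, hAeq]
  -- build the isomorphism
  set S : Set V := insert v (G.neighborSet v) with hSdef
  have hv_of : ∀ x : ↥S, (↑x : V) ∉ N → (↑x : V) = v := by
    rintro ⟨x, hx⟩ hnx
    rcases hx with h | h
    · exact h
    · exact absurd ((G.mem_neighborFinset v x).2 h) hnx
  have hmemS : ∀ u : ↥N, (↑u : V) ∈ S := by
    intro u
    exact Set.mem_insert_of_mem _ ((G.mem_neighborFinset v ↑u).1 u.2)
  have hvnotN : v ∉ N := by
    rw [hNdef]; exact G.notMem_neighborFinset_self v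
  -- wheel adjacency facts
  have wadj2 : ∀ i j : Fin 5, (wheelGraph 5).Adj (some i) (some j) ↔ (cycleGraph 5).Adj i j := by
    intro i j
    rw [wheelGraph, fromRel_adj]
    constructor
    · rintro ⟨hne, h | h⟩ <;>
        rcases h with h | h | ⟨i', j', hi, hj, hc⟩
      · exact absurd h (by simp)
      · exact absurd h (by simp)
      · injection hi with hi; injection hj with hj
        subst hi; subst hj; exact hc
      · exact absurd h (by simp)
      · exact absurd h (by simp)
      · injection hi with hi; injection hj with hj
        subst hi; subst hj; exact hc.symm
    · intro h
      exact ⟨by simpa using h.ne, Or.inl (Or.inr (Or.inr ⟨i, j, rfl, rfl, h⟩))⟩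
  have wadj1 : ∀ j : Fin 5, (wheelGraph 5).Adj none (some j) := by
    intro j
    exact ⟨by simp, Or.inl (Or.inl rfl)⟩
  have wadj1' : ∀ j : Fin 5, (wheelGraph 5).Adj (some j) none := fun j => (wadj1 j).symm
  have wadj0 : ¬ (wheelGraph 5).Adj none none := (wheelGraph 5).irrefl
  -- the equivalence
  let F : ↥S → Option (Fin 5) := fun x =>
    if h : (↑x : V) ∈ N then some (σ (e ⟨↑x, h⟩)) else none
  let Fi : Option (Fin 5) → ↥S := fun o =>
    match o with
    | none => ⟨v, Set.mem_insert _ _⟩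
    | some i => ⟨↑(e.symm (σ.symm i)), hmemS _⟩
  have hlinv : Function.LeftInverse Fi F := by
    intro x
    by_cases h : (↑x : V) ∈ N
    · simp only [F, dif_pos h, Fi]
      apply Subtype.ext
      simp [Equiv.symm_apply_apply]
    · simp only [F, dif_neg h, Fi]
      exact Subtype.ext (hv_of x h).symm
  have hrinv : Function.RightInverse Fi F := by
    intro o
    cases o with
    | none => simp only [Fi, F, dif_neg hvnotN]
    | some i =>
      have h : (↑(e.symm (σ.symm i)) : V) ∈ N := (e.symm (σ.symm i)).2
      simp only [Fi, F, dif_pos h]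
      have heq : (⟨↑(e.symm (σ.symm i)), h⟩ : ↥N) = e.symm (σ.symm i) := Subtype.ext rfl
      exact congrArg some (by rw [heq, Equiv.apply_symm_apply, Equiv.apply_symm_apply])
  refine ⟨⟨⟨F, Fi, hlinv, hrinv⟩, ?_⟩⟩
  intro x y
  show (wheelGraph 5).Adj (F x) (F y) ↔ G.Adj ↑x ↑y
  by_cases hx : (↑x : V) ∈ N <;> by_cases hy : (↑y : V) ∈ N
  · simp only [F, dif_pos hx, dif_pos hy]
    rw [wadj2, ← hAcyc]
    simp only [A, Equiv.symm_apply_apply]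
    exact decide_eq_true_iff
  · have hyv := hv_of y hy
    simp only [F, dif_pos hx, dif_neg hy]
    rw [hyv]
    constructor
    · intro _; exact ((G.mem_neighborFinset v _).1 hx).symm
    · intro _; exact wadj1' _
  · have hxv := hv_of x hx
    simp only [F, dif_neg hx, dif_pos hy]
    rw [hxv]
    constructor
    · intro _; exact (G.mem_neighborFinset v _).1 hy
    · intro _; exact wadj1 _
  · have hxv := hv_of x hx
    have hyv := hv_of y hy
    simp only [F, dif_neg hx, dif_neg hy]
    rw [hxv, hyv]
    simp [wadj0]
end
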